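/- arXiv:1104.0219 — 9 statements merged into one kernel-verified Lean document; each statement's English description precedes it below -/
import Mathlib

section
/- If X is a regular closed subset of ℝⁿ and X is connected, then every connected component of the regular closed complement −X = closure(ℝⁿ \ X) has a connected topological boundary. -/
open Complex Set MeasureTheory intervalIntegral
open scoped Manifold

variable {E : Type*} [NormedAddCommGroup E] [NormedSpace ℝ E]

/-- A C¹ nonvanishing function on a real normed space has a continuous logarithm. -/
lemma smooth_exists_log (h : E → ℂ) (hh : ContDiff ℝ 1 h) (h0 : ∀ x, h x ≠ 0) :
    ∃ ℓ : E → ℂ, Continuous ℓ ∧ ∀ x, Complex.exp (ℓ x) = h x := by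
  set q : E → ℝ → ℂ := fun x t => fderiv ℝ h (t • x) x / h (t • x) with hq
  have hcont : Continuous (Function.uncurry q) := by
    apply Continuous.div
    · exact ((hh.continuous_fderiv one_ne_zero).comp
        (continuous_snd.smul continuous_fst)).clm_apply continuous_fst
    · exact hh.continuous.comp (continuous_snd.smul continuous_fst)
    · intro p; exact h0 _
  set L : E → ℂ := fun x => ∫ t in (0:ℝ)..1, q x t with hL
  have hLcont : Continuous L :=
    continuous_parametric_intervalIntegral_of_continuous' (μ := volume) hcont 0 1
  refine ⟨fun x => L x + Complex.log (h 0), by fun_prop, fun x => ?_⟩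
  have hqx : Continuous (q x) := hcont.comp (Continuous.prodMk_right x)
  set F : ℝ → ℂ := fun t => ∫ s in (0:ℝ)..t, q x s with hF
  have hFd : ∀ t, HasDerivAt F (q x t) t := by
    intro t
    exact intervalIntegral.integral_hasDerivAt_right (hqx.intervalIntegrable 0 t)
      (hqx.stronglyMeasurableAtFilter _ _) hqx.continuousAt
  have hhd : ∀ t : ℝ, HasDerivAt (fun s : ℝ => h (s • x)) (fderiv ℝ h (t • x) x) t := by
    intro t
    have h1 : HasDerivAt (fun s : ℝ => s • x) ((1:ℝ) • x) t := (hasDerivAt_id t).smul_const x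
    rw [one_smul] at h1
    have h2 := (hh.differentiable one_ne_zero (t • x)).hasFDerivAt
    exact h2.comp_hasDerivAt t h1
  set ψ : ℝ → ℂ := fun t => Complex.exp (-F t) * h (t • x) with hψ
  have hψd : ∀ t, HasDerivAt ψ 0 t := by
    intro t
    have d1 : HasDerivAt (fun t => Complex.exp (-F t)) (-(q x t) * Complex.exp (-F t)) t := by
      simpa [mul_comm] using ((hFd t).neg).cexp
    have := d1.mul (hhd t)
    have e : -q x t * Complex.exp (-F t) * h (t • x)
        + Complex.exp (-F t) * fderiv ℝ h (t • x) x = 0 := by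
      rw [hq]; field_simp [h0 (t • x)]; ring
    rwa [e] at this
  have hconst : ψ 1 = ψ 0 := by
    have : ∀ t, deriv ψ t = 0 := fun t => (hψd t).deriv
    exact is_const_of_deriv_eq_zero (fun t => (hψd t).differentiableAt) this 1 0
  have hF0 : F 0 = 0 := by simp [hF]
  have hF1 : F 1 = L x := rfl
  have : Complex.exp (-L x) * h x = h 0 := by
    simpa [hψ, hF0, hF1] using hconst
  rw [Complex.exp_add, Complex.exp_log (h0 0), ← this]
  rw [← mul_assoc, ← Complex.exp_add]
  simp

/-- A continuous nonvanishing complex function on `ℝⁿ` has a continuous logarithm. -/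
lemma continuous_exists_log {n : ℕ} (f : (Fin n → ℝ) → ℂ) (hf : Continuous f)
    (h0 : ∀ x, f x ≠ 0) :
    ∃ ℓ : (Fin n → ℝ) → ℂ, Continuous ℓ ∧ ∀ x, Complex.exp (ℓ x) = f x := by
  -- smooth approximation h with ‖h x - f x‖ < ‖f x‖
  have hloc : ∀ x₀ : Fin n → ℝ, ∃ U ∈ nhds x₀, ∃ g : (Fin n → ℝ) → ℂ,
      ContMDiffOn (𝓘(ℝ, Fin n → ℝ)) (𝓘(ℝ, ℂ)) ((⊤ : ℕ∞) : WithTop ℕ∞) g U ∧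
      ∀ y ∈ U, g y ∈ Metric.ball (f y) ‖f y‖ := by
    intro x₀
    have hopen : IsOpen {y : Fin n → ℝ | dist (f x₀) (f y) < ‖f y‖} :=
      isOpen_lt (continuous_const.dist hf) hf.norm
    refine ⟨{y | dist (f x₀) (f y) < ‖f y‖},
      hopen.mem_nhds (by simpa using h0 x₀), fun _ => f x₀, contMDiffOn_const,
      fun y hy => Metric.mem_ball.2 hy⟩
  obtain ⟨g, hg⟩ := exists_contMDiffMap_forall_mem_convex_of_local (𝓘(ℝ, Fin n → ℝ))
      (t := fun x => Metric.ball (f x) ‖f x‖) (fun x => convex_ball _ _) hloc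
  set h : (Fin n → ℝ) → ℂ := ⇑g with hdef
  have hsm : ContDiff ℝ 1 h := by
    have := g.contMDiff
    rw [contMDiff_iff_contDiff] at this
    exact this.of_le (by exact_mod_cast le_top)
  have hball : ∀ x, dist (h x) (f x) < ‖f x‖ := fun x => Metric.mem_ball.1 (hg x)
  have hne : ∀ x, h x ≠ 0 := by
    intro x hx
    have := hball x
    rw [hx] at this
    simp [dist_eq_norm] at this
  obtain ⟨ℓh, hℓhc, hℓh⟩ := smooth_exists_log h hsm hne
  set u : (Fin n → ℝ) → ℂ := fun x => f x / h x with hu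
  have hure : ∀ x, 0 < (u x).re := by
    intro x
    have hd : Complex.normSq (h x - f x) < Complex.normSq (f x) := by
      have h2 : ‖h x - f x‖ < ‖f x‖ := by
        simpa [Complex.dist_eq] using hball x
      rw [Complex.normSq_eq_norm_sq, Complex.normSq_eq_norm_sq, sq, sq]
      exact mul_self_lt_mul_self (norm_nonneg _) h2
    have hb : 0 < Complex.normSq (h x) := Complex.normSq_pos.2 (hne x)
    rw [hu, Complex.div_re]
    simp only [Complex.normSq_apply, Complex.sub_re, Complex.sub_im] at hd hb ⊢
    rw [← add_div]
    apply div_pos _ hb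
    nlinarith [hd, hb]
  have hucont : Continuous u := hf.div hsm.continuous hne
  have hlogu : Continuous fun x => Complex.log (u x) := by
    rw [continuous_iff_continuousAt]
    intro x
    exact (continuousAt_clog (Complex.mem_slitPlane_iff.2 (Or.inl (hure x)))).comp
      hucont.continuousAt
  refine ⟨fun x => ℓh x + Complex.log (u x), hℓhc.add hlogu, fun x => ?_⟩
  have hune : u x ≠ 0 := fun hx => by simpa [hx] using hure x
  rw [Complex.exp_add, hℓh, Complex.exp_log hune, hu]
  rw [mul_comm, div_mul_cancel₀ _ (hne x)]

lemma im_lift_const {α : Type*} [TopologicalSpace α] {s : Set α} (hs : IsPreconnected s)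
    (ω : α → ℝ) (hω : ContinuousOn ω s) (h1 : ∀ x ∈ s, Complex.exp (ω x * Complex.I) = 1) :
    ∀ a ∈ s, ∀ b ∈ s, ω a = ω b := by
  have key : ∀ a ∈ s, ∀ b ∈ s, ω a < ω b → False := by
    intro a ha b hb hab
    have hdiff : Complex.exp ((↑(ω b) - ↑(ω a)) * Complex.I) = 1 := by
      rw [sub_mul, Complex.exp_sub, h1 a ha, h1 b hb, div_one]
    obtain ⟨k, hk⟩ := Complex.exp_eq_one_iff.1 hdiff
    have hkim : ω b - ω a = k * (2 * Real.pi) := by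
      have := congrArg Complex.im hk
      simpa using this
    have hk1 : (1 : ℤ) ≤ k := by
      by_contra hk1
      push_neg at hk1
      have : (k : ℝ) ≤ 0 := by exact_mod_cast Int.lt_add_one_iff.1 hk1
      nlinarith [Real.pi_pos, hkim]
    have hmid : ω a + Real.pi ∈ Set.Icc (ω a) (ω b) := by
      constructor
      · linarith [Real.pi_pos]
      · have : (1 : ℝ) ≤ (k : ℝ) := by exact_mod_cast hk1
        nlinarith [Real.pi_pos]
    obtain ⟨c, hc, hωc⟩ := hs.intermediate_value ha hb hω hmid
    have := h1 c hc
    rw [hωc] at this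
    rw [Complex.ofReal_add, add_mul, Complex.exp_add, h1 a ha, one_mul,
      Complex.exp_pi_mul_I] at this
    norm_num at this
  intro a ha b hb
  rcases lt_trichotomy (ω a) (ω b) with h | h | h
  · exact absurd h (fun h => key a ha b hb h)
  · exact h
  · exact absurd h (fun h => key b hb a ha h)

/-- Unicoherence of `ℝⁿ`: the intersection of two closed preconnected sets covering the
space is preconnected. -/
lemma unicoherent {n : ℕ} {H K : Set (Fin n → ℝ)} (hHc : IsClosed H) (hKc : IsClosed K)
    (hH : IsPreconnected H) (hK : IsPreconnected K) (hUnion : H ∪ K = Set.univ) :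
    IsPreconnected (H ∩ K) := by
  classical
  by_contra hncon
  -- separate H ∩ K into two disjoint nonempty closed sets S₁, S₂
  rw [IsPreconnected] at hncon
  push_neg at hncon
  obtain ⟨u, v, hu, hv, hsub, ⟨p, hp⟩, ⟨q, hq⟩, hempty⟩ := hncon
  have hemp : H ∩ K ∩ (u ∩ v) = ∅ := hempty
  set S₁ : Set (Fin n → ℝ) := (H ∩ K) \ v with hS₁
  set S₂ : Set (Fin n → ℝ) := (H ∩ K) \ u with hS₂
  have hS₁c : IsClosed S₁ := (hHc.inter hKc).sdiff hv
  have hS₂c : IsClosed S₂ := (hHc.inter hKc).sdiff hu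
  have hS₁ne : S₁.Nonempty := ⟨p, hp.1, fun hpv => by
    have : p ∈ H ∩ K ∩ (u ∩ v) := ⟨hp.1, hp.2, hpv⟩
    simp [hemp] at this⟩
  have hS₂ne : S₂.Nonempty := ⟨q, hq.1, fun hqu => by
    have : q ∈ H ∩ K ∩ (u ∩ v) := ⟨hq.1, hqu, hq.2⟩
    simp [hemp] at this⟩
  have hdisj : Disjoint S₁ S₂ := by
    rw [Set.disjoint_left]
    rintro x ⟨hx, hxv⟩ ⟨_, hxu⟩
    rcases hsub hx with h | h
    exacts [hxu h, hxv h]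
  have hSunion : S₁ ∪ S₂ = H ∩ K := by
    apply Set.Subset.antisymm
    · rintro x (⟨hx, _⟩ | ⟨hx, _⟩) <;> exact hx
    · intro x hx
      by_cases hxv : x ∈ v
      · exact Or.inr ⟨hx, fun hxu => by
          have : x ∈ H ∩ K ∩ (u ∩ v) := ⟨hx, hxu, hxv⟩
          simp [hemp] at this⟩
      · exact Or.inl ⟨hx, hxv⟩
  -- Urysohn function
  obtain ⟨φ, hφ0, hφ1, hφ01⟩ := exists_continuous_zero_one_of_isClosed hS₁c hS₂c hdisj
  -- glued circle-valued map
  set g : (Fin n → ℝ) → ℂ := fun x =>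
    if x ∈ H then Complex.exp (Real.pi * φ x * Complex.I)
    else Complex.exp (-(Real.pi * φ x) * Complex.I) with hg
  have hagree : ∀ x ∈ H ∩ K, Complex.exp ((Real.pi : ℂ) * φ x * Complex.I)
      = Complex.exp (-((Real.pi : ℂ) * φ x) * Complex.I) := by
    intro x hx
    rcases (hSunion ▸ hx : x ∈ S₁ ∪ S₂) with h | h
    · have h0 : φ x = 0 := hφ0 h
      rw [h0]; norm_num
    · have h1 : φ x = 1 := hφ1 h
      rw [h1]
      push_cast
      rw [mul_one, neg_mul, Complex.exp_neg, Complex.exp_pi_mul_I]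
      norm_num
  have hgc : Continuous g := by
    apply Continuous.if
    · intro a haf
      have haH : a ∈ H := hHc.frontier_subset haf
      have haK : a ∈ K := by
        have haf' : a ∈ frontier H := haf
        rw [frontier_eq_closure_inter_closure] at haf'
        have : a ∈ closure Hᶜ := haf'.2
        have hsubK : Hᶜ ⊆ K := by
          intro z hz
          rcases (hUnion ▸ Set.mem_univ z : z ∈ H ∪ K) with h | h
          · exact absurd h hz
          · exact h
        exact hKc.closure_subset_iff.2 hsubK this
      exact by push_cast; exact hagree a ⟨haH, haK⟩
    · fun_prop
    · fun_prop
  have hgne : ∀ x, g x ≠ 0 := by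
    intro x
    simp only [hg]
    split <;> exact Complex.exp_ne_zero _
  obtain ⟨ℓ, hℓc, hℓ⟩ := continuous_exists_log g hgc hgne
  -- the two winding functions
  set ωH : (Fin n → ℝ) → ℝ := fun x => (ℓ x).im - Real.pi * φ x with hωH
  set ωK : (Fin n → ℝ) → ℝ := fun x => (ℓ x).im + Real.pi * φ x with hωK
  have hgH : ∀ x ∈ H, g x = Complex.exp ((Real.pi : ℂ) * φ x * Complex.I) := by
    intro x hx; rw [hg]; simp [hx]
  have hgK : ∀ x ∈ K, g x = Complex.exp (-((Real.pi : ℂ) * φ x) * Complex.I) := by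
    intro x hx
    simp only [hg]
    split
    · next hxH => exact hagree x ⟨hxH, hx⟩
    · rfl
  -- exp(ℓ x) = exp(θ·I) trick : real part of ℓ is 0 since |g| = 1... instead work with w
  have hexpim : ∀ x, ∀ c : ℝ, Complex.exp (ℓ x - (c : ℂ) * Complex.I) = 1 →
      Complex.exp ((((ℓ x).im - c : ℝ) : ℂ) * Complex.I) = 1 := by
    intro x c hxc
    obtain ⟨m, hm⟩ := Complex.exp_eq_one_iff.1 hxc
    have him : (ℓ x).im - c = m * (2 * Real.pi) := by
      have := congrArg Complex.im hm
      simpa using this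
    rw [him]
    push_cast
    rw [mul_comm (2 : ℂ) (Real.pi : ℂ), ← mul_assoc]
    have : ((m : ℂ) * Real.pi * 2) * Complex.I = (m : ℂ) * (2 * Real.pi * Complex.I) := by ring
    rw [this]
    exact Complex.exp_int_mul_two_pi_mul_I m
  have hH1 : ∀ x ∈ H, Complex.exp ((ωH x : ℂ) * Complex.I) = 1 := by
    intro x hx
    apply hexpim x (Real.pi * φ x)
    rw [Complex.exp_sub, hℓ, hgH x hx]
    push_cast
    rw [div_self (Complex.exp_ne_zero _)]
  have hK1 : ∀ x ∈ K, Complex.exp ((ωK x : ℂ) * Complex.I) = 1 := by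
    intro x hx
    have : Complex.exp (ℓ x - (-(Real.pi * φ x) : ℝ) * Complex.I) = 1 := by
      rw [Complex.exp_sub, hℓ, hgK x hx]
      push_cast
      rw [div_self (Complex.exp_ne_zero _)]
    have h2 := hexpim x (-(Real.pi * φ x)) (by push_cast at this ⊢; exact this)
    simpa [hωK, sub_neg_eq_add] using h2
  -- constancy
  obtain ⟨x₁, hx₁⟩ := hS₁ne
  obtain ⟨x₂, hx₂⟩ := hS₂ne
  have hx₁HK : x₁ ∈ H ∩ K := hx₁.1
  have hx₂HK : x₂ ∈ H ∩ K := hx₂.1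
  have hωHcont : ContinuousOn ωH H := ((Complex.continuous_im.comp hℓc).sub
    (continuous_const.mul φ.continuous)).continuousOn
  have hωKcont : ContinuousOn ωK K := ((Complex.continuous_im.comp hℓc).add
    (continuous_const.mul φ.continuous)).continuousOn
  have hHconst := im_lift_const hH ωH hωHcont hH1 x₁ hx₁HK.1 x₂ hx₂HK.1
  have hKconst := im_lift_const hK ωK hωKcont hK1 x₁ hx₁HK.2 x₂ hx₂HK.2
  have hφx₁ : φ x₁ = 0 := hφ0 hx₁
  have hφx₂ : φ x₂ = 1 := hφ1 hx₂
  rw [hωH] at hHconst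
  rw [hωK] at hKconst
  simp only [hφx₁, hφx₂] at hHconst hKconst
  have hpi : Real.pi = 0 := by linarith
  exact absurd hpi (ne_of_gt Real.pi_pos)

/-- If `X` is a regular closed subset of `ℝⁿ` and `X` is connected, then every connected
component of the regular closed complement `−X = closure (Xᶜ)` has a connected boundary. -/
theorem regularClosed_component_frontier_connected
    (n : ℕ) (X : Set (Fin n → ℝ))
    (hreg : X = closure (interior X))
    (hconn : IsConnected X) :
    ∀ y ∈ closure Xᶜ,
      IsConnected (frontier (connectedComponentIn (closure Xᶜ) y)) := by
  intro y hy
  have hXclosed : IsClosed X := hreg ▸ isClosed_closure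
  have hXne : X.Nonempty := hconn.nonempty
  set A : Set (Fin n → ℝ) := closure Xᶜ with hA
  have hAeq : A = (interior X)ᶜ := closure_compl
  have hAclosed : IsClosed A := isClosed_closure
  have hXcA : Xᶜ ⊆ A := subset_closure
  -- A ≠ univ consequences
  have hAne_univ : A ≠ Set.univ := by
    intro h
    have : interior X = ∅ := by
      rw [hAeq] at h
      simpa using congrArg compl h
    rw [this, closure_empty] at hreg
    exact (Set.nonempty_iff_ne_empty.1 hXne) hreg
  -- components of the closed set A are closed
  have hcompclosed : ∀ z ∈ A, IsClosed (connectedComponentIn A z) := by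
    intro z hz
    apply isClosed_of_closure_subset
    exact (isPreconnected_connectedComponentIn).closure.subset_connectedComponentIn
      (subset_closure (mem_connectedComponentIn hz))
      (hAclosed.closure_subset_iff.2 (connectedComponentIn_subset _ _))
  -- components of A not meeting X are impossible
  have hcompX : ∀ z ∈ A, (connectedComponentIn A z ∩ X).Nonempty := by
    intro z hz
    by_contra hne
    rw [Set.not_nonempty_iff_eq_empty] at hne
    have hsubXc : connectedComponentIn A z ⊆ Xᶜ := by
      intro w hw
      intro hwX
      exact absurd (Set.mem_inter hw hwX) (by simp [hne])
    have hzXc : z ∈ Xᶜ := hsubXc (mem_connectedComponentIn hz)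
    have hVsub : connectedComponentIn Xᶜ z ⊆ connectedComponentIn A z :=
      (isPreconnected_connectedComponentIn).subset_connectedComponentIn
        (mem_connectedComponentIn hzXc) ((connectedComponentIn_subset _ _).trans hXcA)
    have hsubV : connectedComponentIn A z ⊆ connectedComponentIn Xᶜ z :=
      (isPreconnected_connectedComponentIn).subset_connectedComponentIn
        (mem_connectedComponentIn hz) hsubXc
    have hopen : IsOpen (connectedComponentIn A z) := by
      rw [Set.Subset.antisymm hsubV hVsub]
      exact hXclosed.isOpen_compl.connectedComponentIn
    have hclopen : IsClopen (connectedComponentIn A z) := ⟨hcompclosed z hz, hopen⟩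
    rcases isClopen_iff.1 hclopen with h | h
    · exact absurd h (Set.nonempty_iff_ne_empty.1 ⟨z, mem_connectedComponentIn hz⟩)
    · exact hAne_univ (Set.eq_univ_of_univ_subset (h ▸ connectedComponentIn_subset A z))
  set C : Set (Fin n → ℝ) := connectedComponentIn A y with hC
  have hyC : y ∈ C := mem_connectedComponentIn hy
  have hCsub : C ⊆ A := connectedComponentIn_subset _ _
  have hCpre : IsPreconnected C := isPreconnected_connectedComponentIn
  have hCclosed : IsClosed C := hcompclosed y hy
  -- points of C outside X are interior
  have hint : ∀ z ∈ C, z ∉ X → z ∈ interior C := by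
    intro z hz hzX
    have hzXc : z ∈ Xᶜ := hzX
    have hVC : connectedComponentIn Xᶜ z ⊆ C := by
      rw [hC, connectedComponentIn_eq hz]
      exact (isPreconnected_connectedComponentIn).subset_connectedComponentIn
        (mem_connectedComponentIn hzXc) ((connectedComponentIn_subset _ _).trans hXcA)
    exact interior_maximal hVC (hXclosed.isOpen_compl.connectedComponentIn)
      (mem_connectedComponentIn hzXc)
  -- X does not meet the interior of C
  have hXint : X ∩ interior C = ∅ := by
    have hdisj : Disjoint (interior C) (interior X) := by
      rw [Set.disjoint_left]
      intro w hw hwX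
      have : w ∈ A := hCsub (interior_subset hw)
      rw [hAeq] at this
      exact this hwX
    have := (hdisj.closure_right isOpen_interior)
    rw [← hreg] at this
    rw [Set.disjoint_right] at this
    ext w
    simp only [Set.mem_inter_iff, Set.mem_empty_iff_false, iff_false]
    rintro ⟨hwX, hwint⟩
    exact this hwX hwint
  -- frontier C = X ∩ C
  have hfront : frontier C = X ∩ C := by
    rw [hCclosed.frontier_eq]
    ext w
    constructor
    · rintro ⟨hwC, hwint⟩
      refine ⟨?_, hwC⟩
      by_contra hwX
      exact hwint (hint w hwC hwX)
    · rintro ⟨hwX, hwC⟩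
      refine ⟨hwC, fun hwint => ?_⟩
      have : w ∈ X ∩ interior C := ⟨hwX, hwint⟩
      rw [hXint] at this
      exact this
  -- frontier C is nonempty
  have hfrontne : (frontier C).Nonempty := by
    rw [Set.nonempty_iff_ne_empty]
    intro hfe
    have hclopen : IsClopen C := isClopen_iff_frontier_eq_empty.2 hfe
    rcases isClopen_iff.1 hclopen with h | h
    · exact absurd h (Set.nonempty_iff_ne_empty.1 ⟨y, hyC⟩)
    · exact hAne_univ (Set.eq_univ_of_univ_subset (h ▸ hCsub))
  -- the two closed connected sets
  set H : Set (Fin n → ℝ) := (interior C)ᶜ with hHdef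
  have hHclosed : IsClosed H := isOpen_interior.isClosed_compl
  obtain ⟨x₀, hx₀⟩ := hXne
  set 𝒞 : Set (Set (Fin n → ℝ)) :=
    insert X {s | ∃ z ∈ A \ C, s = X ∪ connectedComponentIn A z} with h𝒞
  have hHeq : H = ⋃₀ 𝒞 := by
    apply Set.Subset.antisymm
    · intro w hw
      by_cases hwX : w ∈ X
      · exact ⟨X, Set.mem_insert _ _, hwX⟩
      · have hwA : w ∈ A := hXcA hwX
        have hwC : w ∉ C := fun hwC => hw (hint w hwC hwX)
        exact ⟨X ∪ connectedComponentIn A w,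
          Set.mem_insert_iff.2 (Or.inr ⟨w, ⟨hwA, hwC⟩, rfl⟩),
          Or.inr (mem_connectedComponentIn hwA)⟩
    · have hXH : X ⊆ H := by
        intro w hwX hwint
        have : w ∈ X ∩ interior C := ⟨hwX, hwint⟩
        rw [hXint] at this; exact this
      have hcompH : ∀ z ∈ A \ C, connectedComponentIn A z ⊆ H := by
        intro z hz w hwcomp hwint
        have hwC : w ∈ C := interior_subset hwint
        have : connectedComponentIn A z = C := by
          rw [hC, connectedComponentIn_eq hwcomp, connectedComponentIn_eq hwC]
        exact hz.2 (this ▸ mem_connectedComponentIn hz.1)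
      rintro w ⟨s, hs, hws⟩
      rcases Set.mem_insert_iff.1 hs with h | ⟨z, hz, h⟩
      · exact hXH (h ▸ hws)
      · rcases h ▸ hws with hwX | hwcomp
        · exact hXH hwX
        · exact hcompH z hz hwcomp
  have hHpre : IsPreconnected H := by
    rw [hHeq]
    apply isPreconnected_sUnion x₀ 𝒞
    · rintro s (h | ⟨z, hz, h⟩)
      · exact h ▸ hx₀
      · exact h ▸ Or.inl hx₀
    · rintro s (h | ⟨z, hz, h⟩)
      · exact h ▸ hconn.isPreconnected
      · obtain ⟨w, hwcomp, hwX⟩ := hcompX z hz.1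
        exact h ▸ IsPreconnected.union w hwX hwcomp hconn.isPreconnected
          isPreconnected_connectedComponentIn
  have hHK : H ∪ C = Set.univ := by
    ext w
    simp only [Set.mem_union, Set.mem_univ, iff_true]
    by_cases hwC : w ∈ C
    · exact Or.inr hwC
    · exact Or.inl (fun hwint => hwC (interior_subset hwint))
  have hHinterC : H ∩ C = frontier C := by
    rw [hCclosed.frontier_eq]
    ext w
    constructor
    · rintro ⟨hwH, hwC⟩; exact ⟨hwC, hwH⟩
    · rintro ⟨hwC, hwint⟩; exact ⟨hwint, hwC⟩
  have := unicoherent hHclosed hCclosed hHpre hCpre hHK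
  rw [hHinterC] at this
  exact ⟨hfrontne, this⟩
end

section
/- If X is a connected subset of ℝⁿ, then every connected component of ℝⁿ \ X has a connected boundary. -/
open Set Metric Complex

/-- A continuous function on a preconnected set taking values in `2πℤ` is constant there. -/
lemma newman_constOn {α : Type*} [TopologicalSpace α] {S : Set α} (hS : IsPreconnected S)
    {g : α → ℝ} (hg : ContinuousOn g S)
    (hint : ∀ x ∈ S, ∃ m : ℤ, g x = m * (2 * Real.pi)) :
    ∀ x ∈ S, ∀ y ∈ S, g x = g y := by
  have key : ∀ x ∈ S, ∀ y ∈ S, g x < g y → False := by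
    intro x hx y hy hlt
    obtain ⟨m₁, hm₁⟩ := hint x hx
    obtain ⟨m₂, hm₂⟩ := hint y hy
    have hm : (m₁ : ℝ) < m₂ := by
      have h2π : (0:ℝ) < 2 * Real.pi := by positivity
      rw [hm₁, hm₂] at hlt
      exact lt_of_mul_lt_mul_right hlt h2π.le
    have hmint : m₁ + 1 ≤ m₂ := by exact_mod_cast hm
    have himg : IsPreconnected (g '' S) := hS.image g hg
    have ht : (m₁ : ℝ) * (2 * Real.pi) + Real.pi ∈ Icc (g x) (g y) := by
      constructor
      · rw [hm₁]; linarith [Real.pi_pos]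
      · rw [hm₂]
        have : ((m₁ : ℝ) + 1) * (2 * Real.pi) ≤ (m₂ : ℝ) * (2 * Real.pi) := by
          have : ((m₁ : ℝ) + 1) ≤ m₂ := by exact_mod_cast hmint
          nlinarith [Real.pi_pos]
        nlinarith [Real.pi_pos]
    have := himg.Icc_subset ⟨x, hx, rfl⟩ ⟨y, hy, rfl⟩ ht
    obtain ⟨z, hz, hzt⟩ := this
    obtain ⟨m₃, hm₃⟩ := hint z hz
    rw [hm₃] at hzt
    have : ((2 * (m₃ - m₁) - 1 : ℤ) : ℝ) * Real.pi = 0 := by push_cast; ring_nf; linarith [hzt]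
    have h0 : ((2 * (m₃ - m₁) - 1 : ℤ) : ℝ) = 0 := by
      rcases mul_eq_zero.1 this with h | h
      · exact h
      · exact absurd h Real.pi_ne_zero
    have : (2 * (m₃ - m₁) - 1 : ℤ) = 0 := by exact_mod_cast h0
    omega
  intro x hx y hy
  rcases lt_trichotomy (g x) (g y) with h | h | h
  · exact absurd h (fun h => key x hx y hy h)
  · exact h
  · exact absurd h (fun h => key y hy x hx h)

/-- Two continuous lifts of the same map to the circle agree on a preconnected set
if they agree at one point. -/
lemma newman_lift_unique {α : Type*} [TopologicalSpace α] {S : Set α} (hS : IsPreconnected S)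
    {θ₁ θ₂ : α → ℝ} (h₁ : ContinuousOn θ₁ S) (h₂ : ContinuousOn θ₂ S)
    (hexp : ∀ x ∈ S, Circle.exp (θ₁ x) = Circle.exp (θ₂ x))
    {x₀ : α} (hx₀ : x₀ ∈ S) (h0 : θ₁ x₀ = θ₂ x₀) :
    ∀ x ∈ S, θ₁ x = θ₂ x := by
  have hint : ∀ x ∈ S, ∃ m : ℤ, θ₁ x - θ₂ x = m * (2 * Real.pi) := by
    intro x hx
    obtain ⟨m, hm⟩ := Circle.exp_eq_exp.1 (hexp x hx)
    exact ⟨m, by linarith⟩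
  have hconst := newman_constOn hS (h₁.sub h₂) hint
  intro x hx
  have := hconst x hx x₀ hx₀
  have h0' : θ₁ x₀ - θ₂ x₀ = 0 := by rw [h0]; ring
  have : θ₁ x - θ₂ x = 0 := by simp only [Pi.sub_apply] at this; rw [this, h0']
  linarith

variable {E : Type*} [NormedAddCommGroup E] [NormedSpace ℝ E]

/-- Discrete approximate lift of a map to the circle. -/
noncomputable def newmanTheta (f : E → Circle) (m : ℕ) (x : E) : ℝ :=
  Complex.arg (f 0) + ∑ k ∈ Finset.range m,
    Complex.arg ((f ((((k : ℝ) + 1) / (m : ℝ)) • x) / f (((k : ℝ) / (m : ℝ)) • x) : Circle) : ℂ)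

lemma newmanTheta_exp (f : E → Circle) {m : ℕ} (hm : 1 ≤ m) (x : E) :
    Circle.exp (newmanTheta f m x) = f x := by
  have hsum : ∀ (p : ℕ) (a : ℕ → ℝ), Circle.exp (∑ k ∈ Finset.range p, a k)
      = ∏ k ∈ Finset.range p, Circle.exp (a k) := by
    intro p a
    induction p with
    | zero => simp
    | succ q ih => rw [Finset.sum_range_succ, Finset.prod_range_succ, Circle.exp_add, ih]
  rw [newmanTheta, Circle.exp_add, hsum]
  set g : ℕ → Circle := fun k => f (((k : ℝ) / (m : ℝ)) • x) with hg
  have hprod : (∏ k ∈ Finset.range m, Circle.exp (Complex.arg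
      ((f ((((k : ℝ) + 1) / (m : ℝ)) • x) / f (((k : ℝ) / (m : ℝ)) • x) : Circle) : ℂ)))
      = g m / g 0 := by
    rw [← Finset.prod_range_div g m]
    apply Finset.prod_congr rfl
    intro k _
    have e1 : g (k + 1) / g k
        = f ((((k : ℝ) + 1) / (m : ℝ)) • x) / f (((k : ℝ) / (m : ℝ)) • x) := by
      simp only [hg, Nat.cast_add, Nat.cast_one]
    rw [e1]
    exact Circle.exp_arg _
  rw [hprod]
  have hg0 : g 0 = f 0 := by simp [hg]
  have hgm : g m = f x := by
    have hm0 : (m : ℝ) ≠ 0 := by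
      have : 0 < m := hm
      positivity
    simp [hg, div_self hm0]
  rw [hg0, hgm, Circle.exp_arg]
  apply Circle.ext
  rw [Circle.coe_mul, Circle.coe_div]
  field_simp

lemma newman_good [ProperSpace E] (f : E → Circle) (hf : Continuous f) (R : ℝ) (hR : 0 ≤ R) :
    ∃ m : ℕ, 1 ≤ m ∧ ∀ x ∈ closedBall (0 : E) R, ∀ k, k < m →
      ((f ((((k : ℝ) + 1) / (m : ℝ)) • x) / f (((k : ℝ) / (m : ℝ)) • x) : Circle) : ℂ) ≠ -1 := by
  have huc := (isCompact_closedBall (0 : E) R).uniformContinuousOn_of_continuous hf.continuousOn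
  replace huc := Metric.uniformContinuousOn_iff.1 huc
  obtain ⟨δ, hδ, H⟩ := huc 1 one_pos
  refine ⟨⌈R / δ⌉₊ + 1, Nat.le_add_left 1 _, ?_⟩
  set m := ⌈R / δ⌉₊ + 1 with hmdef
  intro x hx k hk
  have hxR : ‖x‖ ≤ R := by rwa [mem_closedBall, dist_zero_right] at hx
  have hmpos : (0 : ℝ) < m := by positivity
  have hc1 : (0 : ℝ) ≤ (k : ℝ) / m ∧ (k : ℝ) / m ≤ 1 := by
    constructor
    · positivity
    · rw [div_le_one hmpos]; exact_mod_cast hk.le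
  have hc2 : (0 : ℝ) ≤ ((k : ℝ) + 1) / m ∧ ((k : ℝ) + 1) / m ≤ 1 := by
    constructor
    · positivity
    · rw [div_le_one hmpos]; exact_mod_cast Nat.succ_le_of_lt hk
  have hmem : ∀ c : ℝ, 0 ≤ c → c ≤ 1 → c • x ∈ closedBall (0 : E) R := by
    intro c h0 h1
    rw [mem_closedBall, dist_zero_right, norm_smul]
    calc ‖c‖ * ‖x‖ ≤ 1 * ‖x‖ := by
          apply mul_le_mul_of_nonneg_right _ (norm_nonneg x)
          rwa [Real.norm_eq_abs, _root_.abs_of_nonneg h0]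
      _ = ‖x‖ := one_mul _
      _ ≤ R := hxR
  have hp := hmem _ hc1.1 hc1.2
  have hq := hmem _ hc2.1 hc2.2
  have hdist : dist ((((k : ℝ) + 1) / m) • x) (((k : ℝ) / m) • x) < δ := by
    rw [dist_eq_norm, ← sub_smul]
    have hsub : ((k : ℝ) + 1) / m - (k : ℝ) / m = 1 / m := by
      rw [div_sub_div_same]; ring_nf
    rw [hsub, norm_smul, Real.norm_eq_abs, _root_.abs_of_nonneg (by positivity)]
    have hRm : R / m < δ := by
      rw [div_lt_iff₀ hmpos]
      have h1 : R / δ ≤ (⌈R / δ⌉₊ : ℝ) := Nat.le_ceil _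
      have h2 : (⌈R / δ⌉₊ : ℝ) < m := by
        rw [hmdef]; push_cast; linarith
      calc R = (R / δ) * δ := by field_simp
        _ ≤ (⌈R / δ⌉₊ : ℝ) * δ := by nlinarith
        _ < δ * m := by nlinarith
    calc (1 / (m : ℝ)) * ‖x‖ = ‖x‖ / m := by ring
      _ ≤ R / m := by gcongr
      _ < δ := hRm
  have hd := H _ hq _ hp hdist
  intro heq
  have hfq : (f ((((k : ℝ) + 1) / m) • x) : ℂ) = -(f (((k : ℝ) / m) • x) : ℂ) := by
    have h := heq
    rw [Circle.coe_div] at h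
    field_simp at h
    linear_combination h
  erw [Subtype.dist_eq] at hd
  rw [Complex.dist_eq, hfq] at hd
  have : -(f (((k : ℝ) / m) • x) : ℂ) - (f (((k : ℝ) / m) • x) : ℂ)
      = (-2) * (f (((k : ℝ) / m) • x) : ℂ) := by ring
  rw [this, norm_mul] at hd
  simp [Circle.norm_coe] at hd



lemma newman_slitPlane {z : Circle} (hz : (z : ℂ) ≠ -1) : (z : ℂ) ∈ Complex.slitPlane := by
  rw [Complex.mem_slitPlane_iff]
  by_contra h
  push_neg at h
  obtain ⟨h1, h2⟩ := h
  have hnsq : Complex.normSq z = 1 := Circle.normSq_coe z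
  rw [Complex.normSq_apply, h2] at hnsq
  have : (z : ℂ).re = -1 := by nlinarith
  apply hz
  apply Complex.ext
  · simpa using this
  · simpa using h2

lemma newmanTheta_contAt (f : E → Circle) (hf : Continuous f) {m : ℕ} {x : E}
    (hx : ∀ k, k < m →
      ((f ((((k : ℝ) + 1) / (m : ℝ)) • x) / f (((k : ℝ) / (m : ℝ)) • x) : Circle) : ℂ) ≠ -1) :
    ContinuousAt (newmanTheta f m) x := by
  apply ContinuousAt.add continuousAt_const
  apply tendsto_finset_sum
  intro k hk
  have hk' := hx k (Finset.mem_range.1 hk)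
  have hcont : ContinuousAt (fun y : E =>
      ((f ((((k : ℝ) + 1) / (m : ℝ)) • y) / f (((k : ℝ) / (m : ℝ)) • y) : Circle) : ℂ)) x := by
    apply Continuous.continuousAt
    exact continuous_subtype_val.comp
      ((hf.comp (continuous_const_smul _)).div' (hf.comp (continuous_const_smul _)))
  exact (Complex.continuousAt_arg (newman_slitPlane hk')).tendsto.comp hcont

lemma newman_exists_lift [ProperSpace E] (f : E → Circle) (hf : Continuous f) :
    ∃ θ : E → ℝ, Continuous θ ∧ ∀ x, Circle.exp (θ x) = f x := by
  have hgood : ∀ R : ℕ, ∃ m : ℕ, 1 ≤ m ∧ ∀ x ∈ closedBall (0 : E) (R : ℝ), ∀ k, k < m →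
      ((f ((((k : ℝ) + 1) / (m : ℝ)) • x) / f (((k : ℝ) / (m : ℝ)) • x) : Circle) : ℂ) ≠ -1 :=
    fun R => newman_good f hf R (by positivity)
  choose mf hm1 hmgood using hgood
  have hcont : ∀ R : ℕ, ∀ x ∈ ball (0 : E) (R : ℝ), ContinuousAt (newmanTheta f (mf R)) x := by
    intro R x hx
    exact newmanTheta_contAt f hf fun k hk => hmgood R x (ball_subset_closedBall hx) k hk
  have h0 : ∀ m : ℕ, newmanTheta f m 0 = Complex.arg (f 0) := by
    intro m
    rw [newmanTheta]
    have hz : ∀ k ∈ Finset.range m, Complex.arg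
        ((f ((((k : ℝ) + 1) / (m : ℝ)) • (0:E)) / f (((k : ℝ) / (m : ℝ)) • (0:E)) : Circle) : ℂ)
        = 0 := by
      intro k _
      simp [smul_zero]
    rw [Finset.sum_congr rfl hz]
    simp
  have hagree : ∀ r R : ℕ, r ≤ R → ∀ y ∈ ball (0 : E) (r : ℝ),
      newmanTheta f (mf r) y = newmanTheta f (mf R) y := by
    intro r R hrR y hy
    rcases Nat.eq_zero_or_pos r with h | h
    · subst h; simp [mem_ball] at hy
    have hball : IsPreconnected (ball (0 : E) (r : ℝ)) := (convex_ball _ _).isPreconnected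
    have h0mem : (0 : E) ∈ ball (0 : E) (r : ℝ) := mem_ball_self (by exact_mod_cast h)
    refine newman_lift_unique hball
      (fun x hx => (hcont r x hx).continuousWithinAt)
      (fun x hx => (hcont R x (ball_subset_ball (by exact_mod_cast hrR) hx)).continuousWithinAt)
      (fun x _ => by rw [newmanTheta_exp f (hm1 r), newmanTheta_exp f (hm1 R)])
      h0mem (by rw [h0, h0]) y hy
  refine ⟨fun x => newmanTheta f (mf (⌊‖x‖⌋₊ + 1)) x, ?_, fun x => newmanTheta_exp f (hm1 _) x⟩
  rw [continuous_iff_continuousAt]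
  intro x
  have hxball : x ∈ ball (0 : E) ((⌊‖x‖⌋₊ + 1 : ℕ) : ℝ) := by
    rw [mem_ball, dist_zero_right]
    push_cast
    exact Nat.lt_floor_add_one _
  have hxR : x ∈ ball (0 : E) ((⌊‖x‖⌋₊ + 2 : ℕ) : ℝ) := by
    rw [mem_ball, dist_zero_right]
    push_cast
    have := Nat.lt_floor_add_one ‖x‖
    linarith
  have heq : (fun y => newmanTheta f (mf (⌊‖y‖⌋₊ + 1)) y)
      =ᶠ[nhds x] newmanTheta f (mf (⌊‖x‖⌋₊ + 2)) := by
    filter_upwards [isOpen_ball.mem_nhds hxball] with y hy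
    have hylt : ‖y‖ < ((⌊‖x‖⌋₊ + 1 : ℕ) : ℝ) := by rwa [mem_ball, dist_zero_right] at hy
    have h1 : ⌊‖y‖⌋₊ < ⌊‖x‖⌋₊ + 1 := (Nat.floor_lt (norm_nonneg y)).2 hylt
    have h2 : ⌊‖y‖⌋₊ + 1 ≤ ⌊‖x‖⌋₊ + 2 := by omega
    have hy' : y ∈ ball (0 : E) ((⌊‖y‖⌋₊ + 1 : ℕ) : ℝ) := by
      rw [mem_ball, dist_zero_right]
      push_cast
      exact Nat.lt_floor_add_one _
    exact hagree _ _ h2 y hy'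
  exact (hcont _ x hxR).congr heq.symm

open Real in
lemma newman_unicoherent [ProperSpace E] {M N A B : Set E}
    (hM : IsClosed M) (hN : IsClosed N) (hMc : IsPreconnected M) (hNc : IsPreconnected N)
    (hMN : M ∪ N = univ) (hA : IsClosed A) (hB : IsClosed B)
    (hAne : A.Nonempty) (hBne : B.Nonempty) (hABdisj : Disjoint A B)
    (hABeq : A ∪ B = M ∩ N) : False := by
  classical
  set dA : E → ℝ := fun x => infDist x A with hdA
  set dB : E → ℝ := fun x => infDist x B with hdB
  have hden : ∀ x, 0 < dA x + dB x := by
    intro x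
    rcases lt_or_eq_of_le (add_nonneg (infDist_nonneg (x := x) (s := A))
      (infDist_nonneg (x := x) (s := B))) with h | h
    · exact h
    have h1 : dA x = 0 := by
      have := infDist_nonneg (x := x) (s := A)
      have := infDist_nonneg (x := x) (s := B)
      simp only [hdA, hdB] at *
      linarith
    have h2 : dB x = 0 := by
      have := infDist_nonneg (x := x) (s := A)
      simp only [hdA, hdB] at *
      linarith
    have hxA : x ∈ A := (hA.mem_iff_infDist_zero hAne).2 h1
    have hxB : x ∈ B := (hB.mem_iff_infDist_zero hBne).2 h2
    exact absurd rfl (hABdisj.ne_of_mem hxA hxB)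
  set φ : E → ℝ := fun x => π * (dA x / (dA x + dB x)) with hφ
  have hφcont : Continuous φ := by
    apply continuous_const.mul
    exact (continuous_infDist_pt A).div ((continuous_infDist_pt A).add (continuous_infDist_pt B))
      fun x => (hden x).ne'
  have hφA : ∀ x ∈ A, φ x = 0 := by
    intro x hx
    have : dA x = 0 := (hA.mem_iff_infDist_zero hAne).1 hx
    simp [hφ, this]
  have hφB : ∀ x ∈ B, φ x = π := by
    intro x hx
    have hB0 : dB x = 0 := (hB.mem_iff_infDist_zero hBne).1 hx
    have hA0 : dA x ≠ 0 := by
      intro h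
      have := hden x
      rw [h, hB0] at this
      linarith
    simp [hφ, hB0, div_self hA0]
  set f : E → Circle := M.piecewise (fun x => Circle.exp (φ x)) (fun x => Circle.exp (-φ x))
    with hfdef
  have hfr : frontier M ⊆ M ∩ N := by
    intro a ha
    constructor
    · exact hM.closure_eq ▸ ha.1
    · have h1 : Mᶜ ⊆ N := by
        intro w hw
        rcases (eq_univ_iff_forall.1 hMN w) with h | h
        · exact absurd h hw
        · exact h
      have h2 : a ∈ closure Mᶜ := by
        rw [frontier_eq_closure_inter_closure] at ha
        exact ha.2
      exact hN.closure_eq ▸ (closure_mono h1 h2)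
  have hexpeq : ∀ a ∈ M ∩ N, Circle.exp (φ a) = Circle.exp (-φ a) := by
    intro a ha
    rw [← hABeq] at ha
    rcases ha with ha | ha
    · rw [hφA a ha]; norm_num
    · rw [hφB a ha]
      exact Circle.exp_eq_exp.2 ⟨1, by push_cast; ring⟩
  have hfcont : Continuous f :=
    Continuous.piecewise (fun a ha => hexpeq a (hfr ha))
      (Circle.exp.continuous.comp hφcont) (Circle.exp.continuous.comp hφcont.neg)
  obtain ⟨θ, hθc, hθ⟩ := newman_exists_lift f hfcont
  have hMlift : ∀ x ∈ M, Circle.exp (θ x) = Circle.exp (φ x) := by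
    intro x hx
    rw [hθ x, hfdef, Set.piecewise_eq_of_mem _ _ _ hx]
  have hNlift : ∀ x ∈ N, Circle.exp (θ x) = Circle.exp (-φ x) := by
    intro x hx
    by_cases hxM : x ∈ M
    · rw [hθ x, hfdef, Set.piecewise_eq_of_mem _ _ _ hxM]
      exact hexpeq x ⟨hxM, hx⟩
    · rw [hθ x, hfdef, Set.piecewise_eq_of_notMem _ _ _ hxM]
  have hMint : ∀ x ∈ M, ∃ m : ℤ, θ x - φ x = m * (2 * π) := by
    intro x hx
    obtain ⟨m, hm⟩ := Circle.exp_eq_exp.1 (hMlift x hx)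
    exact ⟨m, by linarith⟩
  have hNint : ∀ x ∈ N, ∃ m : ℤ, θ x + φ x = m * (2 * π) := by
    intro x hx
    obtain ⟨m, hm⟩ := Circle.exp_eq_exp.1 (hNlift x hx)
    exact ⟨m, by linarith⟩
  obtain ⟨a, haA⟩ := hAne
  obtain ⟨b, hbB⟩ := hBne
  have haMN : a ∈ M ∩ N := hABeq ▸ (Or.inl haA : a ∈ A ∪ B)
  have hbMN : b ∈ M ∩ N := hABeq ▸ (Or.inr hbB : b ∈ A ∪ B)
  have hMconst := newman_constOn hMc (hθc.continuousOn.sub hφcont.continuousOn) hMint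
    a haMN.1 b hbMN.1
  have hNconst := newman_constOn hNc (hθc.continuousOn.add hφcont.continuousOn) hNint
    a haMN.2 b hbMN.2
  simp only [Pi.sub_apply, Pi.add_apply] at hMconst hNconst
  rw [hφA a haA, hφB b hbB] at hMconst hNconst
  have : π = 0 := by linarith
  exact Real.pi_ne_zero this

/-- The frontier of a connected component of the complement lies in the closure of the set. -/
lemma newman_frontier_subset {E : Type*} [NormedAddCommGroup E] [NormedSpace ℝ E]
    (X : Set E) {z : E} (hz : z ∈ Xᶜ) :
    frontier (connectedComponentIn Xᶜ z) ⊆ closure X := by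
  intro w hw
  by_contra hwX
  set C := connectedComponentIn Xᶜ z with hC
  obtain ⟨ε, hε, hball⟩ := Metric.isOpen_iff.1 isClosed_closure.isOpen_compl w hwX
  have hballX : ball w ε ⊆ Xᶜ := hball.trans (compl_subset_compl.2 subset_closure)
  have hwcl : w ∈ closure C := hw.1
  obtain ⟨p, hp⟩ := Metric.mem_closure_iff.1 hwcl ε hε
  have hpball : p ∈ ball w ε := by rw [mem_ball, dist_comm]; exact hp.2
  have hprec : IsPreconnected (ball w ε) := (convex_ball _ _).isPreconnected
  have hsub : ball w ε ⊆ connectedComponentIn Xᶜ p :=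
    hprec.subset_connectedComponentIn hpball hballX
  have hccp : connectedComponentIn Xᶜ p = C := (connectedComponentIn_eq hp.1).symm
  have : w ∈ interior C := by
    rw [mem_interior]
    exact ⟨ball w ε, hccp ▸ hsub, isOpen_ball, mem_ball_self hε⟩
  exact hw.2 this

/-- The frontier of a connected component of the complement of a nonempty set is nonempty. -/
lemma newman_frontier_nonempty {E : Type*} [NormedAddCommGroup E] [NormedSpace ℝ E]
    [PreconnectedSpace E] (X : Set E) (hXne : X.Nonempty) {z : E} (hz : z ∈ Xᶜ) :
    (frontier (connectedComponentIn Xᶜ z)).Nonempty := by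
  set C := connectedComponentIn Xᶜ z with hC
  rw [nonempty_iff_ne_empty]
  intro hfr
  have hclopen : IsClopen C := isClopen_iff_frontier_eq_empty.2 hfr
  rcases isClopen_iff.1 hclopen with h | h
  · have : z ∈ C := mem_connectedComponentIn hz
    rw [h] at this
    exact this
  · obtain ⟨x, hx⟩ := hXne
    have : x ∈ C := h ▸ mem_univ x
    exact connectedComponentIn_subset Xᶜ z this hx

/-- Newman's theorem: if `X` is a connected subset of `ℝⁿ`, then every connected component
of `ℝⁿ \ X` has a connected boundary. -/
theorem component_of_complement_frontier_connected
    (n : ℕ) (X : Set (Fin n → ℝ))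
    (hconn : IsConnected X) :
    ∀ y ∈ Xᶜ, IsConnected (frontier (connectedComponentIn Xᶜ y)) := by
  classical
  intro y hy
  set C := connectedComponentIn Xᶜ y with hC
  have hXne : X.Nonempty := hconn.nonempty
  have hCX : C ⊆ Xᶜ := connectedComponentIn_subset _ _
  have hfrne : (frontier C).Nonempty := newman_frontier_nonempty X hXne hy
  refine ⟨hfrne, ?_⟩
  by_contra hnc
  rw [IsPreconnected] at hnc
  push_neg at hnc
  obtain ⟨u, v, hu, hv, huv, hune, hvne, hdisj⟩ := hnc
  -- Build the closed separation A, B of frontier C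
  set A : Set (Fin n → ℝ) := frontier C \ v with hAdef
  set B : Set (Fin n → ℝ) := frontier C \ u with hBdef
  have hAeq : A = frontier C ∩ u := by
    apply Subset.antisymm
    · intro x hx
      rcases huv hx.1 with h | h
      · exact ⟨hx.1, h⟩
      · exact absurd h hx.2
    · intro x hx
      exact ⟨hx.1, fun hxv => eq_empty_iff_forall_notMem.1 hdisj x ⟨hx.1, hx.2, hxv⟩⟩
  have hBeq : B = frontier C ∩ v := by
    apply Subset.antisymm
    · intro x hx
      rcases huv hx.1 with h | h
      · exact absurd h hx.2
      · exact ⟨hx.1, h⟩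
    · intro x hx
      exact ⟨hx.1, fun hxu => eq_empty_iff_forall_notMem.1 hdisj x ⟨hx.1, hxu, hx.2⟩⟩
  have hAclosed : IsClosed A := isClosed_frontier.sdiff hv
  have hBclosed : IsClosed B := isClosed_frontier.sdiff hu
  have hAne : A.Nonempty := by rw [hAeq]; exact hune
  have hBne : B.Nonempty := by rw [hBeq]; exact hvne
  have hABdisj : Disjoint A B := by
    rw [disjoint_left]
    intro x hxA hxB
    rcases huv hxA.1 with h | h
    · exact hxB.2 h
    · exact hxA.2 h
  have hABeq : A ∪ B = frontier C := by
    apply Subset.antisymm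
    · exact union_subset diff_subset diff_subset
    · intro x hx
      rcases huv hx with h | h
      · left
        exact ⟨hx, fun hxv => eq_empty_iff_forall_notMem.1 hdisj x ⟨hx, h, hxv⟩⟩
      · right
        exact ⟨hx, fun hxu => eq_empty_iff_forall_notMem.1 hdisj x ⟨hx, hxu, h⟩⟩
  -- M and N
  set M : Set (Fin n → ℝ) := closure C with hMdef
  set N : Set (Fin n → ℝ) := closure Cᶜ with hNdef
  have hMc : IsPreconnected M := (isPreconnected_connectedComponentIn).closure
  -- N is preconnected
  have hXsubCc : X ⊆ Cᶜ := by
    intro x hx hxC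
    exact hCX hxC hx
  have hNc : IsPreconnected N := by
    obtain ⟨x₁, hx₁⟩ := hXne
    have hx₁cl : x₁ ∈ closure X := subset_closure hx₁
    set c : Set (Set (Fin n → ℝ)) :=
      insert (closure X)
        ((fun z => closure X ∪ closure (connectedComponentIn Xᶜ z)) '' (Xᶜ \ C)) with hcdef
    have hXcl : IsPreconnected (closure X) := hconn.isPreconnected.closure
    have hmem : ∀ s ∈ c, x₁ ∈ s := by
      intro s hs
      rcases hs with rfl | ⟨z, hz, rfl⟩
      · exact hx₁cl
      · exact Or.inl hx₁cl
    have hprec : ∀ s ∈ c, IsPreconnected s := by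
      intro s hs
      rcases hs with rfl | ⟨z, hz, rfl⟩
      · exact hXcl
      · obtain ⟨w, hw⟩ := newman_frontier_nonempty X hconn.nonempty hz.1
        have hw1 : w ∈ closure X := newman_frontier_subset X hz.1 hw
        have hw2 : w ∈ closure (connectedComponentIn Xᶜ z) := hw.1
        exact IsPreconnected.union w hw1 hw2 hXcl
          isPreconnected_connectedComponentIn.closure
    have hUnion : IsPreconnected (⋃₀ c) := isPreconnected_sUnion x₁ c hmem hprec
    have hsub1 : Cᶜ ⊆ ⋃₀ c := by
      intro x hx
      by_cases hxX : x ∈ X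
      · exact ⟨closure X, mem_insert _ _, subset_closure hxX⟩
      · refine ⟨closure X ∪ closure (connectedComponentIn Xᶜ x),
          mem_insert_of_mem _ ⟨x, ⟨hxX, hx⟩, rfl⟩, Or.inr (subset_closure (mem_connectedComponentIn hxX))⟩
    have hsub2 : ⋃₀ c ⊆ closure Cᶜ := by
      intro x hx
      obtain ⟨s, hs, hxs⟩ := hx
      rcases hs with rfl | ⟨z, hz, rfl⟩
      · exact closure_mono hXsubCc hxs
      · rcases hxs with h | h
        · exact closure_mono hXsubCc h
        · refine closure_mono ?_ h
          intro w hw hwC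
          have h1 : connectedComponentIn Xᶜ w = connectedComponentIn Xᶜ z :=
            (connectedComponentIn_eq hw).symm
          have h2 : connectedComponentIn Xᶜ w = C := (connectedComponentIn_eq hwC).symm
          have hzC : z ∈ C := by
            rw [← h2, h1]
            exact mem_connectedComponentIn hz.1
          exact hz.2 hzC
    have hNeq : N = closure (⋃₀ c) := by
      apply Subset.antisymm
      · exact closure_mono hsub1
      · rw [hNdef, ← closure_closure (s := Cᶜ)]
        exact closure_mono hsub2
    rw [hNeq]
    exact hUnion.closure
  have hMN : M ∪ N = univ := by
    rw [eq_univ_iff_forall]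
    intro x
    by_cases hx : x ∈ C
    · exact Or.inl (subset_closure hx)
    · exact Or.inr (subset_closure hx)
  have hfrMN : A ∪ B = M ∩ N := by
    rw [hABeq, hMdef, hNdef, frontier_eq_closure_inter_closure]
  exact newman_unicoherent isClosed_closure isClosed_closure hMc hNc hMN
    hAclosed hBclosed hAne hBne hABdisj hfrMN
end

section
/- Let F and G be disjoint closed subsets of ℝ² such that ℝ² \ F and ℝ² \ G are connected. Then ℝ² \ (F ∪ G) is connected. -/
open Complex Set intervalIntegral MeasureTheory Metric

noncomputable section


/-- A smooth nonvanishing function on `ℝ × ℝ` has a continuous logarithm. -/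
lemma smooth_clog (g : ℝ × ℝ → ℂ) (hg : ContDiff ℝ 1 g) (hg0 : ∀ p, g p ≠ 0) :
    ∃ h : ℝ × ℝ → ℂ, Continuous h ∧ ∀ p, Complex.exp (h p) = g p := by
  have hgc : Continuous g := hg.continuous
  set d : ℝ × ℝ → (ℝ × ℝ →L[ℝ] ℂ) := fderiv ℝ g with hd
  have hdc : Continuous d := hg.continuous_fderiv one_ne_zero
  set u : ℝ × ℝ → ℂ := fun p => d p (1, 0) / g p with hu
  set v : ℝ × ℝ → ℂ := fun p => d p (0, 1) / g p with hv
  have hdiff : ∀ p, HasFDerivAt g (d p) p :=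
    fun p => (hg.differentiable one_ne_zero p).hasFDerivAt
  have huc : Continuous u := (hdc.clm_apply continuous_const).div hgc hg0
  have hvc : Continuous v := (hdc.clm_apply continuous_const).div hgc hg0
  -- partial derivatives along the axes
  have hder1 : ∀ x y : ℝ, HasDerivAt (fun s => g (s, y)) (d (x, y) (1, 0)) x := by
    intro x y
    have hline : HasDerivAt (fun s : ℝ => ((s, y) : ℝ × ℝ)) (1, 0) x :=
      (hasDerivAt_id x).prodMk (hasDerivAt_const x y)
    exact (hdiff (x, y)).comp_hasDerivAt x hline
  have hder2 : ∀ x y : ℝ, HasDerivAt (fun t => g (x, t)) (d (x, y) (0, 1)) y := by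
    intro x y
    have hline : HasDerivAt (fun t : ℝ => ((x, t) : ℝ × ℝ)) (0, 1) y :=
      (hasDerivAt_const y x).prodMk (hasDerivAt_id y)
    exact (hdiff (x, y)).comp_hasDerivAt y hline
  set h : ℝ × ℝ → ℂ :=
    fun p => (∫ s in (0:ℝ)..p.1, u (s, 0)) + ∫ t in (0:ℝ)..p.2, v (p.1, t) with hh
  have hhc : Continuous h := by
    apply Continuous.add
    · have h1 : Continuous fun x : ℝ => ∫ s in (0:ℝ)..x, u (s, 0) :=
        intervalIntegral.continuous_primitive
          (fun a b => ((huc.comp (continuous_id.prodMk continuous_const)).intervalIntegrable a b)) 0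
      exact h1.comp continuous_fst
    · exact continuous_parametric_intervalIntegral_of_continuous
        (f := fun (p : ℝ × ℝ) (t : ℝ) => v (p.1, t))
        (hvc.comp ((continuous_fst.comp continuous_fst).prodMk continuous_snd))
        continuous_snd
  -- the key identity
  have key : ∀ p : ℝ × ℝ, g p * Complex.exp (-h p) = g (0, 0) := by
    rintro ⟨x, y⟩
    set c : ℝ → ℂ := fun s => ∫ σ in (0:ℝ)..s, u (σ, 0) with hcdef
    have hcder : ∀ s : ℝ, HasDerivAt c (u (s, 0)) s := fun s =>
      ((huc.comp (continuous_id.prodMk continuous_const : Continuous fun σ : ℝ => ((σ, 0) : ℝ × ℝ))).integral_hasStrictDerivAt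
        0 s).hasDerivAt
    -- Step A: along the x-axis
    set A : ℝ → ℂ := fun s => g (s, 0) * Complex.exp (-c s) with hAdef
    have hA : ∀ s, HasDerivAt A 0 s := by
      intro s
      have h1 := hder1 s 0
      have h2 : HasDerivAt (fun s => Complex.exp (-c s))
          (Complex.exp (-c s) * (-u (s, 0))) s := ((hcder s).neg).cexp
      have := h1.mul h2
      refine HasDerivAt.congr_deriv this ?_
      have hgs := hg0 (s, 0)
      field_simp [hu]
      simp [hu, hgs]
      rw [mul_div_assoc', mul_div_cancel_left₀ _ hgs, add_neg_cancel]
    have hAconst : A x = A 0 :=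
      is_const_of_deriv_eq_zero (fun s => (hA s).differentiableAt)
        (fun s => (hA s).deriv) x 0
    -- Step B: along the vertical line at x
    set B : ℝ → ℂ := fun t => g (x, t) * Complex.exp (-(c x + ∫ τ in (0:ℝ)..t, v (x, τ))) with hBdef
    have hBint : ∀ t : ℝ, HasDerivAt (fun t => ∫ τ in (0:ℝ)..t, v (x, τ)) (v (x, t)) t := fun t =>
      ((hvc.comp (continuous_const.prodMk continuous_id : Continuous fun τ : ℝ => ((x, τ) : ℝ × ℝ))).integral_hasStrictDerivAt
        0 t).hasDerivAt
    have hB : ∀ t, HasDerivAt B 0 t := by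
      intro t
      have h1 := hder2 x t
      have h2 : HasDerivAt (fun t => Complex.exp (-(c x + ∫ τ in (0:ℝ)..t, v (x, τ))))
          (Complex.exp (-(c x + ∫ τ in (0:ℝ)..t, v (x, τ))) * (-v (x, t))) t := by
        exact (((hBint t).const_add (c x)).neg).cexp
      have := h1.mul h2
      refine HasDerivAt.congr_deriv this ?_
      have hgs := hg0 (x, t)
      field_simp [hv]
      simp [hv, hgs]
      rw [mul_div_assoc', mul_div_cancel_left₀ _ hgs, add_neg_cancel]
    have hBconst : B y = B 0 :=
      is_const_of_deriv_eq_zero (fun t => (hB t).differentiableAt)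
        (fun t => (hB t).deriv) y 0
    have hB0 : B 0 = A x := by
      simp [hBdef, hAdef, hcdef, intervalIntegral.integral_same]
    have hA0 : A 0 = g (0, 0) := by
      simp [hAdef, hcdef, intervalIntegral.integral_same]
    have : g (x, y) * Complex.exp (-(c x + ∫ τ in (0:ℝ)..y, v (x, τ))) = g (0, 0) := by
      rw [show g (x, y) * Complex.exp (-(c x + ∫ τ in (0:ℝ)..y, v (x, τ))) = B y from rfl,
        hBconst, hB0, hAconst, hA0]
    simpa [hh, hcdef] using this
  obtain ⟨w, hw⟩ : ∃ w, Complex.exp w = g (0, 0) := by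
    have : g (0, 0) ∈ Set.range Complex.exp := by
      rw [Complex.range_exp]; exact hg0 (0, 0)
    exact this
  refine ⟨fun p => h p + w, hhc.add continuous_const, fun p => ?_⟩
  have := key p
  rw [Complex.exp_add, hw]
  have hexp : Complex.exp (-h p) = (Complex.exp (h p))⁻¹ := by
    rw [← Complex.exp_neg]
  rw [hexp] at this
  field_simp at this
  rw [this, show ((0, 0) : ℝ × ℝ) = (0 : ℝ × ℝ) from rfl]

/-- A continuous nonvanishing function on `ℝ × ℝ` has a continuous logarithm. -/
lemma continuous_clog (f : ℝ × ℝ → ℂ) (hf : Continuous f) (hf0 : ∀ p, f p ≠ 0) :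
    ∃ τ : ℝ × ℝ → ℂ, Continuous τ ∧ ∀ p, Complex.exp (τ p) = f p := by
  have hfn : ∀ x, 0 < ‖f x‖ := fun x => norm_pos_iff.2 (hf0 x)
  obtain ⟨g, hgsm, hgmem⟩ :
      ∃ g : ℝ × ℝ → ℂ, ContDiff ℝ 1 g ∧ ∀ x, g x ∈ Metric.ball (f x) (‖f x‖ / 3) := by
    obtain ⟨g, hg⟩ := exists_contMDiffMap_forall_mem_convex_of_local_const
      (modelWithCornersSelf ℝ (ℝ × ℝ)) (F := ℂ) (n := 1)
      (t := fun x => Metric.ball (f x) (‖f x‖ / 3))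
      (fun x => convex_ball _ _)
      (fun x => by
        refine ⟨f x, ?_⟩
        have hopen : IsOpen {y : ℝ × ℝ | dist (f x) (f y) < ‖f y‖ / 3} :=
          isOpen_lt (continuous_const.dist hf) (hf.norm.div_const 3)
        have hx : x ∈ {y : ℝ × ℝ | dist (f x) (f y) < ‖f y‖ / 3} := by
          simp only [Set.mem_setOf_eq, dist_self]
          have := hfn x; linarith
        exact Filter.eventually_iff_exists_mem.2 ⟨_, hopen.mem_nhds hx, fun y hy => hy⟩)
    exact ⟨g, ((contMDiff_iff_contDiff).1 g.contMDiff).of_le le_rfl, hg⟩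
  have hgf : ∀ x, ‖g x - f x‖ < ‖f x‖ / 3 := fun x => by
    simpa [Metric.mem_ball, dist_eq_norm] using hgmem x
  have hgn : ∀ x, 2 / 3 * ‖f x‖ < ‖g x‖ := fun x => by
    have h1 := abs_norm_sub_norm_le (g x) (f x)
    have h2 := neg_abs_le (‖g x‖ - ‖f x‖)
    have h3 := hgf x
    linarith
  have hg0 : ∀ x, g x ≠ 0 := fun x =>
    norm_pos_iff.1 (lt_trans (by have := hfn x; linarith) (hgn x))
  obtain ⟨h, hhc, hhe⟩ := smooth_clog g hgsm hg0
  set r : ℝ × ℝ → ℂ := fun p => f p / g p with hrdef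
  have hrne : ∀ p, r p ≠ 0 := fun p => div_ne_zero (hf0 p) (hg0 p)
  have hrc : Continuous r := hf.div hgsm.continuous hg0
  have hr1 : ∀ p, ‖r p - 1‖ < 1 / 2 := by
    intro p
    have : r p - 1 = (f p - g p) / g p := div_sub_one (hg0 p)
    rw [this, norm_div]
    rw [div_lt_iff₀ (lt_trans (by have := hfn p; linarith) (hgn p))]
    have h3 : ‖f p - g p‖ = ‖g p - f p‖ := norm_sub_rev _ _
    have := hgf p; have := hgn p
    linarith
  have hslit : ∀ p, r p ∈ Complex.slitPlane := by
    intro p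
    refine Complex.mem_slitPlane_iff.2 (Or.inl ?_)
    have h1 : |(r p - 1).re| ≤ ‖r p - 1‖ := Complex.abs_re_le_norm _
    have h2 := (abs_le.mp (h1.trans (hr1 p).le)).1
    have h3 : (r p - 1).re = (r p).re - 1 := by simp
    linarith
  have hlogc : Continuous fun p => Complex.log (r p) := by
    rw [continuous_iff_continuousAt]
    exact fun p => (continuousAt_clog (hslit p)).comp hrc.continuousAt
  refine ⟨fun p => h p + Complex.log (r p), hhc.add hlogc, fun p => ?_⟩
  rw [Complex.exp_add, hhe p, Complex.exp_log (hrne p), hrdef, mul_comm,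
    div_mul_cancel₀ _ (hg0 p)]

/-- Transfer of `continuous_clog` to `Fin 2 → ℝ`. -/
lemma continuous_clog_plane (f : (Fin 2 → ℝ) → ℂ) (hf : Continuous f)
    (hf0 : ∀ p, f p ≠ 0) :
    ∃ τ : (Fin 2 → ℝ) → ℂ, Continuous τ ∧ ∀ p, Complex.exp (τ p) = f p := by
  let e : (Fin 2 → ℝ) ≃ₜ ℝ × ℝ := Homeomorph.finTwoArrow
  obtain ⟨τ, hτc, hτ⟩ := continuous_clog (f ∘ e.symm) (hf.comp e.symm.continuous)
    (fun p => hf0 _)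
  refine ⟨τ ∘ e, hτc.comp e.continuous, fun p => ?_⟩
  have := hτ (e p)
  simpa using this

/-- A continuous function on a preconnected set taking values in `2πℤ` is constant. -/
lemma const_of_two_pi_int {E : Type*} [TopologicalSpace E] {S : Set E}
    (hS : IsPreconnected S) {φ : E → ℝ} (hφ : ContinuousOn φ S)
    (hint : ∀ p ∈ S, ∃ n : ℤ, φ p = 2 * Real.pi * n) {a b : E}
    (ha : a ∈ S) (hb : b ∈ S) : φ a = φ b := by
  have hπ := Real.pi_pos
  -- it suffices to rule out strict inequality
  have main : ∀ x ∈ S, ∀ y ∈ S, ¬ φ x < φ y := by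
    intro x hx y hy hlt
    obtain ⟨m, hm⟩ := hint x hx
    obtain ⟨n, hn⟩ := hint y hy
    have hmn : (m : ℝ) < n := by
      have h2 : (0:ℝ) < 2 * Real.pi := by linarith
      rw [hm, hn] at hlt
      exact lt_of_mul_lt_mul_left hlt h2.le
    have hmn' : m + 1 ≤ n := by exact_mod_cast hmn
    have hmn'' : (m : ℝ) + 1 ≤ n := by exact_mod_cast hmn'
    have hc : 2 * Real.pi * m + Real.pi ∈ Icc (φ x) (φ y) := by
      constructor
      · rw [hm]; linarith
      · rw [hn]; nlinarith
    obtain ⟨p, hpS, hpc⟩ := hS.intermediate_value hx hy hφ hc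
    obtain ⟨k, hk⟩ := hint p hpS
    rw [hk] at hpc
    have h1 : ((2*k : ℤ) : ℝ) * Real.pi = ((2*m+1 : ℤ) : ℝ) * Real.pi := by
      push_cast
      linarith
    have h2 : (2*k : ℤ) = 2*m+1 := by
      have := mul_right_cancel₀ (Real.pi_ne_zero) h1
      exact_mod_cast this
    omega
  rcases lt_trichotomy (φ a) (φ b) with h | h | h
  · exact absurd h (main a ha b hb)
  · exact h
  · exact absurd h (main b hb a ha)

/-- If `F` and `G` are disjoint closed subsets of `ℝ²` with connected complements,
then the complement of `F ∪ G` is connected. -/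
theorem complement_union_connected
    (F G : Set (Fin 2 → ℝ))
    (hF : IsClosed F) (hG : IsClosed G)
    (hdisj : F ∩ G = ∅)
    (hFc : IsConnected Fᶜ) (hGc : IsConnected Gᶜ) :
    IsConnected (F ∪ G)ᶜ := by
  classical
  rcases F.eq_empty_or_nonempty with hFe | hFne
  · simpa [hFe] using hGc
  rcases G.eq_empty_or_nonempty with hGe | hGne
  · simpa [hGe] using hFc
  have hπ := Real.pi_pos
  -- disjointness facts
  have hFG : ∀ p, p ∈ F → p ∉ G := by
    intro p hpF hpG
    have : p ∈ F ∩ G := ⟨hpF, hpG⟩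
    rw [hdisj] at this; exact this
  -- the Urysohn-type function σ
  set dF : (Fin 2 → ℝ) → ℝ := fun p => infDist p F with hdF
  set dG : (Fin 2 → ℝ) → ℝ := fun p => infDist p G with hdG
  have hdenom : ∀ p, 0 < dF p + dG p := by
    intro p
    rcases lt_or_eq_of_le (add_nonneg (infDist_nonneg (x := p) (s := F))
      (infDist_nonneg (x := p) (s := G))) with h | h
    · exact h
    · exfalso
      have h1 : dF p = 0 := by
        have := infDist_nonneg (x := p) (s := F)
        have := infDist_nonneg (x := p) (s := G)
        simp only [hdF, hdG] at *; linarith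
      have h2 : dG p = 0 := by
        have := infDist_nonneg (x := p) (s := F)
        have := infDist_nonneg (x := p) (s := G)
        simp only [hdF, hdG] at *; linarith
      have hpF : p ∈ F := (hF.mem_iff_infDist_zero hFne).2 h1
      have hpG : p ∈ G := (hG.mem_iff_infDist_zero hGne).2 h2
      exact hFG p hpF hpG
  set σ : (Fin 2 → ℝ) → ℝ := fun p => Real.pi * dF p / (dF p + dG p) with hσ
  have hσc : Continuous σ := by
    apply Continuous.div
    · exact continuous_const.mul (continuous_infDist_pt F)
    · exact (continuous_infDist_pt F).add (continuous_infDist_pt G)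
    · exact fun p => (hdenom p).ne'
  have hσF : ∀ p ∈ F, σ p = 0 := by
    intro p hp
    have : dF p = 0 := (hF.mem_iff_infDist_zero hFne).1 hp
    simp [hσ, this]
  have hσG : ∀ p ∈ G, σ p = Real.pi := by
    intro p hp
    have h2 : dG p = 0 := (hG.mem_iff_infDist_zero hGne).1 hp
    have h1 : dF p ≠ 0 := by
      intro h
      exact hFG p ((hF.mem_iff_infDist_zero hFne).2 h) hp
    rw [hσ]; simp only [h2, add_zero]
    field_simp
  set W := (F ∪ G)ᶜ with hW
  -- W is nonempty
  have hWne : W.Nonempty := by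
    by_contra h
    rw [Set.not_nonempty_iff_eq_empty] at h
    have hcov : (univ : Set (Fin 2 → ℝ)) ⊆ Fᶜ ∪ Gᶜ := by
      intro x _
      by_cases hx : x ∈ F
      · exact Or.inr (hFG x hx)
      · exact Or.inl hx
    have := isPreconnected_univ (u := Fᶜ) (v := Gᶜ) hF.isOpen_compl hG.isOpen_compl
      hcov (by simpa using hFc.nonempty) (by simpa using hGc.nonempty)
    obtain ⟨x, -, hx⟩ := this
    have : x ∈ W := by
      rw [hW, Set.compl_union]; exact hx
    rw [h] at this; exact this
  refine ⟨hWne, ?_⟩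
  by_contra hnc
  rw [IsPreconnected] at hnc
  push_neg at hnc
  obtain ⟨u, v, hu, hv, huv, hAne, hBne, hne⟩ := hnc
  set A := W ∩ u with hA
  set B := W ∩ v with hB
  have hWopen : IsOpen W := (hF.union hG).isOpen_compl
  have hAopen : IsOpen A := hWopen.inter hu
  have hBopen : IsOpen B := hWopen.inter hv
  have hAB : A ∪ B = W := by
    apply subset_antisymm
    · exact Set.union_subset Set.inter_subset_left Set.inter_subset_left
    · intro x hx
      rcases huv hx with h | h
      · exact Or.inl ⟨hx, h⟩
      · exact Or.inr ⟨hx, h⟩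
  have hABdisj : A ∩ B = ∅ := by
    rw [← hne]; ext x
    simp only [hA, hB, Set.mem_inter_iff, Set.mem_empty_iff_false]
    tauto
  have hAW : A ⊆ W := Set.inter_subset_left
  have hBW : B ⊆ W := Set.inter_subset_left
  -- closures
  have hclA : closure A ⊆ A ∪ (F ∪ G) := by
    intro x hx
    by_cases hxW : x ∈ W
    · left
      have hxAB : x ∈ A ∪ B := hAB ▸ hxW
      rcases hxAB with h | h
      · exact h
      · exfalso
        obtain ⟨y, hyB, hyA⟩ := mem_closure_iff.1 hx B hBopen h
        have : y ∈ A ∩ B := ⟨hyA, hyB⟩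
        rw [hABdisj] at this; exact this
    · right
      by_contra hc
      exact hxW hc
  have hclB : closure B ⊆ B ∪ (F ∪ G) := by
    intro x hx
    by_cases hxW : x ∈ W
    · left
      have hxAB : x ∈ A ∪ B := hAB ▸ hxW
      rcases hxAB with h | h
      · exfalso
        obtain ⟨y, hyA, hyB⟩ := mem_closure_iff.1 hx A hAopen h
        have : y ∈ A ∩ B := ⟨hyA, hyB⟩
        rw [hABdisj] at this; exact this
      · exact h
    · right
      by_contra hc
      exact hxW hc
  set P := A ∪ (F ∪ G) with hP
  have hPclosed : IsClosed P := by
    rw [← closure_eq_iff_isClosed]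
    apply subset_antisymm
    · rw [hP, closure_union]
      refine Set.union_subset hclA ?_
      rw [(hF.union hG).closure_eq]
      exact Set.subset_union_right
    · exact subset_closure
  have hfrontP : frontier P ⊆ F ∪ G := by
    intro x hx
    have hxP : x ∈ P := by
      have := hx.1
      rwa [hPclosed.closure_eq] at this
    rcases hxP with hxA | hxFG
    · exfalso
      have : x ∈ interior P := hAopen.subset_interior_iff.2 (Set.subset_union_left) hxA
      exact hx.2 this
    · exact hxFG
  -- the circle-valued map
  set f : (Fin 2 → ℝ) → ℂ :=
    P.piecewise (fun p => Complex.exp (σ p * Complex.I))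
      (fun p => Complex.exp (-σ p * Complex.I)) with hf
  have hexpcont : Continuous fun p => Complex.exp ((σ p : ℂ) * Complex.I) :=
    ((Complex.continuous_ofReal.comp hσc).mul continuous_const).cexp
  have hexpcont' : Continuous fun p => Complex.exp (-(σ p : ℂ) * Complex.I) :=
    (((Complex.continuous_ofReal.comp hσc).neg).mul continuous_const).cexp
  have hfc : Continuous f := by
    apply Continuous.piecewise _ hexpcont hexpcont'
    intro a ha
    rcases hfrontP ha with haF | haG
    · rw [hσF a haF]; norm_num
    · rw [hσG a haG]
      push_cast
      rw [Complex.exp_pi_mul_I, neg_mul, Complex.exp_neg, Complex.exp_pi_mul_I]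
      norm_num
  have hf0 : ∀ p, f p ≠ 0 := by
    intro p
    by_cases hp : p ∈ P
    · rw [hf, Set.piecewise_eq_of_mem _ _ _ hp]; exact Complex.exp_ne_zero _
    · rw [hf, Set.piecewise_eq_of_notMem _ _ _ hp]; exact Complex.exp_ne_zero _
  obtain ⟨τ, hτc, hτ⟩ := continuous_clog_plane f hfc hf0
  -- the lift has purely imaginary values
  have habs : ∀ p, ‖f p‖ = 1 := by
    intro p
    by_cases hp : p ∈ P
    · rw [hf, Set.piecewise_eq_of_mem _ _ _ hp, Complex.norm_exp]
      norm_num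
    · rw [hf, Set.piecewise_eq_of_notMem _ _ _ hp, Complex.norm_exp]
      norm_num
  have hre : ∀ p, (τ p).re = 0 := by
    intro p
    have h2 : Real.exp (τ p).re = 1 := by
      rw [← Complex.norm_exp, hτ p, habs p]
    exact (Real.exp_eq_one_iff _).1 h2
  set t : (Fin 2 → ℝ) → ℝ := fun p => (τ p).im with ht
  have htc : Continuous t := Complex.continuous_im.comp hτc
  have hft : ∀ p, Complex.exp ((t p : ℂ) * Complex.I) = f p := by
    intro p
    rw [← hτ p]
    congr 1
    apply Complex.ext <;> simp [ht, hre p]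
  -- key integrality relations
  have imeq : ∀ s r : ℝ, ∀ n : ℤ,
      ((s : ℂ) * Complex.I) = (r : ℂ) * Complex.I + n * (2 * Real.pi * Complex.I) →
      s = r + 2 * Real.pi * n := by
    intro s r n hn
    have h := congrArg Complex.im hn
    simp at h
    linear_combination h
  have hkeyP : ∀ p ∈ P, ∃ n : ℤ, t p - σ p = 2 * Real.pi * n := by
    intro p hp
    have h1 : Complex.exp ((t p : ℂ) * Complex.I) = Complex.exp ((σ p : ℂ) * Complex.I) := by
      rw [hft p, hf, Set.piecewise_eq_of_mem _ _ _ hp]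
    rw [Complex.exp_eq_exp_iff_exists_int] at h1
    obtain ⟨n, hn⟩ := h1
    refine ⟨n, ?_⟩
    have h2 := imeq (t p) (σ p) n (by exact_mod_cast hn)
    rw [h2]; ring
  have hBnotP : ∀ p ∈ B, p ∉ P := by
    intro p hpB hpP
    rcases hpP with hpA | hpFG
    · have : p ∈ A ∩ B := ⟨hpA, hpB⟩
      rw [hABdisj] at this; exact this
    · exact (hBW hpB) hpFG
  have hkeyQ : ∀ p, p ∈ B ∪ (F ∪ G) → ∃ n : ℤ, t p + σ p = 2 * Real.pi * n := by
    intro p hp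
    have hfp : f p = Complex.exp (-(σ p : ℂ) * Complex.I) := by
      rcases hp with hpB | hpFG
      · rw [hf, Set.piecewise_eq_of_notMem _ _ _ (hBnotP p hpB)]
      · rcases hpFG with hpF | hpG
        · have hpP : p ∈ P := Or.inr (Or.inl hpF)
          rw [hf, Set.piecewise_eq_of_mem _ _ _ hpP, hσF p hpF]
          norm_num
        · have hpP : p ∈ P := Or.inr (Or.inr hpG)
          rw [hf, Set.piecewise_eq_of_mem _ _ _ hpP, hσG p hpG]
          push_cast
          rw [Complex.exp_pi_mul_I, neg_mul, Complex.exp_neg, Complex.exp_pi_mul_I]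
          norm_num
    have h1 : Complex.exp ((t p : ℂ) * Complex.I) =
        Complex.exp (((-σ p : ℝ) : ℂ) * Complex.I) := by
      rw [hft p, hfp]; push_cast; ring_nf
    rw [Complex.exp_eq_exp_iff_exists_int] at h1
    obtain ⟨n, hn⟩ := h1
    refine ⟨n, ?_⟩
    have h2 := imeq (t p) (-σ p) n (by exact_mod_cast hn)
    rw [h2]; ring
  -- pick points in A and B
  obtain ⟨a, haA⟩ := hAne
  obtain ⟨b, hbB⟩ := hBne
  have haA' : a ∈ A := haA
  have hbB' : b ∈ B := hbB
  have haW : a ∈ W := hAW haA'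
  have hbW : b ∈ W := hBW hbB'
  have haFG : a ∉ F ∪ G := by simpa [hW] using haW
  have hbFG : b ∉ F ∪ G := by simpa [hW] using hbW
  -- φ on Gᶜ
  have hGcomp : Gᶜ ⊆ A ∪ B ∪ F := by
    intro x hx
    by_cases hxF : x ∈ F
    · exact Or.inr hxF
    · have hxW : x ∈ W := by
        rw [hW, Set.mem_compl_iff]
        rintro (h | h)
        exacts [hxF h, hx h]
      exact Or.inl (hAB ▸ hxW)
  have hFsubGc : F ⊆ Gᶜ := fun x hx => hFG x hx
  have hGsubFc : G ⊆ Fᶜ := fun x hx hxF => hFG x hxF hx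
  set φ : (Fin 2 → ℝ) → ℝ :=
    (A ∪ F).piecewise (fun p => t p - σ p) (fun p => t p + σ p) with hφ
  have hφcont : ContinuousOn φ Gᶜ := by
    apply ContinuousOn.piecewise
    · rintro x ⟨hxGc, hxfr⟩
      have hxcl : x ∈ closure (A ∪ F) := hxfr.1
      rw [closure_union] at hxcl
      have hxAF : x ∈ A ∪ (F ∪ G) := by
        rcases hxcl with h | h
        · exact hclA h
        · rw [hF.closure_eq] at h; exact Or.inr (Or.inl h)
      have hxF : x ∈ F := by
        rcases hxAF with hxA | hxFG
        · exfalso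
          have : x ∈ interior (A ∪ F) :=
            hAopen.subset_interior_iff.2 Set.subset_union_left hxA
          exact hxfr.2 this
        · rcases hxFG with h | h
          · exact h
          · exact absurd h hxGc
      rw [hσF x hxF]; ring
    · exact (htc.sub hσc).continuousOn
    · exact (htc.add hσc).continuousOn
  have hφval : ∀ p ∈ Gᶜ, ∃ n : ℤ, φ p = 2 * Real.pi * n := by
    intro p hp
    by_cases hpAF : p ∈ A ∪ F
    · rw [hφ, Set.piecewise_eq_of_mem _ _ _ hpAF]
      apply hkeyP
      rcases hpAF with h | h
      · exact Or.inl h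
      · exact Or.inr (Or.inl h)
    · rw [hφ, Set.piecewise_eq_of_notMem _ _ _ hpAF]
      apply hkeyQ
      rcases hGcomp hp with h | h
      · rcases h with h | h
        · exact absurd (Or.inl h) hpAF
        · exact Or.inl h
      · exact absurd (Or.inr h) hpAF
  have haGc : a ∈ Gᶜ := fun h => haFG (Or.inr h)
  have hbGc : b ∈ Gᶜ := fun h => hbFG (Or.inr h)
  have e1 : φ a = φ b := const_of_two_pi_int hGc.isPreconnected hφcont hφval haGc hbGc
  have hbnotAF : b ∉ A ∪ F := by
    rintro (h | h)
    · have : b ∈ A ∩ B := ⟨h, hbB'⟩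
      rw [hABdisj] at this; exact this
    · exact hbFG (Or.inl h)
  have haAF : a ∈ A ∪ F := Or.inl haA'
  have e1' : t a - σ a = t b + σ b := by
    rw [hφ] at e1
    rwa [Set.piecewise_eq_of_mem _ _ _ haAF,
      Set.piecewise_eq_of_notMem _ _ _ hbnotAF] at e1
  -- ψ on Fᶜ
  have hFcomp : Fᶜ ⊆ A ∪ B ∪ G := by
    intro x hx
    by_cases hxG : x ∈ G
    · exact Or.inr hxG
    · have hxW : x ∈ W := by
        rw [hW, Set.mem_compl_iff]
        rintro (h | h)
        exacts [hx h, hxG h]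
      exact Or.inl (hAB ▸ hxW)
  set ψ : (Fin 2 → ℝ) → ℝ :=
    (A ∪ G).piecewise (fun p => t p - σ p) (fun p => t p + σ p - 2 * Real.pi) with hψ
  have hψcont : ContinuousOn ψ Fᶜ := by
    apply ContinuousOn.piecewise
    · rintro x ⟨hxFc, hxfr⟩
      have hxcl : x ∈ closure (A ∪ G) := hxfr.1
      rw [closure_union] at hxcl
      have hxAG : x ∈ A ∪ (F ∪ G) := by
        rcases hxcl with h | h
        · exact hclA h
        · rw [hG.closure_eq] at h; exact Or.inr (Or.inr h)
      have hxG : x ∈ G := by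
        rcases hxAG with hxA | hxFG
        · exfalso
          have : x ∈ interior (A ∪ G) :=
            hAopen.subset_interior_iff.2 Set.subset_union_left hxA
          exact hxfr.2 this
        · rcases hxFG with h | h
          · exact absurd h hxFc
          · exact h
      rw [hσG x hxG]; ring
    · exact (htc.sub hσc).continuousOn
    · exact ((htc.add hσc).sub continuous_const).continuousOn
  have hψval : ∀ p ∈ Fᶜ, ∃ n : ℤ, ψ p = 2 * Real.pi * n := by
    intro p hp
    by_cases hpAG : p ∈ A ∪ G
    · rw [hψ, Set.piecewise_eq_of_mem _ _ _ hpAG]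
      apply hkeyP
      rcases hpAG with h | h
      · exact Or.inl h
      · exact Or.inr (Or.inr h)
    · rw [hψ, Set.piecewise_eq_of_notMem _ _ _ hpAG]
      have hpB : p ∈ B := by
        rcases hFcomp hp with h | h
        · rcases h with h | h
          · exact absurd (Or.inl h) hpAG
          · exact h
        · exact absurd (Or.inr h) hpAG
      obtain ⟨n, hn⟩ := hkeyQ p (Or.inl hpB)
      refine ⟨n - 1, ?_⟩
      push_cast
      rw [hn]; ring
  have haFc : a ∈ Fᶜ := fun h => haFG (Or.inl h)
  have hbFc : b ∈ Fᶜ := fun h => hbFG (Or.inl h)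
  have e2 : ψ a = ψ b := const_of_two_pi_int hFc.isPreconnected hψcont hψval haFc hbFc
  have hbnotAG : b ∉ A ∪ G := by
    rintro (h | h)
    · have : b ∈ A ∩ B := ⟨h, hbB'⟩
      rw [hABdisj] at this; exact this
    · exact hbFG (Or.inr h)
  have haAG : a ∈ A ∪ G := Or.inl haA'
  have e2' : t a - σ a = t b + σ b - 2 * Real.pi := by
    rw [hψ] at e2
    rwa [Set.piecewise_eq_of_mem _ _ _ haAG,
      Set.piecewise_eq_of_notMem _ _ _ hbnotAG] at e2
  linarith [e1', e2']

end
end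

section
/- There do not exist three nonempty regular closed subsets r₁, r₂, r₃ of ℝ with pairwise disjoint interiors such that each rᵢ has connected interior and each union rᵢ ∪ rⱼ (i ≠ j) has connected interior. -/
/-- Disjoint nonempty order-connected sets in `ℝ` are totally separated: once one point of
`A` lies below one point of `B`, all of `A` lies below all of `B`. -/
lemma aux_lt_of_ordConnected {A B : Set ℝ} (hA : A.OrdConnected) (hB : B.OrdConnected)
    (hd : ∀ x, x ∈ A → x ∉ B) {a b : ℝ} (ha : a ∈ A) (hb : b ∈ B) (hab : a < b) :
    ∀ x ∈ A, ∀ y ∈ B, x < y := by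
  intro x hx y hy
  rcases lt_trichotomy x y with h | h | h
  · exact h
  · exact absurd hy (h ▸ hd x hx)
  · exfalso
    rcases le_or_gt x b with hxb | hbx
    · exact hd x hx (hB.out hy hb ⟨h.le, hxb⟩)
    · exact hd b (hA.out ha hx ⟨hab.le, hbx.le⟩) hb

/-- There do not exist three nonempty regular closed subsets of `ℝ` with pairwise disjoint
interiors, each with connected interior, such that every pairwise union has connected
interior. -/
theorem no_three_interior_connected_contact_in_line :
    ¬ ∃ r : Fin 3 → Set ℝ,
      (∀ i, r i = closure (interior (r i))) ∧
      (∀ i, (r i).Nonempty) ∧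
      (∀ i j, i ≠ j → interior (r i) ∩ interior (r j) = ∅) ∧
      (∀ i, IsConnected (interior (r i))) ∧
      (∀ i j, i ≠ j → IsConnected (interior (r i ∪ r j))) := by
  rintro ⟨r, h1, _h2, h3, h4, h5⟩
  have hne : ∀ i, (interior (r i)).Nonempty := fun i => (h4 i).nonempty
  have hoc : ∀ i, (interior (r i)).OrdConnected :=
    fun i => (h4 i).isPreconnected.ordConnected
  have hd : ∀ i j, i ≠ j → ∀ x, x ∈ interior (r i) → x ∉ interior (r j) := by
    intro i j hij x hx hx'
    have := h3 i j hij
    exact absurd (Set.mem_inter hx hx' : x ∈ interior (r i) ∩ interior (r j)) (by simp [this])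
  -- trichotomy for a disjoint pair
  have tri : ∀ i j, i ≠ j →
      (∀ x ∈ interior (r i), ∀ y ∈ interior (r j), x < y) ∨
      (∀ x ∈ interior (r j), ∀ y ∈ interior (r i), x < y) := by
    intro i j hij
    obtain ⟨a, ha⟩ := hne i
    obtain ⟨b, hb⟩ := hne j
    rcases lt_trichotomy a b with h | h | h
    · exact Or.inl (aux_lt_of_ordConnected (hoc i) (hoc j) (hd i j hij) ha hb h)
    · exact absurd hb (h ▸ hd i j hij a ha)
    · exact Or.inr (aux_lt_of_ordConnected (hoc j) (hoc i) (hd j i hij.symm) hb ha h)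
  -- main: cannot have a middle interval j between i and k
  have main : ∀ i j k : Fin 3, i ≠ j → j ≠ k → i ≠ k →
      (∀ x ∈ interior (r i), ∀ y ∈ interior (r j), x < y) →
      (∀ x ∈ interior (r j), ∀ y ∈ interior (r k), x < y) → False := by
    intro i j k hij hjk hik hLij hLjk
    obtain ⟨p, hp⟩ := hne j
    obtain ⟨ε, hε, hball⟩ := Metric.isOpen_iff.mp (isOpen_interior (s := r j)) p hp
    have hq1 : p - ε / 2 ∈ interior (r j) := by
      apply hball
      rw [Metric.mem_ball, Real.dist_eq, show p - ε / 2 - p = -(ε / 2) by ring, abs_neg,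
        abs_of_nonneg (by linarith)]
      linarith
    have hq2 : p + ε / 2 ∈ interior (r j) := by
      apply hball
      rw [Metric.mem_ball, Real.dist_eq, show p + ε / 2 - p = ε / 2 by ring,
        abs_of_nonneg (by linarith)]
      linarith
    have hpci : p ∉ closure (interior (r i)) := by
      intro hcl
      have hsub : closure (interior (r i)) ⊆ Set.Iic (p - ε / 2) := by
        rw [← isClosed_Iic.closure_eq]
        exact closure_mono (fun x hx => (hLij x hx _ hq1).le)
      have := hsub hcl
      simp only [Set.mem_Iic] at this
      linarith
    have hpck : p ∉ closure (interior (r k)) := by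
      intro hcl
      have hsub : closure (interior (r k)) ⊆ Set.Ici (p + ε / 2) := by
        rw [← isClosed_Ici.closure_eq]
        exact closure_mono (fun x hx => (hLjk _ hq2 x hx).le)
      have := hsub hcl
      simp only [Set.mem_Ici] at this
      linarith
    obtain ⟨a, ha⟩ := hne i
    obtain ⟨c, hc⟩ := hne k
    have hSoc : (interior (r i ∪ r k)).OrdConnected :=
      (h5 i k hik).isPreconnected.ordConnected
    have haS : a ∈ interior (r i ∪ r k) :=
      interior_mono Set.subset_union_left ha
    have hcS : c ∈ interior (r i ∪ r k) :=
      interior_mono Set.subset_union_right hc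
    have hpS : p ∈ interior (r i ∪ r k) :=
      hSoc.out haS hcS ⟨(hLij a ha p hp).le, (hLjk p hp c hc).le⟩
    have hpU : p ∈ r i ∪ r k := interior_subset hpS
    rcases hpU with h | h
    · rw [h1 i] at h; exact hpci h
    · rw [h1 k] at h; exact hpck h
  have ne01 : (0 : Fin 3) ≠ 1 := by decide
  have ne12 : (1 : Fin 3) ≠ 2 := by decide
  have ne02 : (0 : Fin 3) ≠ 2 := by decide
  rcases tri 0 1 ne01 with h01 | h10 <;> rcases tri 1 2 ne12 with h12 | h21 <;>
    rcases tri 0 2 ne02 with h02 | h20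
  · exact main 0 1 2 ne01 ne12 ne02 h01 h12
  · exact main 0 1 2 ne01 ne12 ne02 h01 h12
  · exact main 0 2 1 ne02 ne12.symm ne01 h02 h21
  · exact main 2 0 1 ne02.symm ne01 ne12.symm h20 h01
  · exact main 1 0 2 ne01.symm ne02 ne12 h10 h02
  · exact main 1 2 0 ne12 ne02.symm ne01.symm h12 h20
  · exact main 2 1 0 ne12.symm ne01.symm ne02.symm h21 h10
  · exact main 2 1 0 ne12.symm ne01.symm ne02.symm h21 h10
end

section
/- For every n ≥ 2 there exist three regular closed subsets r₁, r₂, r₃ of ℝⁿ, each nonempty with connected interior and pairwise disjoint interiors, such that each union rᵢ ∪ rⱼ for i ≠ j has connected interior. -/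
open Set Function

/-- A closed convex set with nonempty interior is regular closed. -/
lemma convex_regular_closed {E : Type*} [AddCommGroup E] [Module ℝ E]
    [TopologicalSpace E] [IsTopologicalAddGroup E] [ContinuousSMul ℝ E]
    {s : Set E} (hs : Convex ℝ s) (hcl : IsClosed s) (hne : (interior s).Nonempty) :
    s = closure (interior s) := by
  refine Subset.antisymm ?_ (hcl.closure_interior_subset)
  obtain ⟨y, hy⟩ := hne
  intro x hx
  have htend : Filter.Tendsto (fun t : ℝ => x + t • (y - x)) (nhdsWithin 0 (Ioi 0)) (nhds x) := by
    have hc : Continuous (fun t : ℝ => x + t • (y - x)) := by fun_prop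
    have h := hc.tendsto 0
    simp only [zero_smul, add_zero] at h
    exact h.mono_left nhdsWithin_le_nhds
  refine mem_closure_of_tendsto htend ?_
  filter_upwards [Ioc_mem_nhdsGT_of_mem (by exact ⟨le_refl 0, zero_lt_one⟩)] with t ht
  exact hs.add_smul_sub_mem_interior hx hy ht

lemma eval_interior {n : ℕ} (i : Fin n) (s : Set ℝ) :
    interior ((Function.eval i : (Fin n → ℝ) → ℝ) ⁻¹' s) = Function.eval i ⁻¹' interior s :=
  ((isOpenMap_eval (X := fun _ : Fin n => ℝ) i).preimage_interior_eq_interior_preimage (continuous_apply i) s).symm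

lemma eval_closure {n : ℕ} (i : Fin n) (s : Set ℝ) :
    closure ((Function.eval i : (Fin n → ℝ) → ℝ) ⁻¹' s) = Function.eval i ⁻¹' closure s :=
  ((isOpenMap_eval (X := fun _ : Fin n => ℝ) i).preimage_closure_eq_closure_preimage (continuous_apply i) s).symm

/-- For every `n ≥ 2` there exist three nonempty regular closed subsets of `ℝⁿ` with
pairwise disjoint connected interiors such that each pairwise union has connected
interior. -/
theorem three_interior_connected_contact (n : ℕ) (hn : 2 ≤ n) :
    ∃ r : Fin 3 → Set (Fin n → ℝ),
      (∀ i, r i = closure (interior (r i))) ∧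
      (∀ i, (r i).Nonempty) ∧
      (∀ i, IsConnected (interior (r i))) ∧
      (∀ i j, i ≠ j → interior (r i) ∩ interior (r j) = ∅) ∧
      (∀ i j, i ≠ j → IsConnected (interior (r i ∪ r j))) := by
  classical
  have h0 : (0 : ℕ) < n := by omega
  have h1 : (1 : ℕ) < n := by omega
  set i0 : Fin n := ⟨0, h0⟩ with hi0
  set i1 : Fin n := ⟨1, h1⟩ with hi1
  have h01 : i0 ≠ i1 := by simp [hi0, hi1, Fin.ext_iff]
  have lin0 : IsLinearMap ℝ (fun x : Fin n → ℝ => x i0) := ⟨fun _ _ => rfl, fun _ _ => rfl⟩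
  have lin1 : IsLinearMap ℝ (fun x : Fin n → ℝ => x i1) := ⟨fun _ _ => rfl, fun _ _ => rfl⟩
  set A : Set (Fin n → ℝ) := Function.eval i0 ⁻¹' Iic (0:ℝ) with hA
  set B : Set (Fin n → ℝ) :=
    Function.eval i0 ⁻¹' Ici (0:ℝ) ∩ Function.eval i1 ⁻¹' Iic (0:ℝ) with hB
  set C : Set (Fin n → ℝ) :=
    Function.eval i0 ⁻¹' Ici (0:ℝ) ∩ Function.eval i1 ⁻¹' Ici (0:ℝ) with hC
  -- interiors
  have intA : interior A = Function.eval i0 ⁻¹' Iio (0:ℝ) := by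
    rw [hA, eval_interior, interior_Iic]
  have intB : interior B =
      Function.eval i0 ⁻¹' Ioi (0:ℝ) ∩ Function.eval i1 ⁻¹' Iio (0:ℝ) := by
    rw [hB, interior_inter, eval_interior, eval_interior, interior_Ici, interior_Iic]
  have intC : interior C =
      Function.eval i0 ⁻¹' Ioi (0:ℝ) ∩ Function.eval i1 ⁻¹' Ioi (0:ℝ) := by
    rw [hC, interior_inter, eval_interior, eval_interior, interior_Ici]
  -- witness points
  set pA : Fin n → ℝ := fun _ => -1 with hpA
  set pB : Fin n → ℝ := fun j => if j = i0 then 1 else -1 with hpB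
  set pC : Fin n → ℝ := fun _ => 1 with hpC
  have pA_mem : pA ∈ interior A := by
    rw [intA]; simp [hpA]
  have pB_mem : pB ∈ interior B := by
    rw [intB]
    constructor
    · show pB i0 ∈ Ioi (0:ℝ); simp [hpB]
    · show pB i1 ∈ Iio (0:ℝ); simp [hpB, h01.symm]
  have pC_mem : pC ∈ interior C := by
    rw [intC]
    constructor
    · show pC i0 ∈ Ioi (0:ℝ); simp [hpC]
    · show pC i1 ∈ Ioi (0:ℝ); simp [hpC]
  -- convexity
  have convB : Convex ℝ B := (convex_halfSpace_ge lin0 0).inter (convex_halfSpace_le lin1 0)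
  have convC : Convex ℝ C := (convex_halfSpace_ge lin0 0).inter (convex_halfSpace_ge lin1 0)
  -- regularity
  have regA : A = closure (interior A) := by
    rw [intA, eval_closure, closure_Iio]
  have regB : B = closure (interior B) :=
    convex_regular_closed convB
      ((isClosed_Ici.preimage (continuous_apply i0)).inter
        (isClosed_Iic.preimage (continuous_apply i1))) ⟨pB, pB_mem⟩
  have regC : C = closure (interior C) :=
    convex_regular_closed convC
      ((isClosed_Ici.preimage (continuous_apply i0)).inter
        (isClosed_Ici.preimage (continuous_apply i1))) ⟨pC, pC_mem⟩
  -- connectedness of interiors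
  have connA : IsConnected (interior A) := by
    rw [intA]
    exact ⟨⟨pA, by simp [hpA]⟩, (convex_halfSpace_lt lin0 0).isPreconnected⟩
  have connB : IsConnected (interior B) := by
    refine ⟨⟨pB, pB_mem⟩, ?_⟩
    rw [intB]
    exact ((convex_halfSpace_gt lin0 0).inter (convex_halfSpace_lt lin1 0)).isPreconnected
  have connC : IsConnected (interior C) := by
    refine ⟨⟨pC, pC_mem⟩, ?_⟩
    rw [intC]
    exact ((convex_halfSpace_gt lin0 0).inter (convex_halfSpace_gt lin1 0)).isPreconnected
  -- disjointness
  have disjAB : interior A ∩ interior B = ∅ := by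
    rw [intA, intB, eq_empty_iff_forall_notMem]
    rintro x ⟨hx1, hx2, -⟩
    simp only [mem_preimage, mem_Iio, mem_Ioi, Function.eval] at hx1 hx2
    linarith
  have disjAC : interior A ∩ interior C = ∅ := by
    rw [intA, intC, eq_empty_iff_forall_notMem]
    rintro x ⟨hx1, hx2, -⟩
    simp only [mem_preimage, mem_Iio, mem_Ioi, Function.eval] at hx1 hx2
    linarith
  have disjBC : interior B ∩ interior C = ∅ := by
    rw [intB, intC, eq_empty_iff_forall_notMem]
    rintro x ⟨⟨-, hx1⟩, -, hx2⟩
    simp only [mem_preimage, mem_Iio, mem_Ioi, Function.eval] at hx1 hx2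
    linarith
  -- union B ∪ C
  have hBC : B ∪ C = Function.eval i0 ⁻¹' Ici (0:ℝ) := by
    rw [hB, hC, ← inter_union_distrib_left]
    have : Function.eval (β := fun _ : Fin n => ℝ) i1 ⁻¹' Iic (0:ℝ)
        ∪ Function.eval i1 ⁻¹' Ici (0:ℝ) = univ := by
      rw [← preimage_union, Iic_union_Ici, preimage_univ]
    rw [this, inter_univ]
  have connBC : IsConnected (interior (B ∪ C)) := by
    rw [hBC, eval_interior, interior_Ici]
    exact ⟨⟨pC, by simp [hpC]⟩, (convex_halfSpace_gt lin0 0).isPreconnected⟩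
  -- sandwich lemma for the other two unions
  have sandwich : ∀ (U S : Set (Fin n → ℝ)), IsPreconnected U → IsOpen U → U ⊆ S →
      S ⊆ closure U → U.Nonempty → IsConnected (interior S) := by
    intro U S hUc hUo hUS hScl ⟨u, hu⟩
    have hUi : U ⊆ interior S := hUo.subset_interior_iff.mpr hUS
    exact ⟨⟨u, hUi hu⟩, hUc.subset_closure hUi (interior_subset.trans hScl)⟩
  -- union A ∪ B
  have connAB : IsConnected (interior (A ∪ B)) := by
    set U : Set (Fin n → ℝ) :=
      Function.eval i0 ⁻¹' Iio (0:ℝ) ∪ Function.eval i1 ⁻¹' Iio (0:ℝ) with hU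
    refine sandwich U (A ∪ B) ?_ ?_ ?_ ?_ ⟨pA, Or.inl (by simp [hpA])⟩
    · exact IsPreconnected.union pA (by simp [hpA]) (by simp [hpA])
        (convex_halfSpace_lt lin0 0).isPreconnected (convex_halfSpace_lt lin1 0).isPreconnected
    · exact (isOpen_Iio.preimage (continuous_apply i0)).union
        (isOpen_Iio.preimage (continuous_apply i1))
    · rintro x (hx | hx)
      · exact Or.inl (show x i0 ≤ (0:ℝ) from le_of_lt hx)
      · rcases le_or_gt (x i0) 0 with h | h
        · exact Or.inl (show x i0 ≤ (0:ℝ) from h)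
        · exact Or.inr ⟨show (0:ℝ) ≤ x i0 from le_of_lt h,
            show x i1 ≤ (0:ℝ) from le_of_lt (show x i1 < (0:ℝ) from hx)⟩
    · rintro x (hx | hx)
      · have : x ∈ closure (Function.eval (β := fun _ : Fin n => ℝ) i0 ⁻¹' Iio (0:ℝ)) := by
          rw [eval_closure, closure_Iio]; exact hx
        exact closure_mono subset_union_left this
      · have : x ∈ closure (Function.eval (β := fun _ : Fin n => ℝ) i1 ⁻¹' Iio (0:ℝ)) := by
          rw [eval_closure, closure_Iio]; exact hx.2
        exact closure_mono subset_union_right this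
  -- union A ∪ C
  have connAC : IsConnected (interior (A ∪ C)) := by
    set q : Fin n → ℝ := fun j => if j = i1 then 1 else -1 with hq
    have hq0 : q i0 < 0 := by simp [hq, h01]
    have hq1 : (0:ℝ) < q i1 := by simp [hq]
    set U : Set (Fin n → ℝ) :=
      Function.eval i0 ⁻¹' Iio (0:ℝ) ∪ Function.eval i1 ⁻¹' Ioi (0:ℝ) with hU
    refine sandwich U (A ∪ C) ?_ ?_ ?_ ?_ ⟨q, Or.inl hq0⟩
    · exact IsPreconnected.union q hq0 hq1
        (convex_halfSpace_lt lin0 0).isPreconnected (convex_halfSpace_gt lin1 0).isPreconnected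
    · exact (isOpen_Iio.preimage (continuous_apply i0)).union
        (isOpen_Ioi.preimage (continuous_apply i1))
    · rintro x (hx | hx)
      · exact Or.inl (show x i0 ≤ (0:ℝ) from le_of_lt hx)
      · rcases le_or_gt (x i0) 0 with h | h
        · exact Or.inl (show x i0 ≤ (0:ℝ) from h)
        · exact Or.inr ⟨show (0:ℝ) ≤ x i0 from le_of_lt h,
            show (0:ℝ) ≤ x i1 from le_of_lt (show (0:ℝ) < x i1 from hx)⟩
    · rintro x (hx | hx)
      · have : x ∈ closure (Function.eval (β := fun _ : Fin n => ℝ) i0 ⁻¹' Iio (0:ℝ)) := by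
          rw [eval_closure, closure_Iio]; exact hx
        exact closure_mono subset_union_left this
      · have : x ∈ closure (Function.eval (β := fun _ : Fin n => ℝ) i1 ⁻¹' Ioi (0:ℝ)) := by
          rw [eval_closure, closure_Ioi]; exact hx.2
        exact closure_mono subset_union_right this
  refine ⟨![A, B, C], ?_, ?_, ?_, ?_, ?_⟩
  · intro i; fin_cases i
    · exact regA
    · exact regB
    · exact regC
  · intro i; fin_cases i
    · exact ⟨pA, interior_subset pA_mem⟩
    · exact ⟨pB, interior_subset pB_mem⟩
    · exact ⟨pC, interior_subset pC_mem⟩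
  · intro i; fin_cases i
    · exact connA
    · exact connB
    · exact connC
  · intro i j hij; fin_cases i <;> fin_cases j <;>
      first
      | exact absurd rfl hij
      | exact disjAB
      | exact disjAC
      | exact disjBC
      | (rw [inter_comm]; first | exact disjAB | exact disjAC | exact disjBC)
  · intro i j hij; fin_cases i <;> fin_cases j <;>
      first
      | exact absurd rfl hij
      | exact connAB
      | exact connAC
      | exact connBC
      | (rw [union_comm]; first | exact connAB | exact connAC | exact connBC)
end

section
/- In a 2-quasi-saw (W,R) with the Aleksandrov topology, a regular closed subset X ⊆ W is connected if and only if its interior is connected. -/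
/-- The Aleksandrov topology of a relation `R`: open sets are the `R`-upward closed
sets. -/
def aleksandrov (W : Type*) (R : W → W → Prop) : TopologicalSpace W where
  IsOpen X := ∀ x ∈ X, ∀ y, R x y → y ∈ X
  isOpen_univ := fun _ _ _ _ => trivial
  isOpen_inter := fun s t hs ht x hx y hxy =>
    ⟨hs x hx.1 y hxy, ht x hx.2 y hxy⟩
  isOpen_sUnion := fun S hS x hx y hxy => by
    rcases hx with ⟨s, hsS, hxs⟩
    exact ⟨s, hsS, hS s hsS x hxs y hxy⟩

/-- `x` has depth 0 in `(W, R)`: it has no proper `R`-successor. -/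
def depthZero {W : Type*} (R : W → W → Prop) (x : W) : Prop := ∀ y, R x y → y = x

/-- In a 2-quasi-saw (a quasi-saw in which no point has more than two proper
`R`-successors) with the Aleksandrov topology, a regular closed set is connected iff its
interior is connected. -/
theorem twoQuasiSaw_regularClosed_connected_iff_interior_connected
    (W : Type*) (R : W → W → Prop)
    (hrefl : ∀ x, R x x)
    (htrans : ∀ x y z, R x y → R y z → R x z)
    (hanti : ∀ x y, R x y → R y x → x = y)
    (hqs : ∀ x, depthZero R x ∨ (∀ y, R x y → y = x ∨ depthZero R y))
    (h2 : ∀ x y z w, R x y → R x z → R x w → y ≠ x → z ≠ x → w ≠ x →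
      y = z ∨ y = w ∨ z = w)
    (X : Set W) :
    letI : TopologicalSpace W := aleksandrov W R
    X = closure (interior X) → (IsConnected X ↔ IsConnected (interior X)) := by
  intro hX
  letI : TopologicalSpace W := aleksandrov W R
  -- basic facts about the Aleksandrov topology
  have hopen' : ∀ S : Set W, IsOpen S → ∀ x ∈ S, ∀ y, R x y → y ∈ S := fun S h => h
  -- closure: every point of the closure has a successor in the set
  have hclos : ∀ S : Set W, ∀ x ∈ closure S, ∃ y, R x y ∧ y ∈ S := by
    intro S x hx
    have hC : IsClosed {x | ∃ y, R x y ∧ y ∈ S} := by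
      rw [← isOpen_compl_iff]
      intro a ha b hab hb
      obtain ⟨w, hbw, hwS⟩ := hb
      exact ha ⟨w, htrans a b w hab hbw, hwS⟩
    have hsub : S ⊆ {x | ∃ y, R x y ∧ y ∈ S} := fun y hy => ⟨y, hrefl y, hy⟩
    exact closure_minimal hsub hC hx
  -- interior: a point whose up-set is contained in X is in the interior
  have hint : ∀ x, (∀ y, R x y → y ∈ X) → x ∈ interior X := by
    intro x hx
    have : IsOpen {z | ∀ y, R z y → y ∈ X} := by
      intro a ha b hab c hbc
      exact ha c (htrans a b c hab hbc)
    have hsub : {z | ∀ y, R z y → y ∈ X} ⊆ X := fun z hz => hz z (hrefl z)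
    exact interior_maximal hsub this hx
  set U := interior X with hU
  constructor
  · -- hard direction: X connected → U connected
    intro hXc
    have hUne : U.Nonempty := by
      rcases hXc.1 with ⟨x, hx⟩
      by_contra he
      rw [Set.not_nonempty_iff_eq_empty] at he
      rw [hX, he, closure_empty] at hx
      exact hx
    refine ⟨hUne, ?_⟩
    intro u v hu hv hUuv ⟨a, haU, hau⟩ ⟨b, hbU, hbv⟩
    by_contra hE
    rw [Set.not_nonempty_iff_eq_empty] at hE
    -- the two extended open sets
    set A : Set W := {x | ∀ y, R x y → y ∉ U ∩ v} with hA
    set B : Set W := {x | ∀ y, R x y → y ∉ U ∩ u} with hB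
    have hAopen : IsOpen A := by
      intro x hx y hxy z hyz
      exact hx z (htrans x y z hxy hyz)
    have hBopen : IsOpen B := by
      intro x hx y hxy z hyz
      exact hx z (htrans x y z hxy hyz)
    have hu' : IsOpen (u ∪ A) := hu.union hAopen
    have hv' : IsOpen (v ∪ B) := hv.union hBopen
    -- cover
    have hcover : X ⊆ (u ∪ A) ∪ (v ∪ B) := by
      intro x hxX
      by_cases hxU : x ∈ U
      · rcases hUuv hxU with h | h
        · exact Or.inl (Or.inl h)
        · exact Or.inr (Or.inl h)
      · by_cases hxA : x ∈ A
        · exact Or.inl (Or.inr hxA)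
        by_cases hxB : x ∈ B
        · exact Or.inr (Or.inr hxB)
        exfalso
        -- x ∈ X \ U : it has a successor outside X
        have hy0 : ∃ y, R x y ∧ y ∉ X := by
          by_contra hc
          push_neg at hc
          exact hxU (hint x hc)
        rcases hy0 with ⟨y0, hxy0, hy0X⟩
        simp only [hA, Set.mem_setOf_eq] at hxA
        simp only [hB, Set.mem_setOf_eq] at hxB
        push_neg at hxA hxB
        rcases hxA with ⟨z1, hxz1, hz1⟩
        rcases hxB with ⟨z2, hxz2, hz2⟩
        have hz1x : z1 ≠ x := fun h => hxU (h ▸ hz1.1)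
        have hz2x : z2 ≠ x := fun h => hxU (h ▸ hz2.1)
        have hy0x : y0 ≠ x := fun h => hy0X (h ▸ hxX)
        rcases h2 x z1 z2 y0 hxz1 hxz2 hxy0 hz1x hz2x hy0x with h | h | h
        · have : z1 ∈ U ∩ (u ∩ v) := ⟨hz1.1, h ▸ hz2.2, hz1.2⟩
          rw [hE] at this; exact this
        · exact hy0X (h ▸ interior_subset hz1.1)
        · exact hy0X (h ▸ interior_subset hz2.1)
    -- separation
    have hsep : X ∩ ((u ∪ A) ∩ (v ∪ B)) = ∅ := by
      apply Set.eq_empty_iff_forall_notMem.mpr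
      rintro x ⟨hxX, hxu', hxv'⟩
      have hxcl : x ∈ closure U := hX ▸ hxX
      rcases hclos U x hxcl with ⟨z, hxz, hzU⟩
      rcases hxu' with hxu | hxA
      · have hzu : z ∈ u := hopen' u hu x hxu z hxz
        rcases hxv' with hxv | hxB
        · have hzv : z ∈ v := hopen' v hv x hxv z hxz
          have : z ∈ U ∩ (u ∩ v) := ⟨hzU, hzu, hzv⟩
          rw [hE] at this; exact this
        · exact hxB z hxz ⟨hzU, hzu⟩
      · rcases hxv' with hxv | hxB
        · have hzv : z ∈ v := hopen' v hv x hxv z hxz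
          exact hxA z hxz ⟨hzU, hzv⟩
        · rcases hUuv hzU with h | h
          · exact hxB z hxz ⟨hzU, h⟩
          · exact hxA z hxz ⟨hzU, h⟩
    have hane : (X ∩ (u ∪ A)).Nonempty :=
      ⟨a, interior_subset haU, Or.inl hau⟩
    have hbne : (X ∩ (v ∪ B)).Nonempty :=
      ⟨b, interior_subset hbU, Or.inl hbv⟩
    rcases hXc.2 (u ∪ A) (v ∪ B) hu' hv' hcover hane hbne with ⟨x, hx⟩
    rw [hsep] at hx
    exact hx
  · -- easy direction: U connected → X connected
    intro hUc
    rw [hX]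
    exact hUc.closure
end

section
/- There exist three regular closed subsets r₁, r₂, r₃ of ℝ² such that each rᵢ has connected interior, the union r₁ ∪ r₂ ∪ r₃ has connected interior, but neither r₁ ∪ r₂ nor r₁ ∪ r₃ has connected interior. -/
open Filter Set Topology

namespace Wiggly

abbrev Pt := Fin 2 → ℝ

/-- The "wiggly" boundary function: oscillates between `±(1-x)` as `x → 0⁺`. -/
noncomputable def f (x : ℝ) : ℝ := (1 - x) * Real.sin x⁻¹

/-- Open region strictly between two graphs over `(0,1)`. -/
def reg (a b : ℝ → ℝ) : Set Pt :=
  {p | 0 < p 0 ∧ p 0 < 1 ∧ a (p 0) < p 1 ∧ p 1 < b (p 0)}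

def L : Set Pt := {p | p 0 < 0}
def r1 : Set Pt := {p | p 0 ≤ 0}
noncomputable def A2 : Set Pt := reg f (fun _ => 1)
noncomputable def A3 : Set Pt := reg (fun _ => -1) f

def Obelow : Set Pt := {p | 0 < p 0 ∧ p 1 < f (p 0)}
def Oabove : Set Pt := {p | 0 < p 0 ∧ f (p 0) < p 1}
def Otop : Set Pt := {p | 0 < p 0 ∧ 1 < p 1}
def Obot : Set Pt := {p | 0 < p 0 ∧ p 1 < -1}
def Oright : Set Pt := {p | 1 < p 0}
def V : Set Pt := {p : Pt | p 0 < 1} ∩ ({p : Pt | -1 < p 1} ∩ {p : Pt | p 1 < 1})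

noncomputable def eps (k : ℕ) : ℝ := 1/((k:ℝ)+1)

lemma eps_pos (k : ℕ) : 0 < eps k := by unfold eps; positivity

lemma eps_le_one (k : ℕ) : eps k ≤ 1 := by
  rw [eps, div_le_one (by positivity)]
  linarith [Nat.cast_nonneg (α := ℝ) k]

lemma eps_tendsto : Tendsto eps atTop (𝓝 0) := tendsto_one_div_add_atTop_nhds_zero_nat

lemma lin0 : IsLinearMap ℝ (fun p : Pt => p 0) := ⟨fun _ _ => rfl, fun _ _ => rfl⟩
lemma lin1 : IsLinearMap ℝ (fun p : Pt => p 1) := ⟨fun _ _ => rfl, fun _ _ => rfl⟩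

lemma tendsto_pair {a b : ℕ → ℝ} {p : Pt}
    (ha : Tendsto a atTop (𝓝 (p 0))) (hb : Tendsto b atTop (𝓝 (p 1))) :
    Tendsto (fun k => (![a k, b k] : Pt)) atTop (𝓝 p) := by
  rw [tendsto_pi_nhds]
  intro i
  fin_cases i <;> simpa

lemma mem_closure_seq {s : Set Pt} {p : Pt} (a b : ℕ → ℝ)
    (hmem : ∀ k, (![a k, b k] : Pt) ∈ s)
    (ha : Tendsto a atTop (𝓝 (p 0))) (hb : Tendsto b atTop (𝓝 (p 1))) :
    p ∈ closure s :=
  mem_closure_of_tendsto (tendsto_pair ha hb) (Filter.Eventually.of_forall hmem)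

/-- If an open set `O` is disjoint from `A`, then no point of `closure O` is in the
interior of `closure A`. -/
lemma not_mem_interior_closure {A O : Set Pt} {p : Pt} (hO : IsOpen O)
    (hd : ∀ q ∈ O, q ∉ A) (hp : p ∈ closure O) : p ∉ interior (closure A) := by
  intro hint
  have hAO : closure A ⊆ Oᶜ :=
    closure_minimal (fun x hx hxO => hd x hxO hx) hO.isClosed_compl
  obtain ⟨q, hq1, hq2⟩ := mem_closure_iff.mp hp _ isOpen_interior hint
  exact hAO (interior_subset hq1) hq2

lemma f_abs_le {x : ℝ} (h1 : x ≤ 1) : |f x| ≤ 1 - x := by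
  rw [f, abs_mul, abs_of_nonneg (by linarith : (0:ℝ) ≤ 1 - x)]
  calc (1-x) * |Real.sin x⁻¹| ≤ (1-x) * 1 :=
        mul_le_mul_of_nonneg_left (Real.abs_sin_le_one _) (by linarith)
    _ = 1 - x := mul_one _

lemma f_lt_one {x : ℝ} (h0 : 0 < x) (h1 : x < 1) : f x < 1 := by
  have h := abs_le.mp (f_abs_le h1.le)
  linarith [h.2]

lemma neg_one_lt_f {x : ℝ} (h0 : 0 < x) (h1 : x < 1) : -1 < f x := by
  have h := abs_le.mp (f_abs_le h1.le)
  linarith [h.1]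

lemma f_continuousAt {x : ℝ} (hx : x ≠ 0) : ContinuousAt f x := by
  have h1 : ContinuousAt (fun y : ℝ => y⁻¹) x := continuousAt_inv₀ hx
  exact (continuousAt_const.sub continuousAt_id).mul
    (Real.continuous_sin.continuousAt.comp h1)

lemma contOn_f_Ioo : ContinuousOn f (Ioo 0 1) := fun x hx =>
  (f_continuousAt (ne_of_gt hx.1)).continuousWithinAt

lemma contOn_f0 : ContinuousOn (fun p : Pt => f (p 0)) {p : Pt | 0 < p 0} := by
  intro p hp
  have h0 : ContinuousAt (fun q : Pt => q 0) p := (continuous_apply 0).continuousAt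
  exact (ContinuousAt.comp (x := p) (f_continuousAt (ne_of_gt hp)) h0).continuousWithinAt

lemma isOpen_half0 : IsOpen {p : Pt | 0 < p 0} := isOpen_lt continuous_const (continuous_apply 0)

lemma isOpen_L : IsOpen L := isOpen_lt (continuous_apply 0) continuous_const

lemma isOpen_sub_pos {g h : Pt → ℝ} (hg : ContinuousOn g {p : Pt | 0 < p 0})
    (hh : ContinuousOn h {p : Pt | 0 < p 0}) :
    IsOpen {p : Pt | 0 < p 0 ∧ g p < h p} := by
  have key := ContinuousOn.isOpen_inter_preimage (t := Ioi (0:ℝ)) (hh.sub hg) isOpen_half0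
    isOpen_Ioi
  convert key using 1
  ext p
  simp only [mem_setOf_eq, mem_inter_iff, mem_preimage, mem_Ioi, Pi.sub_apply, sub_pos]

lemma isOpen_Obelow : IsOpen Obelow :=
  isOpen_sub_pos (continuous_apply 1).continuousOn contOn_f0

lemma isOpen_Oabove : IsOpen Oabove :=
  isOpen_sub_pos contOn_f0 (continuous_apply 1).continuousOn

lemma isOpen_Otop : IsOpen Otop :=
  isOpen_sub_pos continuousOn_const (continuous_apply 1).continuousOn

lemma isOpen_Obot : IsOpen Obot :=
  isOpen_sub_pos (continuous_apply 1).continuousOn continuousOn_const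

lemma isOpen_Oright : IsOpen Oright := isOpen_lt continuous_const (continuous_apply 0)

lemma isOpen_V : IsOpen V :=
  (isOpen_lt (continuous_apply 0) continuous_const).inter
    ((isOpen_lt continuous_const (continuous_apply 1)).inter
      (isOpen_lt (continuous_apply 1) continuous_const))

lemma isOpen_reg {a b : ℝ → ℝ}
    (ha : ContinuousOn (fun p : Pt => a (p 0)) {p : Pt | 0 < p 0})
    (hb : ContinuousOn (fun p : Pt => b (p 0)) {p : Pt | 0 < p 0}) :
    IsOpen (reg a b) := by
  have h1 := isOpen_sub_pos ha (continuous_apply 1).continuousOn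
  have h2 := isOpen_sub_pos (continuous_apply 1).continuousOn hb
  have h3 : IsOpen {p : Pt | p 0 < 1} := isOpen_lt (continuous_apply 0) continuous_const
  have h4 : reg a b = ({p : Pt | 0 < p 0 ∧ a (p 0) < p 1} ∩ {p : Pt | 0 < p 0 ∧ p 1 < b (p 0)})
      ∩ {p : Pt | p 0 < 1} := by
    ext p
    simp only [reg, mem_setOf_eq, mem_inter_iff]
    tauto
  rw [h4]
  exact (h1.inter h2).inter h3

lemma isOpen_A2 : IsOpen A2 := isOpen_reg contOn_f0 continuousOn_const

lemma isOpen_A3 : IsOpen A3 := isOpen_reg continuousOn_const contOn_f0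

lemma isConnected_reg {a b : ℝ → ℝ} (ha : ContinuousOn a (Ioo 0 1))
    (hb : ContinuousOn b (Ioo 0 1))
    (hab : ∀ x ∈ Ioo (0:ℝ) 1, a x < b x) : IsConnected (reg a b) := by
  set m : ℝ → ℝ := fun x => (a x + b x) / 2 with hm
  have hmem : ∀ x ∈ Ioo (0:ℝ) 1, (![x, m x] : Pt) ∈ reg a b := by
    intro x hx
    have h := hab x hx
    refine ⟨?_, ?_, ?_, ?_⟩ <;>
      simp only [Matrix.cons_val_zero, Matrix.cons_val_one, Matrix.head_cons, hm]
    · exact hx.1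
    · exact hx.2
    · linarith
    · linarith
  have hhalf : (1/2 : ℝ) ∈ Ioo (0:ℝ) 1 := by norm_num
  have hcm : ContinuousOn m (Ioo 0 1) := (ha.add hb).div_const 2
  refine ⟨⟨![1/2, m (1/2)], hmem _ hhalf⟩, ?_⟩
  apply isPreconnected_of_forall (![1/2, m (1/2)] : Pt)
  rintro y ⟨hy0, hy1, hya, hyb⟩
  set t := y 0 with ht
  have htI : t ∈ Ioo (0:ℝ) 1 := ⟨hy0, hy1⟩
  have hsub : uIcc t (1/2) ⊆ Ioo (0:ℝ) 1 := by
    rw [uIcc]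
    exact Icc_subset_Ioo (lt_min htI.1 hhalf.1) (max_lt htI.2 hhalf.2)
  set M : Set Pt := (fun s => (![s, m s] : Pt)) '' uIcc t (1/2) with hM
  have hMsub : M ⊆ reg a b := by
    rintro _ ⟨s, hs, rfl⟩
    exact hmem s (hsub hs)
  have hMconn : IsPreconnected M := by
    apply isPreconnected_uIcc.image
    apply ContinuousOn.mono (s := Ioo (0:ℝ) 1) ?_ hsub
    apply continuousOn_pi.mpr
    intro i
    fin_cases i
    · simpa using continuousOn_id' (α := ℝ) (s := Ioo (0:ℝ) 1)
    · simpa using hcm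
  set F : Set Pt := {p : Pt | p 0 = t} ∩ ({p : Pt | a t < p 1} ∩ {p : Pt | p 1 < b t}) with hF
  have hFconv : Convex ℝ F :=
    (convex_hyperplane lin0 t).inter ((convex_halfSpace_gt lin1 (a t)).inter
      (convex_halfSpace_lt lin1 (b t)))
  have hFsub : F ⊆ reg a b := by
    rintro p ⟨hp0, hpa, hpb⟩
    exact ⟨hp0 ▸ htI.1, hp0 ▸ htI.2, hp0 ▸ hpa, hp0 ▸ hpb⟩
  have hcF : (![t, m t] : Pt) ∈ F := by
    have h := hab t htI
    refine ⟨by simp, ?_, ?_⟩ <;>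
      simp only [mem_setOf_eq, Matrix.cons_val_one, Matrix.head_cons, Matrix.cons_val_zero, hm] <;> linarith
  have hcM : (![t, m t] : Pt) ∈ M := ⟨t, left_mem_uIcc, rfl⟩
  refine ⟨F ∪ M, union_subset hFsub hMsub, ?_, Or.inl ⟨rfl, hya, hyb⟩, ?_⟩
  · exact Or.inr ⟨1/2, right_mem_uIcc, rfl⟩
  · exact IsPreconnected.union (![t, m t] : Pt) hcF hcM hFconv.isPreconnected hMconn

lemma isConnected_A2 : IsConnected A2 :=
  isConnected_reg contOn_f_Ioo continuousOn_const (fun x hx => f_lt_one hx.1 hx.2)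

lemma isConnected_A3 : IsConnected A3 :=
  isConnected_reg continuousOn_const contOn_f_Ioo (fun x hx => neg_one_lt_f hx.1 hx.2)

noncomputable def u (k : ℕ) : ℝ := (Real.pi/2 + (k+1 : ℕ) * (2*Real.pi))⁻¹
noncomputable def v (k : ℕ) : ℝ := (-(Real.pi/2) + (k+1 : ℕ) * (2*Real.pi))⁻¹

lemma u_pos (k : ℕ) : 0 < u k := by
  have h := Real.pi_gt_three
  apply inv_pos.mpr
  push_cast
  nlinarith [Nat.cast_nonneg (α := ℝ) k]

lemma v_pos (k : ℕ) : 0 < v k := by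
  have h := Real.pi_gt_three
  apply inv_pos.mpr
  push_cast
  nlinarith [Nat.cast_nonneg (α := ℝ) k]

lemma f_u (k : ℕ) : f (u k) = 1 - u k := by
  rw [f, u, inv_inv, Real.sin_add_nat_mul_two_pi, Real.sin_pi_div_two, mul_one]

lemma f_v (k : ℕ) : f (v k) = -(1 - v k) := by
  rw [f, v, inv_inv, Real.sin_add_nat_mul_two_pi, Real.sin_neg, Real.sin_pi_div_two]
  ring

lemma u_tendsto : Tendsto u atTop (𝓝 0) := by
  apply Tendsto.comp tendsto_inv_atTop_zero
  apply tendsto_atTop_mono (fun k => ?_) tendsto_natCast_atTop_atTop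
  have h := Real.pi_gt_three
  push_cast
  nlinarith [Nat.cast_nonneg (α := ℝ) k]

lemma v_tendsto : Tendsto v atTop (𝓝 0) := by
  apply Tendsto.comp tendsto_inv_atTop_zero
  apply tendsto_atTop_mono (fun k => ?_) tendsto_natCast_atTop_atTop
  have h := Real.pi_gt_three
  push_cast
  nlinarith [Nat.cast_nonneg (α := ℝ) k]

/-- Every point of the vertical axis with `p 1 ≤ 1` is a limit of points strictly below
the wiggly graph. -/
lemma zero_mem_closure_Obelow {p : Pt} (h0 : p 0 = 0) (h1 : p 1 ≤ 1) :
    p ∈ closure Obelow := by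
  apply mem_closure_seq (fun k => u k) (fun k => min (p 1) (1 - 2 * u k))
  · intro k
    constructor
    · simpa using u_pos k
    · simp only [Matrix.cons_val_zero, Matrix.cons_val_one, Matrix.head_cons]
      rw [f_u]
      calc min (p 1) (1 - 2 * u k) ≤ 1 - 2 * u k := min_le_right _ _
        _ < 1 - u k := by linarith [u_pos k]
  · rw [h0]; exact u_tendsto
  · have h : Tendsto (fun k => min (p 1) (1 - 2 * u k)) atTop
        (𝓝 (min (p 1) (1 - 2 * 0))) :=
      tendsto_const_nhds.min (tendsto_const_nhds.sub (u_tendsto.const_mul 2))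
    simpa [min_eq_left h1] using h

/-- Every point of the vertical axis with `-1 ≤ p 1` is a limit of points strictly above
the wiggly graph. -/
lemma zero_mem_closure_Oabove {p : Pt} (h0 : p 0 = 0) (h1 : -1 ≤ p 1) :
    p ∈ closure Oabove := by
  apply mem_closure_seq (fun k => v k) (fun k => max (p 1) (-1 + 2 * v k))
  · intro k
    constructor
    · simpa using v_pos k
    · simp only [Matrix.cons_val_zero, Matrix.cons_val_one, Matrix.head_cons]
      calc f (v k) = -1 + v k := by rw [f_v]; ring
        _ < -1 + 2 * v k := by linarith [v_pos k]
        _ ≤ max (p 1) (-1 + 2 * v k) := le_max_right _ _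
  · rw [h0]; exact v_tendsto
  · have h : Tendsto (fun k => max (p 1) (-1 + 2 * v k)) atTop
        (𝓝 (max (p 1) (-1 + 2 * 0))) :=
      tendsto_const_nhds.max (tendsto_const_nhds.add (v_tendsto.const_mul 2))
    simpa [max_eq_left h1] using h

lemma isClosed_r1 : IsClosed r1 := by
  unfold r1
  exact isClosed_le (continuous_apply 0) continuous_const

lemma L_subset_r1 : L ⊆ r1 := by
  intro q hq
  have h : q 0 < 0 := hq
  show q 0 ≤ 0
  exact h.le

lemma dPosL : ∀ q ∈ {p : Pt | 0 < p 0}, q ∉ L := by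
  intro q hq hL
  have h1 : 0 < q 0 := hq
  have h2 : q 0 < 0 := hL
  linarith

lemma negpt_mem_L : (![(-1:ℝ), 0] : Pt) ∈ L := by
  show (![(-1:ℝ), 0] : Pt) 0 < 0
  norm_num

lemma hr1 : closure L = r1 := by
  apply subset_antisymm
  · exact closure_minimal L_subset_r1 isClosed_r1
  · intro p hp
    have hp' : p 0 ≤ 0 := hp
    apply mem_closure_seq (fun k => p 0 - eps k) (fun _ => p 1)
    · intro k
      simp only [L, mem_setOf_eq, Matrix.cons_val_zero]
      have := eps_pos k
      linarith
    · simpa using tendsto_const_nhds.sub eps_tendsto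
    · exact tendsto_const_nhds

lemma int_r1 : interior r1 = L := by
  apply subset_antisymm
  · intro p hp
    have hple : p 0 ≤ 0 := interior_subset (s := r1) hp
    rcases lt_or_eq_of_le hple with h | h
    · exact h
    exfalso
    have hcl : p ∈ closure {q : Pt | 0 < q 0} := by
      apply mem_closure_seq (fun k => eps k) (fun _ => p 1)
      · intro k; simpa using eps_pos k
      · rw [h]; exact eps_tendsto
      · exact tendsto_const_nhds
    rw [← hr1] at hp
    exact not_mem_interior_closure isOpen_half0 dPosL hcl hp
  · exact interior_maximal L_subset_r1 isOpen_L

lemma closure_A2_sub : closure A2 ⊆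
    {p : Pt | 0 ≤ p 0} ∩ {p : Pt | p 0 ≤ 1} ∩ {p : Pt | -1 ≤ p 1} ∩ {p : Pt | p 1 ≤ 1}
      ∩ Obelowᶜ := by
  apply closure_minimal
  · rintro p ⟨h0, h1, hfa, hb⟩
    have hb' : p 1 < 1 := hb
    have hfgt := neg_one_lt_f h0 h1
    refine ⟨⟨⟨⟨h0.le, h1.le⟩, show (-1:ℝ) ≤ p 1 by linarith⟩, hb'.le⟩, ?_⟩
    rintro ⟨-, hlt⟩
    exact absurd hlt (not_lt.mpr hfa.le)
  · refine IsClosed.inter (IsClosed.inter (IsClosed.inter (IsClosed.inter ?_ ?_) ?_) ?_)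
      isOpen_Obelow.isClosed_compl
    · exact isClosed_le continuous_const (continuous_apply 0)
    · exact isClosed_le (continuous_apply 0) continuous_const
    · exact isClosed_le continuous_const (continuous_apply 1)
    · exact isClosed_le (continuous_apply 1) continuous_const

lemma closure_A3_sub : closure A3 ⊆
    {p : Pt | 0 ≤ p 0} ∩ {p : Pt | p 0 ≤ 1} ∩ {p : Pt | -1 ≤ p 1} ∩ {p : Pt | p 1 ≤ 1}
      ∩ Oaboveᶜ := by
  apply closure_minimal
  · rintro p ⟨h0, h1, hfa, hb⟩
    have hfa' : (-1:ℝ) < p 1 := hfa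
    have hflt := f_lt_one h0 h1
    refine ⟨⟨⟨⟨h0.le, h1.le⟩, hfa'.le⟩, show p 1 ≤ 1 by linarith⟩, ?_⟩
    rintro ⟨-, hlt⟩
    exact absurd hlt (not_lt.mpr hb.le)

  · refine IsClosed.inter (IsClosed.inter (IsClosed.inter (IsClosed.inter ?_ ?_) ?_) ?_)
      isOpen_Oabove.isClosed_compl
    · exact isClosed_le continuous_const (continuous_apply 0)
    · exact isClosed_le (continuous_apply 0) continuous_const
    · exact isClosed_le continuous_const (continuous_apply 1)
    · exact isClosed_le (continuous_apply 1) continuous_const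

lemma dObelowA2 : ∀ q ∈ Obelow, q ∉ A2 := by
  rintro q ⟨-, hq1⟩ ⟨-, -, ha, -⟩
  linarith

lemma dOaboveA3 : ∀ q ∈ Oabove, q ∉ A3 := by
  rintro q ⟨-, hq1⟩ ⟨-, -, -, hb⟩
  linarith

lemma dOrightA2 : ∀ q ∈ Oright, q ∉ A2 := by
  rintro q hq ⟨-, h1, -, -⟩
  exact absurd hq (not_lt.mpr h1.le)

lemma dOrightA3 : ∀ q ∈ Oright, q ∉ A3 := by
  rintro q hq ⟨-, h1, -, -⟩
  exact absurd hq (not_lt.mpr h1.le)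

lemma dOtopA2 : ∀ q ∈ Otop, q ∉ A2 := by
  rintro q ⟨-, hq1⟩ ⟨-, -, -, hb⟩
  have : q 1 < 1 := hb
  linarith

lemma dObotA3 : ∀ q ∈ Obot, q ∉ A3 := by
  rintro q ⟨-, hq1⟩ ⟨-, -, ha, -⟩
  have : (-1:ℝ) < q 1 := ha
  linarith

lemma int_r2 : interior (closure A2) = A2 := by
  apply subset_antisymm
  · intro p hp
    obtain ⟨⟨⟨⟨k0, k1⟩, km⟩, kq⟩, kng⟩ := closure_A2_sub (interior_subset hp)
    have k0' : (0:ℝ) ≤ p 0 := k0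
    have k1' : p 0 ≤ 1 := k1
    have kq' : p 1 ≤ 1 := kq
    by_contra hpA
    rcases eq_or_lt_of_le k0' with h0 | h0
    · exact not_mem_interior_closure isOpen_Obelow dObelowA2
        (zero_mem_closure_Obelow h0.symm kq') hp
    rcases eq_or_lt_of_le k1' with h1 | h1
    · have hcl : p ∈ closure Oright := by
        apply mem_closure_seq (fun k => p 0 + eps k) (fun _ => p 1)
        · intro k
          simp only [Oright, mem_setOf_eq, Matrix.cons_val_zero]
          have := eps_pos k
          linarith [h1.symm.le]
        · simpa using tendsto_const_nhds.add eps_tendsto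
        · exact tendsto_const_nhds
      exact not_mem_interior_closure isOpen_Oright dOrightA2 hcl hp
    have hge : f (p 0) ≤ p 1 := by
      by_contra hlt
      exact kng ⟨h0, not_le.mp hlt⟩
    rcases eq_or_lt_of_le hge with hf | hf
    · have hcl : p ∈ closure Obelow := by
        apply mem_closure_seq (fun _ => p 0) (fun k => p 1 - eps k)
        · intro k
          refine ⟨h0, ?_⟩
          simp only [Matrix.cons_val_zero, Matrix.cons_val_one, Matrix.head_cons]
          rw [← hf]
          linarith [eps_pos k]
        · exact tendsto_const_nhds
        · simpa using tendsto_const_nhds.sub eps_tendsto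
      exact not_mem_interior_closure isOpen_Obelow dObelowA2 hcl hp
    rcases eq_or_lt_of_le kq' with hq | hq
    · have hcl : p ∈ closure Otop := by
        apply mem_closure_seq (fun _ => p 0) (fun k => p 1 + eps k)
        · intro k
          refine ⟨h0, ?_⟩
          simp only [Matrix.cons_val_one, Matrix.head_cons, Matrix.cons_val_zero]
          linarith [eps_pos k, hq.ge]
        · exact tendsto_const_nhds
        · simpa using tendsto_const_nhds.add eps_tendsto
      exact not_mem_interior_closure isOpen_Otop dOtopA2 hcl hp
    · exact hpA ⟨h0, h1, hf, hq⟩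
  · exact interior_maximal subset_closure isOpen_A2

lemma int_r3 : interior (closure A3) = A3 := by
  apply subset_antisymm
  · intro p hp
    obtain ⟨⟨⟨⟨k0, k1⟩, km⟩, kq⟩, kng⟩ := closure_A3_sub (interior_subset hp)
    have k0' : (0:ℝ) ≤ p 0 := k0
    have k1' : p 0 ≤ 1 := k1
    have km' : (-1:ℝ) ≤ p 1 := km
    by_contra hpA
    rcases eq_or_lt_of_le k0' with h0 | h0
    · exact not_mem_interior_closure isOpen_Oabove dOaboveA3
        (zero_mem_closure_Oabove h0.symm km') hp
    rcases eq_or_lt_of_le k1' with h1 | h1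
    · have hcl : p ∈ closure Oright := by
        apply mem_closure_seq (fun k => p 0 + eps k) (fun _ => p 1)
        · intro k
          simp only [Oright, mem_setOf_eq, Matrix.cons_val_zero]
          have := eps_pos k
          linarith [h1.symm.le]
        · simpa using tendsto_const_nhds.add eps_tendsto
        · exact tendsto_const_nhds
      exact not_mem_interior_closure isOpen_Oright dOrightA3 hcl hp
    have hle : p 1 ≤ f (p 0) := by
      by_contra hlt
      exact kng ⟨h0, not_le.mp hlt⟩
    rcases eq_or_lt_of_le hle with hf | hf
    · have hcl : p ∈ closure Oabove := by
        apply mem_closure_seq (fun _ => p 0) (fun k => p 1 + eps k)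
        · intro k
          refine ⟨h0, ?_⟩
          simp only [Matrix.cons_val_zero, Matrix.cons_val_one, Matrix.head_cons]
          rw [← hf]
          linarith [eps_pos k]
        · exact tendsto_const_nhds
        · simpa using tendsto_const_nhds.add eps_tendsto
      exact not_mem_interior_closure isOpen_Oabove dOaboveA3 hcl hp
    rcases eq_or_lt_of_le km' with hq | hq
    · have hcl : p ∈ closure Obot := by
        apply mem_closure_seq (fun _ => p 0) (fun k => p 1 - eps k)
        · intro k
          refine ⟨h0, ?_⟩
          simp only [Matrix.cons_val_one, Matrix.head_cons, Matrix.cons_val_zero]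
          linarith [eps_pos k, hq.ge]
        · exact tendsto_const_nhds
        · simpa using tendsto_const_nhds.sub eps_tendsto
      exact not_mem_interior_closure isOpen_Obot dObotA3 hcl hp
    · exact hpA ⟨h0, h1, hq, hf⟩
  · exact interior_maximal subset_closure isOpen_A3

lemma mem_A2_half : (![1/2, 3/4] : Pt) ∈ A2 := by
  have h := abs_le.mp (f_abs_le (x := 1/2) (by norm_num))
  refine ⟨?_, ?_, ?_, ?_⟩ <;>
    simp only [Matrix.cons_val_zero, Matrix.cons_val_one, Matrix.head_cons]
  · norm_num
  · norm_num
  · linarith [h.2]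
  · show (3:ℝ)/4 < 1
    norm_num

lemma mem_A3_half : (![1/2, -3/4] : Pt) ∈ A3 := by
  have h := abs_le.mp (f_abs_le (x := 1/2) (by norm_num))
  refine ⟨?_, ?_, ?_, ?_⟩ <;>
    simp only [Matrix.cons_val_zero, Matrix.cons_val_one, Matrix.head_cons]
  · norm_num
  · norm_num
  · show (-1:ℝ) < -3/4
    norm_num
  · linarith [h.1]

lemma pair_not_conn_2 : ¬ IsConnected (interior (r1 ∪ closure A2)) := by
  have hsplit : r1 ∪ closure A2 = closure (L ∪ A2) := by rw [closure_union, hr1]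
  rintro ⟨hne, hpc⟩
  have hcov : interior (r1 ∪ closure A2) ⊆ {p : Pt | p 0 < 0} ∪ {p : Pt | 0 < p 0} := by
    intro p hp
    rcases lt_trichotomy (p 0) 0 with h | h | h
    · exact Or.inl h
    · exfalso
      rw [hsplit] at hp
      rcases le_or_gt (p 1) 1 with h1 | h1
      · refine not_mem_interior_closure isOpen_Obelow ?_
          (zero_mem_closure_Obelow h h1) hp
        rintro q ⟨hq0, hq1⟩ (hqL | hqA)
        · exact absurd hqL (not_lt.mpr hq0.le)
        · exact dObelowA2 q ⟨hq0, hq1⟩ hqA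
      · have hcl : p ∈ closure Otop := by
          apply mem_closure_seq (fun k => eps k) (fun _ => p 1)
          · intro k
            exact ⟨by simpa using eps_pos k, by simpa using h1⟩
          · rw [h]; exact eps_tendsto
          · exact tendsto_const_nhds
        refine not_mem_interior_closure isOpen_Otop ?_ hcl hp
        rintro q ⟨hq0, hq1⟩ (hqL | hqA)
        · exact absurd hqL (not_lt.mpr hq0.le)
        · exact dOtopA2 q ⟨hq0, hq1⟩ hqA
    · exact Or.inr h
  have hLsub : L ⊆ interior (r1 ∪ closure A2) :=
    interior_maximal (fun q hq => Or.inl (L_subset_r1 hq)) isOpen_L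
  have hL : (![(-1:ℝ), 0] : Pt) ∈ interior (r1 ∪ closure A2) := hLsub negpt_mem_L
  have hAsub : A2 ⊆ interior (r1 ∪ closure A2) :=
    interior_maximal (fun q hq => Or.inr (subset_closure hq)) isOpen_A2
  have hA : (![(1:ℝ)/2, 3/4] : Pt) ∈ interior (r1 ∪ closure A2) := hAsub mem_A2_half
  obtain ⟨q, -, hq1, hq2⟩ := hpc {p : Pt | p 0 < 0} {p : Pt | 0 < p 0} isOpen_L isOpen_half0
    hcov ⟨![(-1:ℝ), 0], hL, show (![(-1:ℝ), 0] : Pt) 0 < 0 by norm_num⟩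
    ⟨![(1:ℝ)/2, 3/4], hA, show (0:ℝ) < (![(1:ℝ)/2, 3/4] : Pt) 0 by norm_num⟩
  have a : q 0 < 0 := hq1
  have b : 0 < q 0 := hq2
  linarith

lemma pair_not_conn_3 : ¬ IsConnected (interior (r1 ∪ closure A3)) := by
  have hsplit : r1 ∪ closure A3 = closure (L ∪ A3) := by rw [closure_union, hr1]
  rintro ⟨hne, hpc⟩
  have hcov : interior (r1 ∪ closure A3) ⊆ {p : Pt | p 0 < 0} ∪ {p : Pt | 0 < p 0} := by
    intro p hp
    rcases lt_trichotomy (p 0) 0 with h | h | h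
    · exact Or.inl h
    · exfalso
      rw [hsplit] at hp
      rcases le_or_gt (-1) (p 1) with h1 | h1
      · refine not_mem_interior_closure isOpen_Oabove ?_
          (zero_mem_closure_Oabove h h1) hp
        rintro q ⟨hq0, hq1⟩ (hqL | hqA)
        · exact absurd hqL (not_lt.mpr hq0.le)
        · exact dOaboveA3 q ⟨hq0, hq1⟩ hqA
      · have hcl : p ∈ closure Obot := by
          apply mem_closure_seq (fun k => eps k) (fun _ => p 1)
          · intro k
            exact ⟨by simpa using eps_pos k, by simpa using h1⟩
          · rw [h]; exact eps_tendsto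
          · exact tendsto_const_nhds
        refine not_mem_interior_closure isOpen_Obot ?_ hcl hp
        rintro q ⟨hq0, hq1⟩ (hqL | hqA)
        · exact absurd hqL (not_lt.mpr hq0.le)
        · exact dObotA3 q ⟨hq0, hq1⟩ hqA
    · exact Or.inr h
  have hLsub : L ⊆ interior (r1 ∪ closure A3) :=
    interior_maximal (fun q hq => Or.inl (L_subset_r1 hq)) isOpen_L
  have hL : (![(-1:ℝ), 0] : Pt) ∈ interior (r1 ∪ closure A3) := hLsub negpt_mem_L
  have hAsub : A3 ⊆ interior (r1 ∪ closure A3) :=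
    interior_maximal (fun q hq => Or.inr (subset_closure hq)) isOpen_A3
  have hA : (![(1:ℝ)/2, -3/4] : Pt) ∈ interior (r1 ∪ closure A3) := hAsub mem_A3_half
  obtain ⟨q, -, hq1, hq2⟩ := hpc {p : Pt | p 0 < 0} {p : Pt | 0 < p 0} isOpen_L isOpen_half0
    hcov ⟨![(-1:ℝ), 0], hL, show (![(-1:ℝ), 0] : Pt) 0 < 0 by norm_num⟩
    ⟨![(1:ℝ)/2, -3/4], hA, show (0:ℝ) < (![(1:ℝ)/2, -3/4] : Pt) 0 by norm_num⟩
  have a : q 0 < 0 := hq1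
  have b : 0 < q 0 := hq2
  linarith

lemma int_triple : interior (r1 ∪ closure A2 ∪ closure A3) = L ∪ V := by
  have htrip : r1 ∪ closure A2 ∪ closure A3 = closure (L ∪ A2 ∪ A3) := by
    rw [closure_union, closure_union, hr1]
  apply subset_antisymm
  · intro p hp
    by_contra hpw
    have h0 : ¬ p 0 < 0 := fun h => hpw (Or.inl (show p ∈ L from h))
    have hV : ¬ (p 0 < 1 ∧ -1 < p 1 ∧ p 1 < 1) := fun h =>
      hpw (Or.inr (show p ∈ V from ⟨h.1, h.2.1, h.2.2⟩))
    rw [htrip] at hp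
    rcases le_or_gt 1 (p 0) with h1 | h1
    · have hcl : p ∈ closure Oright := by
        apply mem_closure_seq (fun k => p 0 + eps k) (fun _ => p 1)
        · intro k
          simp only [Oright, mem_setOf_eq, Matrix.cons_val_zero]
          linarith [eps_pos k]
        · simpa using tendsto_const_nhds.add eps_tendsto
        · exact tendsto_const_nhds
      refine not_mem_interior_closure isOpen_Oright ?_ hcl hp
      rintro q hq ((hqL | hqA) | hqA)
      · have a : q 0 < 0 := hqL
        have b : 1 < q 0 := hq
        linarith
      · exact dOrightA2 q hq hqA
      · exact dOrightA3 q hq hqA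
    · rcases le_or_gt 1 (p 1) with h2 | h2
      · have hcl : p ∈ closure Otop := by
          apply mem_closure_seq (fun k => p 0 + eps k) (fun k => p 1 + eps k)
          · intro k
            refine ⟨?_, ?_⟩ <;> simp only [Matrix.cons_val_zero, Matrix.cons_val_one,
              Matrix.head_cons] <;> [skip; skip] <;> linarith [eps_pos k, not_lt.mp h0]
          · simpa using tendsto_const_nhds.add eps_tendsto
          · simpa using tendsto_const_nhds.add eps_tendsto
        refine not_mem_interior_closure isOpen_Otop ?_ hcl hp
        rintro q ⟨hq0, hq1⟩ ((hqL | hqA) | hqA)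
        · exact absurd hqL (not_lt.mpr hq0.le)
        · exact dOtopA2 q ⟨hq0, hq1⟩ hqA
        · have hflt := f_lt_one hqA.1 hqA.2.1
          have := hqA.2.2.2
          linarith
      · rcases le_or_gt (p 1) (-1) with h3 | h3
        · have hcl : p ∈ closure Obot := by
            apply mem_closure_seq (fun k => p 0 + eps k) (fun k => p 1 - eps k)
            · intro k
              refine ⟨?_, ?_⟩ <;> simp only [Matrix.cons_val_zero, Matrix.cons_val_one,
                Matrix.head_cons] <;> [skip; skip] <;> linarith [eps_pos k, not_lt.mp h0]
            · simpa using tendsto_const_nhds.add eps_tendsto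
            · simpa using tendsto_const_nhds.sub eps_tendsto
          refine not_mem_interior_closure isOpen_Obot ?_ hcl hp
          rintro q ⟨hq0, hq1⟩ ((hqL | hqA) | hqA)
          · exact absurd hqL (not_lt.mpr hq0.le)
          · have hfgt := neg_one_lt_f hqA.1 hqA.2.1
            have := hqA.2.2.1
            linarith
          · have := hqA.2.2.1
            have : (-1:ℝ) < q 1 := this
            linarith
        · exact hV ⟨h1, h3, h2⟩
  · apply interior_maximal ?_ (isOpen_L.union isOpen_V)
    rintro p (hp | ⟨h1, hm, hq⟩)
    · exact Or.inl (Or.inl (le_of_lt (show p 0 < 0 from hp)))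
    · have h1' : p 0 < 1 := h1
      have hm' : (-1:ℝ) < p 1 := hm
      have hq' : p 1 < 1 := hq
      rcases le_or_gt (p 0) 0 with h0 | h0
      · exact Or.inl (Or.inl h0)
      · rcases lt_trichotomy (p 1) (f (p 0)) with hc | hc | hc
        · exact Or.inr (subset_closure ⟨h0, h1', hm', hc⟩)
        · refine Or.inl (Or.inr ?_)
          apply mem_closure_seq (fun _ => p 0) (fun k => p 1 + (1 - p 1)/2 * eps k)
          · intro k
            have he1 := eps_pos k
            have he2 := eps_le_one k
            refine ⟨h0, h1', ?_, ?_⟩ <;>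
              simp only [Matrix.cons_val_zero, Matrix.cons_val_one, Matrix.head_cons]
            · rw [← hc]; nlinarith [he1, he2, hq']
            · nlinarith [he1, he2, hq']
          · exact tendsto_const_nhds
          · have h : Tendsto (fun k => p 1 + (1 - p 1)/2 * eps k) atTop
                (𝓝 (p 1 + (1 - p 1)/2 * 0)) :=
              tendsto_const_nhds.add (eps_tendsto.const_mul _)
            simpa using h
        · exact Or.inl (Or.inr (subset_closure ⟨h0, h1', hc, hq'⟩))

lemma isConnected_LV : IsConnected (L ∪ V) := by
  have hLconv : Convex ℝ L := convex_halfSpace_lt lin0 0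
  have hVconv : Convex ℝ V :=
    (convex_halfSpace_lt lin0 1).inter ((convex_halfSpace_gt lin1 (-1)).inter
      (convex_halfSpace_lt lin1 1))
  have hmem : (![(-1:ℝ), 0] : Pt) ∈ L ∩ V := by
    constructor
    · show (-1:ℝ) < 0; norm_num
    · refine ⟨?_, ?_, ?_⟩ <;> norm_num
  exact IsConnected.union ⟨![(-1:ℝ), 0], hmem⟩
    (hLconv.isConnected ⟨_, hmem.1⟩) (hVconv.isConnected ⟨_, hmem.2⟩)

end Wiggly

open Wiggly in
/-- There exist three regular closed subsets of `ℝ²`, each with connected interior, whose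
total union has connected interior, but such that neither `r₁ ∪ r₂` nor `r₁ ∪ r₃` has
connected interior. -/
theorem exists_wiggly_regions_in_plane :
    ∃ r₁ r₂ r₃ : Set (Fin 2 → ℝ),
      r₁ = closure (interior r₁) ∧ r₂ = closure (interior r₂) ∧ r₃ = closure (interior r₃) ∧
      IsConnected (interior r₁) ∧ IsConnected (interior r₂) ∧ IsConnected (interior r₃) ∧
      IsConnected (interior (r₁ ∪ r₂ ∪ r₃)) ∧
      ¬ IsConnected (interior (r₁ ∪ r₂)) ∧
      ¬ IsConnected (interior (r₁ ∪ r₃)) := by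
  refine ⟨r1, closure A2, closure A3, ?_, ?_, ?_, ?_, ?_, ?_, ?_, ?_, ?_⟩
  · rw [int_r1, hr1]
  · rw [int_r2]
  · rw [int_r3]
  · rw [int_r1]
    exact (convex_halfSpace_lt lin0 0).isConnected ⟨![(-1:ℝ), 0], by norm_num [L]⟩
  · rw [int_r2]; exact isConnected_A2
  · rw [int_r3]; exact isConnected_A3
  · rw [int_triple]; exact isConnected_LV
  · exact pair_not_conn_2
  · exact pair_not_conn_3
end

section
/- There do not exist three regular closed polygons r₁, r₂, r₃ in ℝ² (elements of the Boolean subalgebra of RC(ℝ²) generated by half-planes) such that each rᵢ has connected interior, r₁ ∪ r₂ ∪ r₃ has connected interior, but neither r₁ ∪ r₂ nor r₁ ∪ r₃ has connected interior. -/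
/-- Membership in the Boolean subalgebra of `RC(ℝ²)` generated by closed half-planes:
regular closed polygons. -/
inductive IsPolygon : Set (Fin 2 → ℝ) → Prop
  | halfplane (a : Fin 2 → ℝ) (c : ℝ) (ha : a ≠ 0) :
      IsPolygon {x | ∑ i, a i * x i ≤ c}
  | sup (X Y : Set (Fin 2 → ℝ)) : IsPolygon X → IsPolygon Y → IsPolygon (X ∪ Y)
  | inf (X Y : Set (Fin 2 → ℝ)) : IsPolygon X → IsPolygon Y →
      IsPolygon (closure (interior (X ∩ Y)))
  | compl (X : Set (Fin 2 → ℝ)) : IsPolygon X → IsPolygon (closure Xᶜ)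

namespace NoWiggly

open Set Metric

abbrev E := Fin 2 → ℝ

noncomputable section

def dot (a x : E) : ℝ := ∑ i, a i * x i

lemma dot_two (a x : E) : dot a x = a 0 * x 0 + a 1 * x 1 := Fin.sum_univ_two _

lemma cont_dot (a : E) : Continuous (dot a) := by
  have h : dot a = fun x => a 0 * x 0 + a 1 * x 1 := funext (dot_two a)
  rw [h]
  exact (continuous_const.mul (continuous_apply 0)).add
    (continuous_const.mul (continuous_apply 1))

lemma dot_add (a x y : E) : dot a (x + y) = dot a x + dot a y := by
  simp [dot_two]; ring

lemma dot_smul (a : E) (t : ℝ) (x : E) : dot a (t • x) = t * dot a x := by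
  simp [dot_two]; ring

lemma isLinearMap_dot (a : E) : IsLinearMap ℝ (dot a) :=
  ⟨dot_add a, fun t x => by simpa using dot_smul a t x⟩

lemma dot_sub (a x y : E) : dot a (x - y) = dot a x - dot a y := by
  simp [dot_two]; ring

lemma dot_self_pos {a : E} (ha : a ≠ 0) : 0 < dot a a := by
  have h2 : a 0 ≠ 0 ∨ a 1 ≠ 0 := by
    by_contra h
    push_neg at h
    exact ha (funext fun j => by fin_cases j <;> simp [h.1, h.2])
  rw [dot_two]
  rcases h2 with h | h <;> nlinarith [mul_self_pos.mpr h, mul_self_nonneg (a 0), mul_self_nonneg (a 1)]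

lemma norm_pos' {a : E} (ha : a ≠ 0) : 0 < ‖a‖ := norm_pos_iff.mpr ha

lemma dist_add_smul (x w : E) (t : ℝ) : dist (x + t • w) x = |t| * ‖w‖ := by
  rw [dist_eq_norm]
  simp [norm_smul]

/-- In any open set, arbitrarily close to any point, there is a point off a given line. -/
lemma exists_off_line {O : Set E} (hO : IsOpen O) {z : E} (hz : z ∈ O) {a : E} (ha : a ≠ 0)
    (c : ℝ) {ρ : ℝ} (hρ : 0 < ρ) : ∃ y ∈ O, dot a y ≠ c ∧ dist y z < ρ := by
  obtain ⟨ε, hε, hb⟩ := Metric.isOpen_iff.mp hO z hz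
  have hd := dot_self_pos ha
  have hn := norm_pos' ha
  set τ : ℝ := min ε ρ / (2 * ‖a‖) with hτdef
  have hτ : 0 < τ := by positivity
  have hmem : ∀ t : ℝ, 0 < t → t ≤ τ → z + t • a ∈ O ∧ dist (z + t • a) z < ρ := by
    intro t ht htτ
    have hdist : dist (z + t • a) z < min ε ρ := by
      rw [dist_add_smul, abs_of_pos ht]
      calc t * ‖a‖ ≤ τ * ‖a‖ := by nlinarith
        _ = min ε ρ / 2 := by rw [hτdef, div_mul_eq_mul_div, mul_div_mul_right _ _ hn.ne']
        _ < min ε ρ := by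
            have : 0 < min ε ρ := lt_min hε hρ
            linarith
    exact ⟨hb (by simpa using hdist.trans_le (min_le_left _ _)),
      hdist.trans_le (min_le_right _ _)⟩
  by_cases hcase : dot a z + τ * dot a a = c
  · refine ⟨z + (τ / 2) • a, (hmem _ (by linarith) (by linarith)).1, ?_,
      (hmem _ (by linarith) (by linarith)).2⟩
    rw [dot_add, dot_smul]
    intro h
    have : τ * dot a a = τ / 2 * dot a a := by linarith
    have : τ * dot a a = 0 := by linarith
    nlinarith
  · exact ⟨z + τ • a, (hmem _ hτ le_rfl).1, by rwa [dot_add, dot_smul],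
      (hmem _ hτ le_rfl).2⟩

/-- A ball is contained in the closure of the ball minus a line. -/
lemma ball_subset_closure_diff_line (p : E) (ε : ℝ) {a : E} (ha : a ≠ 0) (c : ℝ) :
    ball p ε ⊆ closure (ball p ε \ {x | dot a x = c}) := by
  intro z hz
  rw [Metric.mem_closure_iff]
  intro ρ hρ
  obtain ⟨y, hyO, hy, hyd⟩ := exists_off_line isOpen_ball hz ha c hρ
  exact ⟨y, ⟨hyO, hy⟩, by rwa [dist_comm]⟩

/-- A nonempty open set minus a finite set is nonempty. -/
lemma exists_diff_finite {O : Set E} (hO : IsOpen O) (hne : O.Nonempty) {K : Set E}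
    (hK : K.Finite) : (O \ K).Nonempty := by
  obtain ⟨z, hz⟩ := hne
  obtain ⟨ε, hε, hb⟩ := Metric.isOpen_iff.mp hO z hz
  set e₀ : E := fun i => if i = 0 then (1 : ℝ) else 0 with he₀
  set f : ℝ → E := fun t => z + t • e₀ with hf
  have hinj : Function.Injective f := by
    intro s t h
    have := congrFun h 0
    simp [hf, he₀] at this
    linarith
  have hIoo : (Ioo (0 : ℝ) ε).Infinite := Set.Ioo_infinite hε
  have hpre : (f ⁻¹' K).Finite := Set.Finite.preimage hinj.injOn hK
  obtain ⟨t, htI, htK⟩ := (hIoo.diff hpre).nonempty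
  refine ⟨f t, hb ?_, htK⟩
  have hd : dist (f t) z = |t| * ‖e₀‖ := dist_add_smul z e₀ t
  have hnorm : ‖e₀‖ ≤ 1 := by
    rw [pi_norm_le_iff_of_nonneg zero_le_one]
    intro i
    fin_cases i <;> simp [he₀]
  rw [mem_ball, hd, abs_of_pos htI.1]
  calc t * ‖e₀‖ ≤ t * 1 := by nlinarith [htI.1]
    _ < ε := by linarith [htI.2]

lemma exists_mem_ball_ne (z : E) {δ : ℝ} (hδ : 0 < δ) :
    ∃ w, w ∈ ball z δ ∧ w ≠ z := by
  set e₀ : E := fun i => if i = 0 then (1 : ℝ) else 0 with he₀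
  refine ⟨z + (δ / 2) • e₀, ?_, ?_⟩
  · rw [mem_ball, dist_add_smul]
    have hnorm : ‖e₀‖ ≤ 1 := by
      rw [pi_norm_le_iff_of_nonneg zero_le_one]
      intro i
      fin_cases i <;> simp [he₀]
    rw [abs_of_pos (by linarith)]
    nlinarith
  · intro h
    have := congrFun h 0
    simp [he₀] at this
    linarith


/-! ### Half-planes -/

lemma isClosed_hp (a : E) (c : ℝ) : IsClosed {x : E | dot a x ≤ c} :=
  isClosed_le (cont_dot a) continuous_const

lemma isOpen_hp_lt (a : E) (c : ℝ) : IsOpen {x : E | dot a x < c} :=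
  isOpen_lt (cont_dot a) continuous_const

lemma isOpen_hp_gt (a : E) (c : ℝ) : IsOpen {x : E | c < dot a x} :=
  isOpen_lt continuous_const (cont_dot a)

lemma isClosed_line (a : E) (c : ℝ) : IsClosed {x : E | dot a x = c} :=
  isClosed_eq (cont_dot a) continuous_const

lemma interior_hp {a : E} (ha : a ≠ 0) (c : ℝ) :
    interior {x : E | dot a x ≤ c} = {x : E | dot a x < c} := by
  apply Subset.antisymm
  · intro z hz
    have hle : dot a z ≤ c := by
      have := interior_subset hz
      simpa using this
    rcases lt_or_eq_of_le hle with h | h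
    · exact h
    · exfalso
      obtain ⟨ε, hε, hb⟩ := Metric.isOpen_iff.mp isOpen_interior z hz
      have hd := dot_self_pos ha
      have hn := norm_pos' ha
      set t : ℝ := ε / (2 * ‖a‖) with htdef
      have ht : 0 < t := by positivity
      have hmem : z + t • a ∈ ball z ε := by
        rw [mem_ball, dist_add_smul, abs_of_pos ht]
        calc t * ‖a‖ = ε / 2 := by rw [htdef, div_mul_eq_mul_div, mul_div_mul_right _ _ hn.ne']
          _ < ε := by linarith
      have h3 : dot a (z + t • a) ≤ c := by
        have := interior_subset (hb hmem)
        simpa using this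
      rw [dot_add, dot_smul, h] at h3
      nlinarith
  · exact interior_maximal (fun x hx => show dot a x ≤ c from le_of_lt hx) (isOpen_hp_lt a c)

lemma closure_hp_lt {a : E} (ha : a ≠ 0) (c : ℝ) :
    closure {x : E | dot a x < c} = {x : E | dot a x ≤ c} := by
  apply Subset.antisymm
  · exact closure_minimal (fun x hx => show dot a x ≤ c from le_of_lt hx) (isClosed_hp a c)
  · intro z hz
    have hz' : dot a z ≤ c := hz
    rcases lt_or_eq_of_le hz' with h | h
    · exact subset_closure h
    · rw [Metric.mem_closure_iff]
      intro ρ hρ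
      have hd := dot_self_pos ha
      have hn := norm_pos' ha
      set t : ℝ := ρ / (2 * ‖a‖) with htdef
      have ht : 0 < t := by positivity
      refine ⟨z + (-t) • a, ?_, ?_⟩
      · show dot a _ < c
        rw [dot_add, dot_smul, ← h]
        nlinarith
      · rw [dist_comm, dist_add_smul, abs_neg, abs_of_pos ht]
        calc t * ‖a‖ = ρ / 2 := by rw [htdef, div_mul_eq_mul_div, mul_div_mul_right _ _ hn.ne']
          _ < ρ := by linarith

/-! ### Regularity helpers -/

lemma creg_open {V : Set E} (hV : IsOpen V) :
    closure (interior (closure V)) = closure V :=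
  Subset.antisymm ((closure_mono interior_subset).trans (by rw [closure_closure]))
    (closure_mono (interior_maximal subset_closure hV))

lemma frontier_clint_subset (S : Set E) :
    frontier (closure (interior S)) ⊆ frontier S := by
  intro z hz
  refine ⟨?_, ?_⟩
  · have h1 : z ∈ closure (closure (interior S)) := hz.1
    rw [closure_closure] at h1
    exact (closure_mono interior_subset) h1
  · intro hzi
    exact hz.2 (interior_maximal subset_closure isOpen_interior hzi)

/-- Spec of polygons: closed, regular closed, frontier contained in finitely many lines. -/
lemma poly_spec {X : Set E} (h : IsPolygon X) :
    IsClosed X ∧ closure (interior X) = X ∧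
      ∃ s : Finset (E × ℝ), (∀ p ∈ s, p.1 ≠ 0) ∧
        frontier X ⊆ ⋃ p ∈ s, {x : E | dot p.1 x = p.2} := by
  classical
  induction h with
  | halfplane a c ha =>
    rw [show ({x | ∑ i, a i * x i ≤ c} : Set E) = {x : E | dot a x ≤ c} from rfl]
    refine ⟨isClosed_hp a c, ?_, {(a, c)}, by simpa using ha, ?_⟩
    · rw [interior_hp ha, closure_hp_lt ha]
    · intro z hz
      have h1 : z ∈ {x : E | dot a x ≤ c} := (isClosed_hp a c).closure_subset hz.1
      have h2 : z ∉ {x : E | dot a x < c} := by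
        rw [← interior_hp ha]
        exact hz.2
      simp only [mem_setOf_eq, not_lt] at h1 h2
      simp only [Finset.mem_singleton, mem_iUnion]
      exact ⟨(a, c), rfl, le_antisymm h1 h2⟩
  | sup X Y hX hY ihX ihY =>
    obtain ⟨hXc, hXr, sX, hsX, hfX⟩ := ihX
    obtain ⟨hYc, hYr, sY, hsY, hfY⟩ := ihY
    refine ⟨hXc.union hYc, ?_, sX ∪ sY, ?_, ?_⟩
    · apply Subset.antisymm
      · exact (closure_mono interior_subset).trans (by rw [(hXc.union hYc).closure_eq])
      · calc X ∪ Y = closure (interior X) ∪ closure (interior Y) := by rw [hXr, hYr]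
          _ = closure (interior X ∪ interior Y) := closure_union.symm
          _ ⊆ closure (interior (X ∪ Y)) := closure_mono
              (union_subset (interior_mono subset_union_left)
                (interior_mono subset_union_right))
    · intro p hp
      rcases Finset.mem_union.mp hp with h | h
      · exact hsX p h
      · exact hsY p h
    · intro z hz
      rcases frontier_union_subset X Y hz with h | h
      · obtain ⟨q, hq, hzq⟩ := by simpa only [mem_iUnion] using hfX h.1
        exact mem_iUnion.mpr ⟨q, mem_iUnion.mpr ⟨Finset.mem_union_left _ hq, hzq⟩⟩
      · obtain ⟨q, hq, hzq⟩ := by simpa only [mem_iUnion] using hfY h.2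
        exact mem_iUnion.mpr ⟨q, mem_iUnion.mpr ⟨Finset.mem_union_right _ hq, hzq⟩⟩
  | inf X Y hX hY ihX ihY =>
    obtain ⟨hXc, hXr, sX, hsX, hfX⟩ := ihX
    obtain ⟨hYc, hYr, sY, hsY, hfY⟩ := ihY
    refine ⟨isClosed_closure, creg_open isOpen_interior, sX ∪ sY, ?_, ?_⟩
    · intro p hp
      rcases Finset.mem_union.mp hp with h | h
      · exact hsX p h
      · exact hsY p h
    · intro z hz
      have h1 : z ∈ frontier (X ∩ Y) := frontier_clint_subset _ hz
      rcases frontier_inter_subset X Y h1 with h | h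
      · obtain ⟨q, hq, hzq⟩ := by simpa only [mem_iUnion] using hfX h.1
        exact mem_iUnion.mpr ⟨q, mem_iUnion.mpr ⟨Finset.mem_union_left _ hq, hzq⟩⟩
      · obtain ⟨q, hq, hzq⟩ := by simpa only [mem_iUnion] using hfY h.2
        exact mem_iUnion.mpr ⟨q, mem_iUnion.mpr ⟨Finset.mem_union_right _ hq, hzq⟩⟩
  | compl X hX ihX =>
    obtain ⟨hXc, hXr, sX, hsX, hfX⟩ := ihX
    refine ⟨isClosed_closure, creg_open hXc.isOpen_compl, sX, hsX, ?_⟩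
    intro z hz
    have h1 : z ∈ frontier Xᶜ := frontier_closure_subset hz
    rw [frontier_compl] at h1
    exact hfX h1


/-! ### Two distinct lines meet in at most one point -/

lemma det_zero {a v w : E} (ha : a ≠ 0) (hv : dot a v = 0) (hw : dot a w = 0) :
    v 0 * w 1 = v 1 * w 0 := by
  rw [dot_two] at hv hw
  have h2 : a 0 ≠ 0 ∨ a 1 ≠ 0 := by
    by_contra h
    push_neg at h
    exact ha (funext fun j => by fin_cases j <;> simp [h.1, h.2])
  rcases h2 with h | h
  · have key : a 0 * (v 0 * w 1 - v 1 * w 0) = 0 := by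
      linear_combination w 1 * hv - v 1 * hw
    rcases mul_eq_zero.mp key with h' | h'
    · exact absurd h' h
    · linarith
  · have key : a 1 * (v 1 * w 0 - v 0 * w 1) = 0 := by
      linear_combination w 0 * hv - v 0 * hw
    rcases mul_eq_zero.mp key with h' | h'
    · exact absurd h' h
    · linarith

lemma dot_of_det {a' v w : E} (hv : v ≠ 0) (hdet : v 0 * w 1 = v 1 * w 0)
    (h : dot a' v = 0) : dot a' w = 0 := by
  rw [dot_two] at h ⊢
  have h2 : v 0 ≠ 0 ∨ v 1 ≠ 0 := by
    by_contra hcon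
    push_neg at hcon
    exact hv (funext fun j => by fin_cases j <;> simp [hcon.1, hcon.2])
  rcases h2 with h0 | h1
  · have key : v 0 * (a' 0 * w 0 + a' 1 * w 1) = 0 := by
      linear_combination w 0 * h + a' 1 * hdet
    rcases mul_eq_zero.mp key with h' | h'
    · exact absurd h' h0
    · linarith
  · have key : v 1 * (a' 0 * w 0 + a' 1 * w 1) = 0 := by
      linear_combination w 1 * h - a' 0 * hdet
    rcases mul_eq_zero.mp key with h' | h'
    · exact absurd h' h1
    · linarith

lemma line_eq {a a' : E} {c c' : ℝ} (_ha : a ≠ 0) (_ha' : a' ≠ 0) {x y : E} (hxy : x ≠ y)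
    (h1 : dot a x = c) (h2 : dot a' x = c') (h3 : dot a y = c) (h4 : dot a' y = c') :
    {z : E | dot a z = c} = {z : E | dot a' z = c'} := by
  have hv : y - x ≠ 0 := sub_ne_zero.mpr (Ne.symm hxy)
  have hav : dot a (y - x) = 0 := by rw [dot_sub, h1, h3]; ring
  have ha'v : dot a' (y - x) = 0 := by rw [dot_sub, h2, h4]; ring
  ext z
  simp only [mem_setOf_eq]
  constructor
  · intro hz
    have hw : dot a (z - x) = 0 := by rw [dot_sub, h1, hz]; ring
    have hdet := det_zero _ha hav hw
    have := dot_of_det hv hdet ha'v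
    rw [dot_sub, h2] at this
    linarith
  · intro hz
    have hw : dot a' (z - x) = 0 := by rw [dot_sub, h2, hz]; ring
    have hdet := det_zero _ha' ha'v hw
    have := dot_of_det hv hdet hav
    rw [dot_sub, h1] at this
    linarith

/-! ### Punctured balls are preconnected -/

lemma ball_diff_center_preconnected (x : E) {ε : ℝ} (hε : 0 < ε) :
    IsPreconnected (ball x ε \ {x}) := by
  have hlin : ∀ (i : Fin 2) (σ : ℝ), IsLinearMap ℝ fun z : E => σ * z i :=
    fun i σ => ⟨fun z w => by simp [mul_add], fun t z => by simp; ring⟩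
  have hconv : ∀ (i : Fin 2) (σ : ℝ),
      Convex ℝ (ball x ε ∩ {z : E | σ * x i < σ * z i}) :=
    fun i σ => (convex_ball x ε).inter (convex_halfSpace_gt (hlin i σ) (σ * x i))
  set Q : Fin 2 → ℝ → Set E := fun i σ => ball x ε ∩ {z : E | σ * x i < σ * z i} with hQ
  have hpre : ∀ (i : Fin 2) (σ : ℝ), IsPreconnected (Q i σ) :=
    fun i σ => (hconv i σ).isPreconnected
  -- corner-ish points
  set pp : E := fun i => x i + ε / 2 with hpp
  set mp : E := fun i => if i = 0 then x 0 - ε / 2 else x 1 + ε / 2 with hmp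
  set pm : E := fun i => if i = 0 then x 0 + ε / 2 else x 1 - ε / 2 with hpm2
  have hballmem : ∀ w : E, (∀ i, dist (w i) (x i) < ε) → w ∈ ball x ε := by
    intro w hw
    rw [mem_ball, dist_pi_lt_iff hε]
    exact hw
  have hppb : pp ∈ ball x ε := hballmem _ (by
    intro i
    fin_cases i <;>
      [skip; skip] <;>
      · simp only [hpp, Real.dist_eq, abs_lt]
        constructor <;> · ring_nf; linarith)
  have hmpb : mp ∈ ball x ε := hballmem _ (by
    intro i
    fin_cases i <;>
      · simp only [hmp, Real.dist_eq, abs_lt, if_pos, if_neg, Fin.isValue]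
        norm_num
        constructor <;> linarith)
  have hpmb : pm ∈ ball x ε := hballmem _ (by
    intro i
    fin_cases i <;>
      · simp only [hpm2, Real.dist_eq, abs_lt, Fin.isValue]
        norm_num
        constructor <;> linarith)
  have hpp_p0 : pp ∈ Q 0 1 := ⟨hppb, by simp [hpp]; linarith⟩
  have hpp_p1 : pp ∈ Q 1 1 := ⟨hppb, by simp [hpp]; linarith⟩
  have hmp_m0 : mp ∈ Q 0 (-1) := ⟨hmpb, by simp [hmp]; linarith⟩
  have hmp_p1 : mp ∈ Q 1 1 := ⟨hmpb, by simp [hmp]; linarith⟩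
  have hpm_p0 : pm ∈ Q 0 1 := ⟨hpmb, by simp [hpm2]; linarith⟩
  have hpm_m1 : pm ∈ Q 1 (-1) := ⟨hpmb, by simp [hpm2]; linarith⟩
  have hS1 : IsPreconnected (Q 1 1 ∪ Q 0 1) :=
    IsPreconnected.union pp hpp_p1 hpp_p0 (hpre 1 1) (hpre 0 1)
  have hS2 : IsPreconnected ((Q 1 1 ∪ Q 0 1) ∪ Q 0 (-1)) :=
    IsPreconnected.union mp (mem_union_left _ hmp_p1) hmp_m0 hS1
      (hpre 0 (-1))
  have hS3 : IsPreconnected (((Q 1 1 ∪ Q 0 1) ∪ Q 0 (-1)) ∪ Q 1 (-1)) :=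
    IsPreconnected.union pm
      (mem_union_left _ (mem_union_right _ hpm_p0)) hpm_m1 hS2
      (hpre 1 (-1))
  have hset : ball x ε \ {x} = ((Q 1 1 ∪ Q 0 1) ∪ Q 0 (-1)) ∪ Q 1 (-1) := by
    apply Subset.antisymm
    · rintro z ⟨hzb, hzx⟩
      have : ∃ i, z i ≠ x i := by
        by_contra h
        push_neg at h
        exact hzx (funext h)
      obtain ⟨i, hi⟩ := this
      fin_cases i
      · rcases lt_or_gt_of_ne hi with h | h
        · exact mem_union_left _ (mem_union_right _ ⟨hzb, by simpa using h⟩)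
        · exact mem_union_left _ (mem_union_left _ (mem_union_right _ ⟨hzb, by simpa using h⟩))
      · rcases lt_or_gt_of_ne hi with h | h
        · exact mem_union_right _ ⟨hzb, by simpa using h⟩
        · exact mem_union_left _ (mem_union_left _ (mem_union_left _ ⟨hzb, by simpa using h⟩))
    · rintro z (((⟨hzb, hz⟩ | ⟨hzb, hz⟩) | ⟨hzb, hz⟩) | ⟨hzb, hz⟩) <;>
        refine ⟨hzb, fun hzx => ?_⟩ <;> rw [hzx] at hz <;> simp at hz
  rw [hset]
  exact hS3


/-! ### Removing a finite set keeps an open preconnected set preconnected -/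

lemma diff_finite_preconnected {U : Set E} (hU : IsOpen U) (hUc : IsPreconnected U)
    {K : Set E} (hK : K.Finite) : IsPreconnected (U \ K) := by
  intro u v hu hv hcov hneu hnev
  by_contra hemp
  rw [not_nonempty_iff_eq_empty] at hemp
  -- good punctured balls
  have hball : ∀ z ∈ U, ∃ δ > 0, ball z δ ⊆ U ∧ ball z δ ∩ K ⊆ {z} := by
    intro z hz
    obtain ⟨δ₁, hδ₁, h1⟩ := Metric.isOpen_iff.mp hU z hz
    have hKc : IsClosed (K \ {z}) := (hK.diff).isClosed
    have hznot : z ∈ (K \ {z})ᶜ := fun h => h.2 rfl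
    obtain ⟨δ₂, hδ₂, h2⟩ := Metric.isOpen_iff.mp hKc.isOpen_compl z hznot
    refine ⟨min δ₁ δ₂, lt_min hδ₁ hδ₂, fun w hw => h1 (ball_subset_ball (min_le_left _ _) hw),
      fun w ⟨hw, hwK⟩ => ?_⟩
    by_contra hwz
    exact h2 (ball_subset_ball (min_le_right _ _) hw) ⟨hwK, hwz⟩
  have hdich : ∀ z δ, 0 < δ → ball z δ ⊆ U → ball z δ ∩ K ⊆ {z} →
      (ball z δ \ {z} ⊆ u ∨ ball z δ \ {z} ⊆ v) := by
    intro z δ hδ hsub hK'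
    have hpre := ball_diff_center_preconnected z hδ
    have hsub' : ball z δ \ {z} ⊆ U \ K := fun w hw =>
      ⟨hsub hw.1, fun hwK => hw.2 (hK' ⟨hw.1, hwK⟩)⟩
    have hcov' : ball z δ \ {z} ⊆ u ∪ v := hsub'.trans hcov
    by_contra h
    push_neg at h
    obtain ⟨h1, h2⟩ := h
    obtain ⟨w1, hw1, hw1u⟩ := not_subset.mp h1
    obtain ⟨w2, hw2, hw2v⟩ := not_subset.mp h2
    have hne1 : (ball z δ \ {z} ∩ u).Nonempty :=
      ⟨w2, hw2, (hcov' hw2).resolve_right hw2v⟩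
    have hne2 : (ball z δ \ {z} ∩ v).Nonempty :=
      ⟨w1, hw1, (hcov' hw1).resolve_left hw1u⟩
    obtain ⟨w, hwb, hwuv⟩ := hpre u v hu hv hcov' hne1 hne2
    exact absurd hemp (Set.nonempty_iff_ne_empty.mp ⟨w, hsub' hwb, hwuv⟩)
  set Uu : Set E := {z | z ∈ U ∧ ∃ δ > 0, ball z δ ⊆ U ∧ ball z δ ∩ K ⊆ {z} ∧
    ball z δ \ {z} ⊆ u} with hUud
  set Uv : Set E := {z | z ∈ U ∧ ∃ δ > 0, ball z δ ⊆ U ∧ ball z δ ∩ K ⊆ {z} ∧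
    ball z δ \ {z} ⊆ v} with hUvd
  have key : ∀ (w : Set E), IsOpen {z | z ∈ U ∧ ∃ δ > 0, ball z δ ⊆ U ∧
      ball z δ ∩ K ⊆ {z} ∧ ball z δ \ {z} ⊆ w} := by
    intro w
    rw [Metric.isOpen_iff]
    rintro z ⟨hzU, δ, hδ, hbU, hbK, hbw⟩
    refine ⟨δ, hδ, fun y hy => ?_⟩
    by_cases hyz : y = z
    · exact hyz ▸ ⟨hzU, δ, hδ, hbU, hbK, hbw⟩
    · have hdyz : 0 < dist y z := dist_pos.mpr hyz
      have hdlt : dist y z < δ := hy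
      refine ⟨hbU hy, min (δ - dist y z) (dist y z), lt_min (by linarith) hdyz, ?_, ?_, ?_⟩
      · intro w' hw'
        apply hbU
        rw [mem_ball] at hw' ⊢
        have := dist_triangle w' y z
        have h1 : dist w' y < δ - dist y z := lt_of_lt_of_le hw' (min_le_left _ _)
        linarith
      · intro w' ⟨hw'b, hw'K⟩
        have hw'z : w' = z := hbK ⟨by
          rw [mem_ball] at hw'b ⊢
          have := dist_triangle w' y z
          have h1 : dist w' y < δ - dist y z := lt_of_lt_of_le hw'b (min_le_left _ _)
          linarith, hw'K⟩
        exfalso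
        rw [hw'z, mem_ball] at hw'b
        have h2 : dist z y < dist y z := lt_of_lt_of_le hw'b (min_le_right _ _)
        rw [dist_comm] at h2
        exact lt_irrefl _ h2
      · intro w' ⟨hw'b, hw'y⟩
        have hw'z : w' ≠ z := by
          intro h
          rw [h, mem_ball] at hw'b
          have h2 : dist z y < dist y z := lt_of_lt_of_le hw'b (min_le_right _ _)
          rw [dist_comm] at h2
          exact lt_irrefl _ h2
        refine hbw ⟨?_, hw'z⟩
        rw [mem_ball] at hw'b ⊢
        have := dist_triangle w' y z
        have h1 : dist w' y < δ - dist y z := lt_of_lt_of_le hw'b (min_le_left _ _)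
        linarith
  have hUuo : IsOpen Uu := key u
  have hUvo : IsOpen Uv := key v
  have hdisj : U ∩ (Uu ∩ Uv) = ∅ := by
    rw [eq_empty_iff_forall_notMem]
    rintro z ⟨_, ⟨hzU, δ₁, hδ₁, hb₁U, hb₁K, hb₁u⟩, ⟨_, δ₂, hδ₂, hb₂U, hb₂K, hb₂v⟩⟩
    obtain ⟨w, hwb, hwz⟩ := exists_mem_ball_ne z (lt_min hδ₁ hδ₂)
    have hw1 : w ∈ ball z δ₁ := ball_subset_ball (min_le_left _ _) hwb
    have hw2 : w ∈ ball z δ₂ := ball_subset_ball (min_le_right _ _) hwb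
    have hwUK : w ∈ U \ K := ⟨hb₁U hw1, fun hwK => hwz (hb₁K ⟨hw1, hwK⟩)⟩
    exact absurd hemp (Set.nonempty_iff_ne_empty.mp
      ⟨w, hwUK, hb₁u ⟨hw1, hwz⟩, hb₂v ⟨hw2, hwz⟩⟩)
  have hcov2 : U ⊆ Uu ∪ Uv := by
    intro z hz
    obtain ⟨δ, hδ, hbU, hbK⟩ := hball z hz
    rcases hdich z δ hδ hbU hbK with h | h
    · exact Or.inl ⟨hz, δ, hδ, hbU, hbK, h⟩
    · exact Or.inr ⟨hz, δ, hδ, hbU, hbK, h⟩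
  -- membership transfer: points of U \ K in u are in Uu
  have htrans : ∀ z ∈ U \ K, z ∈ u → z ∈ Uu := by
    intro z hzUK hzu
    rcases hcov2 hzUK.1 with h | h
    · exact h
    · exfalso
      obtain ⟨hzU, δ, hδ, hbU, hbK, hbv⟩ := h
      obtain ⟨ρ, hρ, hbu⟩ := Metric.isOpen_iff.mp hu z hzu
      obtain ⟨w, hwb, hwz⟩ := exists_mem_ball_ne z (lt_min hδ hρ)
      have hw1 : w ∈ ball z δ := ball_subset_ball (min_le_left _ _) hwb
      have hw2 : w ∈ ball z ρ := ball_subset_ball (min_le_right _ _) hwb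
      have hwUK : w ∈ U \ K := ⟨hbU hw1, fun hwK => hwz (hbK ⟨hw1, hwK⟩)⟩
      exact absurd hemp (Set.nonempty_iff_ne_empty.mp
        ⟨w, hwUK, hbu hw2, hbv ⟨hw1, hwz⟩⟩)
  have htrans' : ∀ z ∈ U \ K, z ∈ v → z ∈ Uv := by
    intro z hzUK hzv
    rcases hcov2 hzUK.1 with h | h
    · exfalso
      obtain ⟨hzU, δ, hδ, hbU, hbK, hbu⟩ := h
      obtain ⟨ρ, hρ, hbv⟩ := Metric.isOpen_iff.mp hv z hzv
      obtain ⟨w, hwb, hwz⟩ := exists_mem_ball_ne z (lt_min hδ hρ)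
      have hw1 : w ∈ ball z δ := ball_subset_ball (min_le_left _ _) hwb
      have hw2 : w ∈ ball z ρ := ball_subset_ball (min_le_right _ _) hwb
      have hwUK : w ∈ U \ K := ⟨hbU hw1, fun hwK => hwz (hbK ⟨hw1, hwK⟩)⟩
      exact absurd hemp (Set.nonempty_iff_ne_empty.mp
        ⟨w, hwUK, hbu ⟨hw1, hwz⟩, hbv hw2⟩)
    · exact h
  obtain ⟨z1, hz1UK, hz1u⟩ := hneu
  obtain ⟨z2, hz2UK, hz2v⟩ := hnev
  obtain ⟨w, hwU, hwuv⟩ := hUc Uu Uv hUuo hUvo hcov2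
    ⟨z1, hz1UK.1, htrans z1 hz1UK hz1u⟩ ⟨z2, hz2UK.1, htrans' z2 hz2UK hz2v⟩
  rw [eq_empty_iff_forall_notMem] at hdisj
  exact hdisj w ⟨hwU, hwuv⟩

/-! ### Dichotomy for preconnected sets avoiding a frontier -/

lemma subset_int_or_disjoint {S T : Set E} (hT : IsClosed T) (hS : IsPreconnected S)
    (hfr : S ∩ frontier T = ∅) : S ⊆ interior T ∨ S ∩ T = ∅ := by
  have hcov : S ⊆ interior T ∪ Tᶜ := by
    intro z hz
    by_cases hzT : z ∈ T
    · left
      by_contra hzi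
      rw [eq_empty_iff_forall_notMem] at hfr
      exact hfr z ⟨hz, ⟨subset_closure hzT, hzi⟩⟩
    · exact Or.inr hzT
  have hdisj : Disjoint (interior T) Tᶜ :=
    (disjoint_compl_right (a := T)).mono_left interior_subset
  rcases hS.subset_or_subset isOpen_interior hT.isOpen_compl hdisj hcov with h | h
  · exact Or.inl h
  · exact Or.inr (by
      rw [eq_empty_iff_forall_notMem]
      rintro z ⟨hzS, hzT⟩
      exact h hzS hzT)

/-! ### Connected components of open sets are open -/

lemma comp_open {F : Set E} (hF : IsOpen F) (x : E) :
    IsOpen (connectedComponentIn F x) := by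
  rw [Metric.isOpen_iff]
  intro z hz
  obtain ⟨ε, hε, hb⟩ := Metric.isOpen_iff.mp hF z (connectedComponentIn_subset F x hz)
  refine ⟨ε, hε, ?_⟩
  have h1 : ball z ε ⊆ connectedComponentIn F z :=
    (convex_ball z ε).isPreconnected.subset_connectedComponentIn (mem_ball_self hε) hb
  rwa [← connectedComponentIn_eq hz] at h1


/-! ### The main splitting lemma for a disconnected union of two polygons -/

lemma pair_split {X Y : Set E}
    (hXc : IsClosed X) (hXr : closure (interior X) = X)
    (hYc : IsClosed Y) (hYr : closure (interior Y) = Y)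
    {s : Finset (E × ℝ)} (hs : ∀ p ∈ s, p.1 ≠ 0)
    (hfr : frontier X ∪ frontier Y ⊆ ⋃ p ∈ s, {x : E | dot p.1 x = p.2})
    (hIX : IsConnected (interior X)) (hIY : IsConnected (interior Y))
    (hN : ¬ IsConnected (interior (X ∪ Y))) :
    ∃ A B : Set E, IsOpen A ∧ IsOpen B ∧ interior X ⊆ A ∧ interior Y ⊆ B ∧
      A ∩ B = ∅ ∧ A ∪ B = interior (X ∪ Y) ∧ (closure A ∩ closure B).Finite := by
  classical
  obtain ⟨⟨x₀, hx₀⟩, hIXp⟩ := hIX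
  obtain ⟨⟨y₀, hy₀⟩, hIYp⟩ := hIY
  set W := interior (X ∪ Y) with hWdef
  have hWo : IsOpen W := isOpen_interior
  have hXY : X ∪ Y = closure (interior X ∪ interior Y) := by
    rw [closure_union, hXr, hYr]
  have hXA' : interior X ⊆ W := interior_mono subset_union_left
  have hYB' : interior Y ⊆ W := interior_mono subset_union_right
  set A := connectedComponentIn W x₀ with hAdef
  set B := connectedComponentIn W y₀ with hBdef
  have hx₀W : x₀ ∈ W := hXA' hx₀
  have hy₀W : y₀ ∈ W := hYB' hy₀
  have hAo : IsOpen A := comp_open hWo x₀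
  have hBo : IsOpen B := comp_open hWo y₀
  have hXA : interior X ⊆ A := hIXp.subset_connectedComponentIn hx₀ hXA'
  have hYB : interior Y ⊆ B := hIYp.subset_connectedComponentIn hy₀ hYB'
  have hAW : A ⊆ W := connectedComponentIn_subset _ _
  have hBW : B ⊆ W := connectedComponentIn_subset _ _
  have hcover : W ⊆ A ∪ B := by
    intro z hz
    have hzXY : z ∈ closure (interior X ∪ interior Y) := by
      rw [← hXY]
      exact interior_subset hz
    have hCo : IsOpen (connectedComponentIn W z) := comp_open hWo z
    have hzC : z ∈ connectedComponentIn W z := mem_connectedComponentIn hz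
    obtain ⟨w, hwC, hwXY⟩ := _root_.mem_closure_iff.mp hzXY _ hCo hzC
    rcases hwXY with hw | hw
    · left
      have e1 : connectedComponentIn W z = connectedComponentIn W w :=
        connectedComponentIn_eq hwC
      have e2 : A = connectedComponentIn W w := connectedComponentIn_eq (hXA hw)
      show z ∈ A
      rw [e2, ← e1]
      exact hzC
    · right
      have e1 : connectedComponentIn W z = connectedComponentIn W w :=
        connectedComponentIn_eq hwC
      have e2 : B = connectedComponentIn W w := connectedComponentIn_eq (hYB hw)
      show z ∈ B
      rw [e2, ← e1]
      exact hzC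
  have hABempty : A ∩ B = ∅ := by
    rw [eq_empty_iff_forall_notMem]
    rintro z ⟨hzA, hzB⟩
    apply hN
    have e1 : A = connectedComponentIn W z := connectedComponentIn_eq hzA
    have e2 : B = connectedComponentIn W z := connectedComponentIn_eq hzB
    have hWA : W = A := by
      apply Subset.antisymm _ hAW
      intro w hw
      rcases hcover hw with h | h
      · exact h
      · rw [e1, ← e2]
        exact h
    refine ⟨⟨x₀, hx₀W⟩, ?_⟩
    show IsPreconnected W
    rw [hWA, hAdef]
    exact isPreconnected_connectedComponentIn
  have hfrU : frontier (X ∪ Y) ⊆ ⋃ p ∈ s, {x : E | dot p.1 x = p.2} := by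
    intro z hz
    rcases frontier_union_subset X Y hz with h | h
    · exact hfr (Or.inl h.1)
    · exact hfr (Or.inr h.2)
  have hclW : closure W = X ∪ Y := by
    apply Subset.antisymm
    · exact (closure_mono interior_subset).trans (by rw [(hXc.union hYc).closure_eq])
    · rw [hXY]
      exact closure_mono (union_subset (interior_mono subset_union_left)
        (interior_mono subset_union_right))
  set L : E × ℝ → Set E := fun p => {x : E | dot p.1 x = p.2} with hLdef
  set V : Set E := ⋃ p ∈ s, ⋃ q ∈ s, {x | x ∈ L p ∧ x ∈ L q ∧ L p ≠ L q} with hVdef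
  have hVfin : V.Finite := by
    apply Set.Finite.biUnion s.finite_toSet
    intro p hp
    apply Set.Finite.biUnion s.finite_toSet
    intro q hq
    apply Set.Subsingleton.finite
    intro x hx y hy
    by_contra hne
    exact hx.2.2 (line_eq (hs p hp) (hs q hq) hne hx.1 hx.2.1 hy.1 hy.2.1)
  refine ⟨A, B, hAo, hBo, hXA, hYB, hABempty,
    Subset.antisymm (union_subset hAW hBW) hcover, hVfin.subset ?_⟩
  rintro p ⟨hpA, hpB⟩
  by_contra hpV
  have hABe := hABempty
  rw [eq_empty_iff_forall_notMem] at hABe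
  have hpW : p ∉ W := by
    intro hpW
    rcases hcover hpW with h | h
    · obtain ⟨w, hwA, hwB⟩ := _root_.mem_closure_iff.mp hpB A hAo h
      exact hABe w ⟨hwA, hwB⟩
    · obtain ⟨w, hwB, hwA⟩ := _root_.mem_closure_iff.mp hpA B hBo h
      exact hABe w ⟨hwA, hwB⟩
  have hpXY : p ∈ X ∪ Y := by
    rw [← hclW]
    exact closure_mono hAW hpA
  have hpfr : p ∈ frontier (X ∪ Y) := ⟨subset_closure hpXY, hpW⟩
  obtain ⟨p₀, hp₀s, hpL⟩ : ∃ p₀ ∈ s, p ∈ L p₀ := by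
    simpa only [mem_iUnion, exists_prop] using hfrU hpfr
  have ha := hs p₀ hp₀s
  have hline : ∀ q ∈ s, p ∈ L q → L q = L p₀ := by
    intro q hq hpq
    by_contra hne
    apply hpV
    rw [hVdef]
    simp only [mem_iUnion, exists_prop]
    exact ⟨p₀, hp₀s, q, hq, hpL, hpq, Ne.symm hne⟩
  set t := s.filter (fun q => p ∉ L q) with htdef
  have hCclosed : IsClosed (⋃ q ∈ t, L q) := by
    apply Set.Finite.isClosed_biUnion t.finite_toSet
    intro q _
    exact isClosed_line q.1 q.2
  have hpC : p ∈ (⋃ q ∈ t, L q)ᶜ := by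
    simp only [mem_compl_iff, mem_iUnion, exists_prop, not_exists]
    rintro q ⟨hq, hpq⟩
    exact (Finset.mem_filter.mp hq).2 hpq
  obtain ⟨ε, hε, hballc⟩ := Metric.isOpen_iff.mp hCclosed.isOpen_compl p hpC
  have hkey : ∀ z ∈ ball p ε, z ∈ frontier (X ∪ Y) → z ∈ L p₀ := by
    intro z hzb hzf
    obtain ⟨q, hq, hzq⟩ : ∃ q ∈ s, z ∈ L q := by
      simpa only [mem_iUnion, exists_prop] using hfrU hzf
    by_cases hpq : p ∈ L q
    · rw [← hline q hq hpq]
      exact hzq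
    · exfalso
      refine hballc hzb ?_
      simp only [mem_iUnion, exists_prop]
      exact ⟨q, Finset.mem_filter.mpr ⟨hq, hpq⟩, hzq⟩
  set Pp : Set E := ball p ε ∩ {x : E | p₀.2 < dot p₀.1 x} with hPpdef
  set Pm : Set E := ball p ε ∩ {x : E | dot p₀.1 x < p₀.2} with hPmdef
  have hPpc : IsPreconnected Pp :=
    ((convex_ball p ε).inter (convex_halfSpace_gt (isLinearMap_dot p₀.1) p₀.2)).isPreconnected
  have hPmc : IsPreconnected Pm :=
    ((convex_ball p ε).inter (convex_halfSpace_lt (isLinearMap_dot p₀.1) p₀.2)).isPreconnected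
  have hXYc : IsClosed (X ∪ Y) := hXc.union hYc
  have hdichp : Pp ⊆ W ∨ Pp ∩ (X ∪ Y) = ∅ := by
    apply subset_int_or_disjoint hXYc hPpc
    rw [eq_empty_iff_forall_notMem]
    rintro z ⟨⟨hzb, hzgt⟩, hzf⟩
    have hzl : z ∈ L p₀ := hkey z hzb hzf
    have heq : dot p₀.1 z = p₀.2 := hzl
    have hgt : p₀.2 < dot p₀.1 z := hzgt
    linarith
  have hdichm : Pm ⊆ W ∨ Pm ∩ (X ∪ Y) = ∅ := by
    apply subset_int_or_disjoint hXYc hPmc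
    rw [eq_empty_iff_forall_notMem]
    rintro z ⟨⟨hzb, hzlt⟩, hzf⟩
    have hzl : z ∈ L p₀ := hkey z hzb hzf
    have heq : dot p₀.1 z = p₀.2 := hzl
    have hlt : dot p₀.1 z < p₀.2 := hzlt
    linarith
  have hnotboth : ¬(Pp ⊆ W ∧ Pm ⊆ W) := by
    rintro ⟨h1, h2⟩
    apply hpW
    have hsub : ball p ε ⊆ X ∪ Y := by
      intro z hzb
      have hz1 : z ∈ closure (ball p ε \ {x : E | dot p₀.1 x = p₀.2}) :=
        ball_subset_closure_diff_line p ε ha p₀.2 hzb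
      have hz2 : ball p ε \ {x : E | dot p₀.1 x = p₀.2} ⊆ X ∪ Y := by
        rintro w ⟨hwb, hwl⟩
        have hwne : dot p₀.1 w ≠ p₀.2 := hwl
        rcases lt_or_gt_of_ne hwne with h | h
        · exact interior_subset (h2 ⟨hwb, h⟩)
        · exact interior_subset (h1 ⟨hwb, h⟩)
      exact hXYc.closure_eq ▸ closure_mono hz2 hz1
    exact interior_maximal hsub isOpen_ball (mem_ball_self hε)
  obtain ⟨z1, hz1b, hz1A⟩ := _root_.mem_closure_iff.mp hpA _ isOpen_ball (mem_ball_self hε)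
  obtain ⟨z2, hz2b, hz2B⟩ := _root_.mem_closure_iff.mp hpB _ isOpen_ball (mem_ball_self hε)
  obtain ⟨z1', hz1'm, hz1'l, -⟩ :=
    exists_off_line (hAo.inter isOpen_ball) (⟨hz1A, hz1b⟩ : z1 ∈ A ∩ ball p ε) ha p₀.2 one_pos
  obtain ⟨z2', hz2'm, hz2'l, -⟩ :=
    exists_off_line (hBo.inter isOpen_ball) (⟨hz2B, hz2b⟩ : z2 ∈ B ∩ ball p ε) ha p₀.2 one_pos
  have hz1'XY : z1' ∈ X ∪ Y := interior_subset (hAW hz1'm.1)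
  have hz2'XY : z2' ∈ X ∪ Y := interior_subset (hBW hz2'm.1)
  have hhalf : ∀ z' : E, z' ∈ ball p ε → z' ∈ X ∪ Y → dot p₀.1 z' ≠ p₀.2 →
      (z' ∈ Pp ∧ Pp ⊆ W) ∨ (z' ∈ Pm ∧ Pm ⊆ W) := by
    intro z' hzb hzXY hzl
    rcases lt_or_gt_of_ne hzl with h | h
    · right
      have hzPm : z' ∈ Pm := ⟨hzb, h⟩
      refine ⟨hzPm, hdichm.resolve_right ?_⟩
      intro hemp2
      rw [eq_empty_iff_forall_notMem] at hemp2
      exact hemp2 z' ⟨hzPm, hzXY⟩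
    · left
      have hzPp : z' ∈ Pp := ⟨hzb, h⟩
      refine ⟨hzPp, hdichp.resolve_right ?_⟩
      intro hemp2
      rw [eq_empty_iff_forall_notMem] at hemp2
      exact hemp2 z' ⟨hzPp, hzXY⟩
  have h1 := hhalf z1' hz1'm.2 hz1'XY hz1'l
  have h2 := hhalf z2' hz2'm.2 hz2'XY hz2'l
  have hsame : ∀ P : Set E, IsPreconnected P → P ⊆ W → z1' ∈ P → z2' ∈ P → False := by
    intro P hPc hPW hz1P hz2P
    have hcov' : P ⊆ A ∪ B := hPW.trans hcover
    obtain ⟨w, -, hwAB⟩ := hPc A B hAo hBo hcov' ⟨z1', hz1P, hz1'm.1⟩ ⟨z2', hz2P, hz2'm.1⟩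
    exact hABe w hwAB
  rcases h1 with ⟨hz1P, hPW1⟩ | ⟨hz1P, hPW1⟩ <;> rcases h2 with ⟨hz2P, hPW2⟩ | ⟨hz2P, hPW2⟩
  · exact hsame Pp hPpc hPW1 hz1P hz2P
  · exact hnotboth ⟨hPW1, hPW2⟩
  · exact hnotboth ⟨hPW2, hPW1⟩
  · exact hsame Pm hPmc hPW1 hz1P hz2P

end

end NoWiggly

/-- No three regular closed polygons in `ℝ²`, each with connected interior, can have a
total union with connected interior while neither `r₁ ∪ r₂` nor `r₁ ∪ r₃` has connected
interior. -/
theorem no_wiggly_polygons_in_plane :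
    ¬ ∃ r₁ r₂ r₃ : Set (Fin 2 → ℝ),
      IsPolygon r₁ ∧ IsPolygon r₂ ∧ IsPolygon r₃ ∧
      IsConnected (interior r₁) ∧ IsConnected (interior r₂) ∧ IsConnected (interior r₃) ∧
      IsConnected (interior (r₁ ∪ r₂ ∪ r₃)) ∧
      ¬ IsConnected (interior (r₁ ∪ r₂)) ∧
      ¬ IsConnected (interior (r₁ ∪ r₃)) := by
  classical
  rintro ⟨r₁, r₂, r₃, P1, P2, P3, C1, C2, C3, CU, N12, N13⟩
  obtain ⟨h1c, h1r, s1, hs1, hf1⟩ := NoWiggly.poly_spec P1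
  obtain ⟨h2c, h2r, s2, hs2, hf2⟩ := NoWiggly.poly_spec P2
  obtain ⟨h3c, h3r, s3, hs3, hf3⟩ := NoWiggly.poly_spec P3
  have hmerge : ∀ (sa sb : Finset ((Fin 2 → ℝ) × ℝ)) (Xa Xb : Set (Fin 2 → ℝ)),
      frontier Xa ⊆ (⋃ p ∈ sa, {x : NoWiggly.E | NoWiggly.dot p.1 x = p.2}) →
      frontier Xb ⊆ (⋃ p ∈ sb, {x : NoWiggly.E | NoWiggly.dot p.1 x = p.2}) →
      frontier Xa ∪ frontier Xb ⊆
        ⋃ p ∈ sa ∪ sb, {x : NoWiggly.E | NoWiggly.dot p.1 x = p.2} := by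
    intro sa sb Xa Xb ha hb z hz
    rcases hz with hz | hz
    · obtain ⟨q, hq, hzq⟩ := by simpa only [Set.mem_iUnion, exists_prop] using ha hz
      simp only [Set.mem_iUnion, exists_prop]
      exact ⟨q, Finset.mem_union_left _ hq, hzq⟩
    · obtain ⟨q, hq, hzq⟩ := by simpa only [Set.mem_iUnion, exists_prop] using hb hz
      simp only [Set.mem_iUnion, exists_prop]
      exact ⟨q, Finset.mem_union_right _ hq, hzq⟩
  have hs12 : ∀ p ∈ s1 ∪ s2, p.1 ≠ 0 := by
    intro p hp
    rcases Finset.mem_union.mp hp with h | h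
    · exact hs1 p h
    · exact hs2 p h
  have hs13 : ∀ p ∈ s1 ∪ s3, p.1 ≠ 0 := by
    intro p hp
    rcases Finset.mem_union.mp hp with h | h
    · exact hs1 p h
    · exact hs3 p h
  obtain ⟨A₁, A₂, hA1o, hA2o, hIA1, hIA2, hA12, hA12U, hFfin⟩ :=
    NoWiggly.pair_split h1c h1r h2c h2r hs12 (hmerge s1 s2 r₁ r₂ hf1 hf2) C1 C2 N12
  obtain ⟨B₁, B₃, hB1o, hB3o, hIB1, hIB3, hB13, hB13U, hGfin⟩ :=
    NoWiggly.pair_split h1c h1r h3c h3r hs13 (hmerge s1 s3 r₁ r₃ hf1 hf3) C1 C3 N13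
  set U := interior (r₁ ∪ r₂ ∪ r₃) with hUdef
  have hUo : IsOpen U := isOpen_interior
  set K := (closure A₁ ∩ closure A₂) ∪ (closure B₁ ∩ closure B₃) with hKdef
  have hKfin : K.Finite := hFfin.union hGfin
  have hUK : IsPreconnected (U \ K) :=
    NoWiggly.diff_finite_preconnected hUo CU.isPreconnected hKfin
  set S := closure A₂ ∪ closure B₃ with hSdef
  set T := closure A₁ ∩ closure B₁ with hTdef
  have hST : S ∩ T ⊆ K := by
    rintro z ⟨hzS, hzT⟩
    rcases hzS with hz | hz
    · exact Or.inl ⟨hzT.1, hz⟩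
    · exact Or.inr ⟨hzT.2, hz⟩
  have hr1T : r₁ ⊆ T := by
    intro z hz
    have hz' : z ∈ closure (interior r₁) := by rw [h1r]; exact hz
    exact ⟨closure_mono hIA1 hz', closure_mono hIB1 hz'⟩
  have hr2S : r₂ ⊆ S := by
    intro z hz
    have hz' : z ∈ closure (interior r₂) := by rw [h2r]; exact hz
    exact Or.inl (closure_mono hIA2 hz')
  have hr3S : r₃ ⊆ S := by
    intro z hz
    have hz' : z ∈ closure (interior r₃) := by rw [h3r]; exact hz
    exact Or.inr (closure_mono hIB3 hz')
  have hScl : IsClosed S := isClosed_closure.union isClosed_closure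
  have hTcl : IsClosed T := isClosed_closure.inter isClosed_closure
  have hcov : U \ K ⊆ Sᶜ ∪ Tᶜ := by
    intro z hz
    by_contra h
    simp only [Set.mem_union, Set.mem_compl_iff, not_or, not_not] at h
    exact hz.2 (hST ⟨h.1, h.2⟩)
  have hU1 : interior r₁ ⊆ U :=
    interior_mono (Set.subset_union_left.trans Set.subset_union_left)
  have hU2 : interior r₂ ⊆ U :=
    interior_mono (Set.subset_union_right.trans Set.subset_union_left)
  obtain ⟨x, hx1, hxK⟩ := NoWiggly.exists_diff_finite isOpen_interior C1.nonempty hKfin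
  obtain ⟨y, hy2, hyK⟩ := NoWiggly.exists_diff_finite isOpen_interior C2.nonempty hKfin
  have hxS : x ∈ Sᶜ := by
    intro hxS
    exact hxK (hST ⟨hxS, hr1T (interior_subset hx1)⟩)
  have hyT : y ∈ Tᶜ := by
    intro hyT
    exact hyK (hST ⟨hr2S (interior_subset hy2), hyT⟩)
  obtain ⟨w, hwUK, hwS, hwT⟩ := hUK Sᶜ Tᶜ hScl.isOpen_compl hTcl.isOpen_compl hcov
    ⟨x, ⟨hU1 hx1, hxK⟩, hxS⟩ ⟨y, ⟨hU2 hy2, hyK⟩, hyT⟩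
  have hwXY : w ∈ r₁ ∪ r₂ ∪ r₃ := interior_subset hwUK.1
  rcases hwXY with (hw | hw) | hw
  · exact hwT (hr1T hw)
  · exact hwS (hr2S hw)
  · exact hwS (hr3S hw)
end

section
/- Every regular closed polyhedron in ℝⁿ (an element of the Boolean subalgebra of RC(ℝⁿ) generated by closed half-spaces) has finitely many connected components. -/
/-- Membership in the Boolean subalgebra of `RC(ℝⁿ)` generated by closed half-spaces:
regular closed polyhedra. -/
inductive IsPolyhedron (n : ℕ) : Set (Fin n → ℝ) → Prop
  | halfspace (a : Fin n → ℝ) (c : ℝ) (ha : a ≠ 0) :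
      IsPolyhedron n {x | ∑ i, a i * x i ≤ c}
  | sup (X Y : Set (Fin n → ℝ)) : IsPolyhedron n X → IsPolyhedron n Y → IsPolyhedron n (X ∪ Y)
  | inf (X Y : Set (Fin n → ℝ)) : IsPolyhedron n X → IsPolyhedron n Y →
      IsPolyhedron n (closure (interior (X ∩ Y)))
  | compl (X : Set (Fin n → ℝ)) : IsPolyhedron n X → IsPolyhedron n (closure Xᶜ)

open Set Topology

section Aux

variable {α : Type*} [TopologicalSpace α]

/-- Auxiliary: a set that is a finite union of closures of open convex sets. -/
def GoodSet (n : ℕ) (X : Set (Fin n → ℝ)) : Prop :=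
  ∃ F : Set (Set (Fin n → ℝ)), F.Finite ∧ (∀ U ∈ F, IsOpen U ∧ Convex ℝ U) ∧
    X = ⋃ U ∈ F, closure U

lemma GoodSet.isClosed {n : ℕ} {X : Set (Fin n → ℝ)} (h : GoodSet n X) : IsClosed X := by
  obtain ⟨F, hFfin, -, rfl⟩ := h
  exact hFfin.isClosed_biUnion fun U _ => isClosed_closure

lemma GoodSet.regular {n : ℕ} {X : Set (Fin n → ℝ)} (h : GoodSet n X) :
    closure (interior X) = X := by
  obtain ⟨F, hFfin, hFc, rfl⟩ := h
  apply subset_antisymm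
  · exact (hFfin.isClosed_biUnion fun U _ => isClosed_closure).closure_interior_subset
  · rw [← hFfin.closure_biUnion]
    exact closure_mono (interior_maximal subset_closure
      (isOpen_biUnion fun U hU => (hFc U hU).1))

/-- The key density-mixing lemma: if open sets `A` and `B` each contain a finite family of
open sets whose union is dense in them, then the closure of `A ∩ B` is the union of the
closures of the pairwise intersections. -/
lemma mix_closure {A B : Set α} (hA : IsOpen A) (hB : IsOpen B)
    {F G : Set (Set α)} (hFfin : F.Finite) (hGfin : G.Finite)
    (hFo : ∀ U ∈ F, IsOpen U)
    (hdA : A ⊆ closure (⋃ U ∈ F, U)) (hdB : B ⊆ closure (⋃ V ∈ G, V))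
    (hFA : ∀ U ∈ F, U ⊆ A) (hGB : ∀ V ∈ G, V ⊆ B) :
    closure (A ∩ B) = ⋃ U ∈ F, ⋃ V ∈ G, closure (U ∩ V) := by
  apply subset_antisymm
  · have key : A ∩ B ⊆ closure (⋃ U ∈ F, ⋃ V ∈ G, U ∩ V) := by
      intro z hz
      rw [mem_closure_iff]
      intro N hN hzN
      have h1 : z ∈ closure (⋃ U ∈ F, U) := hdA hz.1
      rw [mem_closure_iff] at h1
      obtain ⟨w, hw, hwU⟩ := h1 (N ∩ (A ∩ B)) (hN.inter (hA.inter hB)) ⟨hzN, hz⟩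
      obtain ⟨U, hUF, hwU⟩ := mem_iUnion₂.1 hwU
      have h2 : w ∈ closure (⋃ V ∈ G, V) := hdB hw.2.2
      rw [mem_closure_iff] at h2
      obtain ⟨v, hv, hvV⟩ := h2 (N ∩ (A ∩ B) ∩ U) ((hN.inter (hA.inter hB)).inter (hFo U hUF))
        ⟨hw, hwU⟩
      obtain ⟨V, hVG, hvV⟩ := mem_iUnion₂.1 hvV
      exact ⟨v, hv.1.1, mem_iUnion₂.2 ⟨U, hUF, mem_iUnion₂.2 ⟨V, hVG, hv.2, hvV⟩⟩⟩
    have heq : closure (⋃ U ∈ F, ⋃ V ∈ G, U ∩ V) = ⋃ U ∈ F, ⋃ V ∈ G, closure (U ∩ V) := by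
      rw [hFfin.closure_biUnion]
      exact iUnion₂_congr fun U _ => hGfin.closure_biUnion _
    calc closure (A ∩ B) ⊆ closure (closure (⋃ U ∈ F, ⋃ V ∈ G, U ∩ V)) := closure_mono key
      _ = ⋃ U ∈ F, ⋃ V ∈ G, closure (U ∩ V) := by rw [closure_closure, heq]
  · refine iUnion₂_subset fun U hUF => iUnion₂_subset fun V hVG => closure_mono ?_
    exact inter_subset_inter (hFA U hUF) (hGB V hVG)

/-- De Morgan for regular closed sets: the complement closure of `X · Y` is `-X + -Y`. -/
lemma closure_compl_inf {X Y : Set α} (hX : IsClosed X) (hY : IsClosed Y) :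
    closure (closure (interior (X ∩ Y)))ᶜ = closure Xᶜ ∪ closure Yᶜ := by
  apply subset_antisymm
  · rw [IsClosed.closure_subset_iff (isClosed_closure.union isClosed_closure)]
    intro z hz
    by_contra hcon
    rw [mem_union] at hcon
    push_neg at hcon
    obtain ⟨h1, h2⟩ := hcon
    have hz1 : z ∈ interior X := by
      have : z ∈ (closure Xᶜ)ᶜ := h1
      rwa [closure_compl, compl_compl] at this
    have hz2 : z ∈ interior Y := by
      have : z ∈ (closure Yᶜ)ᶜ := h2
      rwa [closure_compl, compl_compl] at this
    exact hz (subset_closure (by rw [interior_inter]; exact ⟨hz1, hz2⟩))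
  · have hZX : closure (interior (X ∩ Y)) ⊆ X := by
      refine (closure_mono interior_subset).trans ?_
      rw [(hX.inter hY).closure_eq]
      exact inter_subset_left
    have hZY : closure (interior (X ∩ Y)) ⊆ Y := by
      refine (closure_mono interior_subset).trans ?_
      rw [(hX.inter hY).closure_eq]
      exact inter_subset_right
    exact union_subset (closure_mono (compl_subset_compl.2 hZX))
      (closure_mono (compl_subset_compl.2 hZY))

end Aux

lemma halfspace_linear (n : ℕ) (a : Fin n → ℝ) :
    IsLinearMap ℝ (fun x : Fin n → ℝ => ∑ i, a i * x i) := by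
  constructor
  · intro x y; simp [mul_add, Finset.sum_add_distrib]
  · intro c x
    simp only [Pi.smul_apply, smul_eq_mul, Finset.mul_sum]
    exact Finset.sum_congr rfl fun i _ => by ring

lemma halfspace_continuous (n : ℕ) (a : Fin n → ℝ) :
    Continuous (fun x : Fin n → ℝ => ∑ i, a i * x i) :=
  continuous_finset_sum _ fun i _ => continuous_const.mul (continuous_apply i)

lemma halfspace_closure (n : ℕ) (a : Fin n → ℝ) (c : ℝ) (ha : a ≠ 0) :
    closure {x : Fin n → ℝ | ∑ i, a i * x i < c} = {x | ∑ i, a i * x i ≤ c} := by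
  have hcont := halfspace_continuous n a
  apply subset_antisymm
  · refine closure_minimal (fun x hx => ?_) (isClosed_le hcont continuous_const)
    have hx' : (∑ i, a i * x i) < c := hx
    show (∑ i, a i * x i) ≤ c
    exact le_of_lt hx'
  · intro x hx
    obtain ⟨i, hi⟩ : ∃ i, a i ≠ 0 := by
      by_contra hcon; push_neg at hcon; exact ha (funext hcon)
    set v : Fin n → ℝ := Pi.single i (a i)⁻¹ with hv
    have hfv : (∑ j, a j * v j) = 1 := by
      rw [Finset.sum_eq_single i]
      · rw [hv, Pi.single_eq_same]; field_simp
      · intro j _ hj; simp [hv, Pi.single_apply, hj]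
      · simp
    have key : ∀ t : ℝ, (∑ j, a j * (x + t • v) j) = (∑ j, a j * x j) + t := by
      intro t
      have h1 : ∀ j, a j * (x + t • v) j = a j * x j + t * (a j * v j) := by
        intro j; simp only [Pi.add_apply, Pi.smul_apply, smul_eq_mul]; ring
      rw [Finset.sum_congr rfl fun j _ => h1 j, Finset.sum_add_distrib, ← Finset.mul_sum,
        hfv, mul_one]
    have htend : Filter.Tendsto (fun t : ℝ => x + t • v) (nhdsWithin 0 (Set.Iio 0)) (nhds x) := by
      have h0 : Filter.Tendsto (fun t : ℝ => x + t • v) (nhds 0) (nhds (x + (0:ℝ) • v)) :=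
        (continuous_const.add (continuous_id.smul continuous_const)).tendsto 0
      simpa using h0.mono_left nhdsWithin_le_nhds
    apply mem_closure_of_tendsto htend
    filter_upwards [self_mem_nhdsWithin] with t ht
    show (∑ j, a j * (x + t • v) j) < c
    rw [key t]
    have hxc : (∑ j, a j * x j) ≤ c := hx
    have htneg : t < 0 := ht
    linarith

lemma good_of_polyhedron {n : ℕ} {X : Set (Fin n → ℝ)} (h : IsPolyhedron n X) :
    GoodSet n X ∧ GoodSet n (closure Xᶜ) := by
  induction h with
  | halfspace a c ha =>
    have hlin := halfspace_linear n a
    have hcont := halfspace_continuous n a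
    constructor
    · refine ⟨{{x | (∑ i, a i * x i) < c}}, finite_singleton _, ?_, ?_⟩
      · rintro U rfl
        exact ⟨isOpen_lt hcont continuous_const, convex_halfSpace_lt hlin c⟩
      · simp [halfspace_closure n a c ha]
    · have hcompl : {x : Fin n → ℝ | (∑ i, a i * x i) ≤ c}ᶜ = {x | c < ∑ i, a i * x i} := by
        ext x; simp [not_le]
      refine ⟨{{x | c < ∑ i, a i * x i}}, finite_singleton _, ?_, ?_⟩
      · rintro U rfl
        exact ⟨isOpen_lt continuous_const hcont, convex_halfSpace_gt hlin c⟩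
      · rw [hcompl]; simp
  | sup X Y hX hY ihX ihY =>
    obtain ⟨⟨F, hFfin, hFc, hFX⟩, ⟨F', hF'fin, hF'c, hF'X⟩⟩ := ihX
    obtain ⟨⟨G, hGfin, hGc, hGY⟩, ⟨G', hG'fin, hG'c, hG'Y⟩⟩ := ihY
    have hXcl : IsClosed X := GoodSet.isClosed ⟨F, hFfin, hFc, hFX⟩
    have hYcl : IsClosed Y := GoodSet.isClosed ⟨G, hGfin, hGc, hGY⟩
    have hXreg : closure (interior X) = X := GoodSet.regular ⟨F, hFfin, hFc, hFX⟩
    have hYreg : closure (interior Y) = Y := GoodSet.regular ⟨G, hGfin, hGc, hGY⟩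
    constructor
    · refine ⟨F ∪ G, hFfin.union hGfin, ?_, ?_⟩
      · intro U hU; rcases hU with hU | hU
        exacts [hFc U hU, hGc U hU]
      · rw [biUnion_union, ← hFX, ← hGY]
    · have hintX : interior (closure Xᶜ) = Xᶜ := by
        rw [closure_compl, interior_compl, hXreg]
      have hintY : interior (closure Yᶜ) = Yᶜ := by
        rw [closure_compl, interior_compl, hYreg]
      have hsubX : ∀ U ∈ F', U ⊆ Xᶜ := by
        intro U hU
        have h1 : U ⊆ interior (closure Xᶜ) :=
          interior_maximal (subset_closure.trans (by rw [hF'X]; exact subset_biUnion_of_mem hU))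
            (hF'c U hU).1
        exact h1.trans_eq hintX
      have hsubY : ∀ V ∈ G', V ⊆ Yᶜ := by
        intro V hV
        have h1 : V ⊆ interior (closure Yᶜ) :=
          interior_maximal (subset_closure.trans (by rw [hG'Y]; exact subset_biUnion_of_mem hV))
            (hG'c V hV).1
        exact h1.trans_eq hintY
      have hdX : Xᶜ ⊆ closure (⋃ U ∈ F', U) := by
        rw [hF'fin.closure_biUnion, ← hF'X]; exact subset_closure
      have hdY : Yᶜ ⊆ closure (⋃ V ∈ G', V) := by
        rw [hG'fin.closure_biUnion, ← hG'Y]; exact subset_closure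
      have hmix := mix_closure hXcl.isOpen_compl hYcl.isOpen_compl hF'fin hG'fin
        (fun U hU => (hF'c U hU).1) hdX hdY hsubX hsubY
      refine ⟨Set.image2 (· ∩ ·) F' G', hF'fin.image2 _ hG'fin, ?_, ?_⟩
      · rintro W hW
        obtain ⟨U, hU, V, hV, rfl⟩ := hW
        exact ⟨(hF'c U hU).1.inter (hG'c V hV).1, (hF'c U hU).2.inter (hG'c V hV).2⟩
      · rw [compl_union, hmix]
        ext z
        simp only [mem_iUnion, mem_image2]
        constructor
        · rintro ⟨U, hU, V, hV, hz⟩; exact ⟨U ∩ V, ⟨U, hU, V, hV, rfl⟩, hz⟩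
        · rintro ⟨W, ⟨U, hU, V, hV, rfl⟩, hz⟩; exact ⟨U, hU, V, hV, hz⟩
  | inf X Y hX hY ihX ihY =>
    obtain ⟨⟨F, hFfin, hFc, hFX⟩, ⟨F', hF'fin, hF'c, hF'X⟩⟩ := ihX
    obtain ⟨⟨G, hGfin, hGc, hGY⟩, ⟨G', hG'fin, hG'c, hG'Y⟩⟩ := ihY
    have hXcl : IsClosed X := GoodSet.isClosed ⟨F, hFfin, hFc, hFX⟩
    have hYcl : IsClosed Y := GoodSet.isClosed ⟨G, hGfin, hGc, hGY⟩
    have hsubX : ∀ U ∈ F, U ⊆ interior X := fun U hU =>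
      interior_maximal (subset_closure.trans (by rw [hFX]; exact subset_biUnion_of_mem hU))
        (hFc U hU).1
    have hsubY : ∀ V ∈ G, V ⊆ interior Y := fun V hV =>
      interior_maximal (subset_closure.trans (by rw [hGY]; exact subset_biUnion_of_mem hV))
        (hGc V hV).1
    have hdX : interior X ⊆ closure (⋃ U ∈ F, U) := by
      rw [hFfin.closure_biUnion, ← hFX]; exact interior_subset
    have hdY : interior Y ⊆ closure (⋃ V ∈ G, V) := by
      rw [hGfin.closure_biUnion, ← hGY]; exact interior_subset
    have hmix := mix_closure isOpen_interior isOpen_interior hFfin hGfin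
      (fun U hU => (hFc U hU).1) hdX hdY hsubX hsubY
    constructor
    · refine ⟨Set.image2 (· ∩ ·) F G, hFfin.image2 _ hGfin, ?_, ?_⟩
      · rintro W hW
        obtain ⟨U, hU, V, hV, rfl⟩ := hW
        exact ⟨(hFc U hU).1.inter (hGc V hV).1, (hFc U hU).2.inter (hGc V hV).2⟩
      · rw [interior_inter, hmix]
        ext z
        simp only [mem_iUnion, mem_image2]
        constructor
        · rintro ⟨U, hU, V, hV, hz⟩; exact ⟨U ∩ V, ⟨U, hU, V, hV, rfl⟩, hz⟩
        · rintro ⟨W, ⟨U, hU, V, hV, rfl⟩, hz⟩; exact ⟨U, hU, V, hV, hz⟩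
    · rw [closure_compl_inf hXcl hYcl]
      refine ⟨F' ∪ G', hF'fin.union hG'fin, ?_, ?_⟩
      · intro U hU; rcases hU with hU | hU
        exacts [hF'c U hU, hG'c U hU]
      · rw [biUnion_union, ← hF'X, ← hG'Y]
  | compl X hX ihX =>
    obtain ⟨hg, hg'⟩ := ihX
    refine ⟨hg', ?_⟩
    have h1 : (closure Xᶜ)ᶜ = interior X := by
      rw [closure_compl, compl_compl]
    rw [h1, hg.regular]
    exact hg

/-- Every regular closed polyhedron in `ℝⁿ` has finitely many connected components. -/
theorem polyhedron_finitely_many_components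
    (n : ℕ) (X : Set (Fin n → ℝ)) (hX : IsPolyhedron n X) :
    {C : Set (Fin n → ℝ) | ∃ x ∈ X, C = connectedComponentIn X x}.Finite := by
  classical
  obtain ⟨F, hFfin, hFc, hFX⟩ := (good_of_polyhedron hX).1
  have key : {C : Set (Fin n → ℝ) | ∃ x ∈ X, C = connectedComponentIn X x} ⊆
      (fun U : Set (Fin n → ℝ) =>
        if h : (closure U).Nonempty then connectedComponentIn X h.some else ∅) '' F := by
    rintro C ⟨x, hxX, rfl⟩
    have hx' : x ∈ ⋃ U ∈ F, closure U := by rwa [← hFX]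
    obtain ⟨U, hUF, hxU⟩ := mem_iUnion₂.1 hx'
    have hne : (closure U).Nonempty := ⟨x, hxU⟩
    refine ⟨U, hUF, ?_⟩
    dsimp only
    rw [dif_pos hne]
    have hconn : IsPreconnected (closure U) := ((hFc U hUF).2.closure).isPreconnected
    have hsub : closure U ⊆ X := by rw [hFX]; exact subset_biUnion_of_mem hUF
    have hsome : hne.some ∈ closure U := hne.some_mem
    have h1 : closure U ⊆ connectedComponentIn X hne.some :=
      hconn.subset_connectedComponentIn hsome hsub
    exact connectedComponentIn_eq (h1 hxU)
  exact (hFfin.image _).subset key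
end
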